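/- arXiv:2509.23496 — 9 statements merged into one kernel-verified Lean document; each statement's English description precedes it below -/
import Mathlib

section
/- Let d ≥ 1 be an integer, let 0 < γ < 1, let δ > 1/γ, and let ρ be a soft profile with decay exponent δ. Then there exist constants 0 < c' ≤ C' < ∞ (depending only on d, γ, δ and the constants in the definition of ρ) such that for every u ∈ (0,1] and every R ≥ 2 one has c'·min(u^{−1} R^{d(1−1/γ)}, 1) ≤ min( ∫_{{x ∈ ℝ^d : |x| ≥ R}} ∫_0^1 ρ(|x|^d (u v)^γ) dv dx , 1 ) ≤ C'·min(u^{−1} R^{d(1−1/γ)}, 1). -/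
open MeasureTheory Real Set

set_option maxHeartbeats 1000000

/-- One-edge escape probability asymptotics for a soft profile in the regime `δ > 1/γ`:
the expected number of direct connections of a vertex with mark `u` at the origin to
vertices outside `B(0,R)`, truncated at 1, is of order `min(u⁻¹ R^{d(1-1/γ)}, 1)`. -/
theorem stmt_1 (d : ℕ) (hd : 1 ≤ d) (γ δ : ℝ) (hγ0 : 0 < γ) (hγ1 : γ < 1)
    (hδ : 1 / γ < δ)
    (ρ : ℝ → ℝ) (c C : ℝ) (hc : 0 < c) (hcC : c ≤ C)
    (hρ_range : ∀ x : ℝ, 0 ≤ x → 0 ≤ ρ x ∧ ρ x ≤ 1)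
    (hρ_mono : AntitoneOn ρ (Ici (0 : ℝ)))
    (hρ_bound : ∀ x : ℝ, 1 ≤ x → c * x ^ (-δ) ≤ ρ x ∧ ρ x ≤ C * x ^ (-δ)) :
    ∃ c' C' : ℝ, 0 < c' ∧ c' ≤ C' ∧ ∀ u R : ℝ, u ∈ Ioc (0 : ℝ) 1 → 2 ≤ R →
      c' * min (u⁻¹ * R ^ ((d : ℝ) * (1 - 1 / γ))) 1 ≤
          min (∫ x in {x : EuclideanSpace ℝ (Fin d) | R ≤ ‖x‖},
              ∫ v in Ioc (0 : ℝ) 1, ρ (‖x‖ ^ d * (u * v) ^ γ)) 1 ∧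
      min (∫ x in {x : EuclideanSpace ℝ (Fin d) | R ≤ ‖x‖},
              ∫ v in Ioc (0 : ℝ) 1, ρ (‖x‖ ^ d * (u * v) ^ γ)) 1 ≤
          C' * min (u⁻¹ * R ^ ((d : ℝ) * (1 - 1 / γ))) 1 := by
  classical
  have hd0 : (0:ℝ) < (d:ℝ) := by exact_mod_cast Nat.lt_of_lt_of_le Nat.zero_lt_one hd
  have hd1 : (1:ℝ) ≤ (d:ℝ) := by exact_mod_cast hd
  set p : ℝ := (d : ℝ) / γ with hp
  have hpd : (d:ℝ) < p := by
    rw [hp, lt_div_iff₀ hγ0]; nlinarith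
  have hp0 : 0 < p := lt_trans hd0 hpd
  have hp1 : 1 ≤ p := le_trans hd1 hpd.le
  have hβ : 1 < γ * δ := by
    have h1 : γ * (1/γ) < γ * δ := mul_lt_mul_of_pos_left hδ hγ0
    rwa [mul_one_div, div_self hγ0.ne'] at h1
  have hβ1 : 0 < γ * δ - 1 := by linarith
  have hC0 : 0 < C := lt_of_lt_of_le hc hcC
  haveI : Nonempty (Fin d) := ⟨⟨0, hd⟩⟩
  haveI : Nontrivial (EuclideanSpace ℝ (Fin d)) := by
    apply Module.nontrivial_of_finrank_pos (R := ℝ)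
    rw [finrank_euclideanSpace_fin]; exact hd
  set κ : ℝ := (volume (Metric.ball (0 : EuclideanSpace ℝ (Fin d)) 1)).toReal with hκdef
  have hκ : 0 < κ := ENNReal.toReal_pos (Metric.measure_ball_pos _ _ one_pos).ne' measure_ball_lt_top.ne
  set C₂ : ℝ := 1 + C / (γ * δ - 1) with hC₂def
  have hC₂ : 1 ≤ C₂ := by
    rw [hC₂def]
    have : 0 < C / (γ * δ - 1) := div_pos hC0 hβ1
    linarith
  set C₃ : ℝ := C₂ * ((d:ℝ) * κ / (p - (d:ℝ))) with hC₃def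
  have hC₃ : 0 < C₃ := by
    rw [hC₃def]
    apply mul_pos (by linarith)
    apply div_pos (mul_pos hd0 hκ) (by linarith)
  set c₀ : ℝ := κ * c * 2 ^ (-δ) * 2 ^ (-p) with hc₀def
  have hc₀ : 0 < c₀ := by rw [hc₀def]; positivity
  refine ⟨min c₀ 1, max C₃ 1, lt_min hc₀ one_pos,
    le_trans (min_le_right _ _) (le_max_right _ _), ?_⟩
  intro u R hu hR
  obtain ⟨hu0, hu1⟩ := hu
  have hR0 : (0:ℝ) < R := by linarith
  have hR1 : (1:ℝ) ≤ R := by linarith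
  have h2R0 : (0:ℝ) < 2*R := by linarith
  have hexp : (d:ℝ) * (1 - 1/γ) = (d:ℝ) - p := by
    rw [hp]; field_simp
  set M : ℝ := u⁻¹ * R ^ ((d : ℝ) * (1 - 1 / γ)) with hMdef
  have hM0 : 0 < M := by rw [hMdef]; positivity
  have hMeq : M = u⁻¹ * R ^ ((d:ℝ) - p) := by rw [hMdef, hexp]
  set S : Set (EuclideanSpace ℝ (Fin d)) := {x | R ≤ ‖x‖} with hSdef
  have hS_meas : MeasurableSet S := measurableSet_le measurable_const measurable_norm
  set F : ℝ → ℝ := fun r => ∫ v in Ioc (0:ℝ) 1, ρ (r ^ d * (u * v) ^ γ) with hFdef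
  -- basic facts about the inner integrand
  have harg_nonneg : ∀ r v : ℝ, 0 ≤ r → 0 ≤ v → 0 ≤ r ^ d * (u * v) ^ γ := by
    intro r v hr hv
    exact mul_nonneg (pow_nonneg hr d) (rpow_nonneg (mul_nonneg hu0.le hv) γ)
  have harg_mono_v : ∀ r v₁ v₂ : ℝ, 0 ≤ r → 0 ≤ v₁ → v₁ ≤ v₂ →
      r ^ d * (u * v₁) ^ γ ≤ r ^ d * (u * v₂) ^ γ := by
    intro r v₁ v₂ hr hv h12
    apply mul_le_mul_of_nonneg_left _ (pow_nonneg hr d)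
    exact rpow_le_rpow (mul_nonneg hu0.le hv) (mul_le_mul_of_nonneg_left h12 hu0.le) hγ0.le
  have h_anti : ∀ r : ℝ, 0 ≤ r →
      AntitoneOn (fun v => ρ (r ^ d * (u * v) ^ γ)) (Icc 0 1) := by
    intro r hr v₁ hv₁ v₂ hv₂ h12
    exact hρ_mono (mem_Ici.mpr (harg_nonneg r v₁ hr hv₁.1))
      (mem_Ici.mpr (harg_nonneg r v₂ hr (hv₁.1.trans h12)))
      (harg_mono_v r v₁ v₂ hr hv₁.1 h12)
  have h_int : ∀ r : ℝ, 0 ≤ r →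
      IntegrableOn (fun v => ρ (r ^ d * (u * v) ^ γ)) (Ioc 0 1) := by
    intro r hr
    have h1 : AntitoneOn (fun v => ρ (r ^ d * (u * v) ^ γ)) (uIcc 0 1) := by
      rw [uIcc_of_le zero_le_one]; exact h_anti r hr
    exact (intervalIntegrable_iff_integrableOn_Ioc_of_le zero_le_one).mp h1.intervalIntegrable
  have hF_nonneg : ∀ r : ℝ, 0 ≤ r → 0 ≤ F r := by
    intro r hr
    apply setIntegral_nonneg measurableSet_Ioc
    intro v hv
    exact (hρ_range _ (harg_nonneg r v hr hv.1.le)).1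
  have hF_anti : ∀ r₁ r₂ : ℝ, 0 ≤ r₁ → r₁ ≤ r₂ → F r₂ ≤ F r₁ := by
    intro r₁ r₂ h0 h12
    apply setIntegral_mono_on (h_int r₂ (le_trans h0 h12)) (h_int r₁ h0) measurableSet_Ioc
    intro v hv
    apply hρ_mono (mem_Ici.mpr (harg_nonneg r₁ v h0 hv.1.le))
      (mem_Ici.mpr (harg_nonneg r₂ v (le_trans h0 h12) hv.1.le))
    apply mul_le_mul_of_nonneg_right (pow_le_pow_left₀ h0 h12 d)
      (rpow_nonneg (mul_nonneg hu0.le hv.1.le) γ)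
  have hFnorm_meas : Measurable (fun x : EuclideanSpace ℝ (Fin d) => F ‖x‖) := by
    have hG_anti : Antitone (fun r : ℝ => F (max r 0)) := by
      intro r₁ r₂ h
      exact hF_anti _ _ (le_max_right _ _) (max_le_max h le_rfl)
    have h1 : (fun x : EuclideanSpace ℝ (Fin d) => F ‖x‖)
        = (fun r : ℝ => F (max r 0)) ∘ (fun x => ‖x‖) := by
      funext x; simp [max_eq_left (norm_nonneg x)]
    rw [h1]
    exact hG_anti.measurable.comp measurable_norm
  -- upper bound for the inner integral
  have hF_upper : ∀ r : ℝ, 1 ≤ r → F r ≤ C₂ * (u⁻¹ * r ^ (-p)) := by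
    intro r hr1
    have hr0 : (0:ℝ) < r := lt_of_lt_of_le one_pos hr1
    set w₀ : ℝ := u⁻¹ * r ^ (-p) with hw₀def
    have hw₀0 : 0 < w₀ := by rw [hw₀def]; positivity
    rcases le_or_gt 1 w₀ with hw1 | hw1
    · have hF1 : F r ≤ 1 := by
        have h1 : F r ≤ ∫ v in Ioc (0:ℝ) 1, (1:ℝ) := by
          apply setIntegral_mono_on (h_int r (by linarith))
            (integrableOn_const measure_Ioc_lt_top.ne) measurableSet_Ioc
          intro v hv
          exact (hρ_range _ (harg_nonneg r v (by linarith) hv.1.le)).2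
        have h2 : ∫ v in Ioc (0:ℝ) 1, (1:ℝ) = 1 := by
          simp [Real.volume_Ioc]
        linarith
      calc F r ≤ 1 := hF1
        _ ≤ w₀ := hw1
        _ ≤ C₂ * w₀ := le_mul_of_one_le_left hw₀0.le hC₂
    · -- case w₀ < 1 : split the integral at w₀
      have hsub1 : Ioc (0:ℝ) w₀ ⊆ Ioc 0 1 := Ioc_subset_Ioc le_rfl hw1.le
      have hsub2 : Ioc w₀ (1:ℝ) ⊆ Ioc 0 1 := Ioc_subset_Ioc hw₀0.le le_rfl
      have hint1 := (h_int r (by linarith)).mono_set hsub1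
      have hint2 := (h_int r (by linarith)).mono_set hsub2
      have heq : F r = (∫ v in Ioc 0 w₀, ρ (r ^ d * (u * v) ^ γ))
          + ∫ v in Ioc w₀ 1, ρ (r ^ d * (u * v) ^ γ) := by
        show (∫ v in Ioc (0:ℝ) 1, ρ (r ^ d * (u * v) ^ γ)) = _
        rw [← setIntegral_union (Ioc_disjoint_Ioc_of_le le_rfl) measurableSet_Ioc hint1 hint2,
          Ioc_union_Ioc_eq_Ioc hw₀0.le hw1.le]
      have hpiece1 : (∫ v in Ioc 0 w₀, ρ (r ^ d * (u * v) ^ γ)) ≤ w₀ := by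
        have h1 : (∫ v in Ioc 0 w₀, ρ (r ^ d * (u * v) ^ γ)) ≤ ∫ v in Ioc (0:ℝ) w₀, (1:ℝ) := by
          apply setIntegral_mono_on hint1
            (integrableOn_const measure_Ioc_lt_top.ne) measurableSet_Ioc
          intro v hv
          exact (hρ_range _ (harg_nonneg r v (by linarith) hv.1.le)).2
        have h2 : ∫ v in Ioc (0:ℝ) w₀, (1:ℝ) = w₀ := by
          simp [Real.volume_Ioc, ENNReal.toReal_ofReal hw₀0.le, hw₀0.le]
        linarith
      set K : ℝ := C * r ^ (-((d:ℝ) * δ)) * u ^ (-(γ * δ)) with hKdef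
      have hK0 : 0 ≤ K := by rw [hKdef]; positivity
      have huw : u * w₀ = r ^ (-p) := by
        rw [hw₀def, ← mul_assoc, mul_inv_cancel₀ hu0.ne', one_mul]
      have hkey : ∀ v ∈ Ioc w₀ (1:ℝ), ρ (r ^ d * (u * v) ^ γ) ≤ K * v ^ (-(γ * δ)) := by
        intro v hv
        have hv0 : 0 < v := lt_trans hw₀0 hv.1
        have huv0 : 0 < u * v := mul_pos hu0 hv0
        have hpγ : p * γ = (d:ℝ) := by rw [hp]; field_simp
        have harg1 : 1 ≤ r ^ d * (u * v) ^ γ := by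
          have h1 : r ^ (-p) ≤ u * v := by
            have h1' : u * w₀ ≤ u * v := mul_le_mul_of_nonneg_left hv.1.le hu0.le
            rwa [huw] at h1'
          have h2 : (r ^ (-p)) ^ γ ≤ (u * v) ^ γ := rpow_le_rpow (by positivity) h1 hγ0.le
          have h3 : (r ^ (-p)) ^ γ = r ^ (-(d:ℝ)) := by
            rw [← Real.rpow_mul hr0.le]
            congr 1
            rw [neg_mul, hpγ]
          calc (1:ℝ) = r ^ d * r ^ (-(d:ℝ)) := by
                rw [← Real.rpow_natCast r d, ← Real.rpow_add hr0]; simp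
            _ ≤ r ^ d * (u * v) ^ γ := by
                apply mul_le_mul_of_nonneg_left _ (pow_nonneg hr0.le d)
                rw [← h3]; exact h2
        have hbound := (hρ_bound _ harg1).2
        refine le_trans hbound (le_of_eq ?_)
        rw [hKdef, mul_rpow (pow_nonneg hr0.le d) (rpow_nonneg huv0.le γ),
          ← Real.rpow_natCast r d, ← Real.rpow_mul hr0.le, ← Real.rpow_mul huv0.le,
          mul_rpow hu0.le hv0.le,
          show (d:ℝ) * (-δ) = -((d:ℝ) * δ) by ring,
          show γ * (-δ) = -(γ * δ) by ring]
        ring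
      have hint3 : IntegrableOn (fun v : ℝ => K * v ^ (-(γ * δ))) (Ioc w₀ 1) := by
        apply Integrable.const_mul
        have h1 : IntervalIntegrable (fun v : ℝ => v ^ (-(γ * δ))) volume w₀ 1 := by
          apply intervalIntegral.intervalIntegrable_rpow
          right
          rw [uIcc_of_le hw1.le]
          intro hmem
          exact absurd hmem.1 (not_le.mpr hw₀0)
        exact (intervalIntegrable_iff_integrableOn_Ioc_of_le hw1.le).mp h1
      have hpiece2 : (∫ v in Ioc w₀ 1, ρ (r ^ d * (u * v) ^ γ)) ≤ C / (γ * δ - 1) * w₀ := by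
        have h1 : (∫ v in Ioc w₀ 1, ρ (r ^ d * (u * v) ^ γ))
            ≤ ∫ v in Ioc w₀ 1, K * v ^ (-(γ * δ)) :=
          setIntegral_mono_on hint2 hint3 measurableSet_Ioc hkey
        have h2 : (∫ v in Ioc w₀ 1, K * v ^ (-(γ * δ)))
            = K * ∫ v in Ioc w₀ 1, v ^ (-(γ * δ)) := integral_const_mul K _
        have h3 : (∫ v in Ioc w₀ 1, v ^ (-(γ * δ))) ≤ w₀ ^ (1 - γ * δ) / (γ * δ - 1) := by
          have h4 : (∫ v in Ioc w₀ 1, v ^ (-(γ * δ)))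
              = ((1:ℝ) ^ (-(γ * δ) + 1) - w₀ ^ (-(γ * δ) + 1)) / (-(γ * δ) + 1) := by
            rw [← intervalIntegral.integral_of_le hw1.le]
            exact integral_rpow (Or.inr ⟨by linarith, by
              rw [uIcc_of_le hw1.le]
              intro hmem
              exact absurd hmem.1 (not_le.mpr hw₀0)⟩)
          rw [h4, Real.one_rpow]
          have hA0 : 0 ≤ w₀ ^ (-(γ * δ) + 1) := rpow_nonneg hw₀0.le _
          have h5 : (1 - w₀ ^ (-(γ * δ) + 1)) / (-(γ * δ) + 1)
              = (w₀ ^ (-(γ * δ) + 1) - 1) / (γ * δ - 1) := by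
            rw [show (1 - w₀ ^ (-(γ * δ) + 1)) = -(w₀ ^ (-(γ * δ) + 1) - 1) by ring,
              show (-(γ * δ) + 1) = -(γ * δ - 1) by ring, neg_div_neg_eq]
          rw [h5, show (1 - γ * δ) = -(γ * δ) + 1 by ring]
          apply div_le_div_of_nonneg_right ?hx hβ1.le
          case hx => linarith
        have h6 : K * (w₀ ^ (1 - γ * δ) / (γ * δ - 1)) = C / (γ * δ - 1) * w₀ := by
          have hsplit : w₀ ^ (1 - γ * δ) = w₀ * w₀ ^ (-(γ * δ)) := by
            rw [show (1 - γ * δ) = 1 + -(γ * δ) by ring, Real.rpow_add hw₀0, Real.rpow_one]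
          have hmid : u ^ (-(γ * δ)) * w₀ ^ (-(γ * δ)) = r ^ ((d:ℝ) * δ) := by
            rw [← mul_rpow hu0.le hw₀0.le, huw, ← Real.rpow_mul hr0.le]
            congr 1
            rw [hp]; field_simp
          have hKw : K * w₀ ^ (1 - γ * δ) = C * w₀ := by
            rw [hKdef, hsplit]
            calc C * r ^ (-((d:ℝ) * δ)) * u ^ (-(γ * δ)) * (w₀ * w₀ ^ (-(γ * δ)))
                = C * w₀ * (r ^ (-((d:ℝ) * δ)) * (u ^ (-(γ * δ)) * w₀ ^ (-(γ * δ)))) := by ring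
              _ = C * w₀ * (r ^ (-((d:ℝ) * δ)) * r ^ ((d:ℝ) * δ)) := by rw [hmid]
              _ = C * w₀ := by rw [← Real.rpow_add hr0]; simp
          rw [mul_div_assoc', hKw]
          ring
        calc (∫ v in Ioc w₀ 1, ρ (r ^ d * (u * v) ^ γ))
            ≤ K * ∫ v in Ioc w₀ 1, v ^ (-(γ * δ)) := by rw [← h2]; exact h1
          _ ≤ K * (w₀ ^ (1 - γ * δ) / (γ * δ - 1)) := mul_le_mul_of_nonneg_left h3 hK0
          _ = C / (γ * δ - 1) * w₀ := h6
      calc F r = _ + _ := heq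
        _ ≤ w₀ + C / (γ * δ - 1) * w₀ := add_le_add hpiece1 hpiece2
        _ = C₂ * w₀ := by rw [hC₂def]; ring
  -- integrability of the dominating function on S
  have h_out_int : IntegrableOn (fun x : EuclideanSpace ℝ (Fin d) => ‖x‖ ^ (-p)) S := by
    have h1 : Integrable (fun x : EuclideanSpace ℝ (Fin d) => (1 + ‖x‖) ^ (-p)) := by
      apply integrable_one_add_norm
      rw [finrank_euclideanSpace_fin]
      exact hpd
    have h2 : Integrable (fun x : EuclideanSpace ℝ (Fin d) => (2:ℝ) ^ p * (1 + ‖x‖) ^ (-p)) :=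
      h1.const_mul _
    apply Integrable.mono' (h2.restrict (s := S))
    · exact Measurable.aestronglyMeasurable (by fun_prop)
    · filter_upwards [ae_restrict_mem hS_meas] with x hx
      have hx' : R ≤ ‖x‖ := hx
      have hx2 : (2:ℝ) ≤ ‖x‖ := le_trans hR hx'
      have hx0 : (0:ℝ) < ‖x‖ := by linarith
      rw [Real.norm_eq_abs, abs_of_nonneg (rpow_nonneg (norm_nonneg x) _)]
      have h3 : (0:ℝ) < (1 + ‖x‖) ^ p := rpow_pos_of_pos (by linarith) p
      have h4 : (0:ℝ) < ‖x‖ ^ p := rpow_pos_of_pos hx0 p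
      have hb : (1 + ‖x‖) ^ p ≤ 2 ^ p * ‖x‖ ^ p := by
        rw [← mul_rpow (by norm_num) (norm_nonneg x)]
        exact rpow_le_rpow (by positivity) (by linarith) hp0.le
      rw [rpow_neg (norm_nonneg x), rpow_neg (by positivity : (0:ℝ) ≤ 1 + ‖x‖),
        ← div_eq_mul_inv, le_div_iff₀ h3]
      calc (‖x‖ ^ p)⁻¹ * (1 + ‖x‖) ^ p ≤ (‖x‖ ^ p)⁻¹ * (2 ^ p * ‖x‖ ^ p) :=
            mul_le_mul_of_nonneg_left hb (inv_nonneg.mpr h4.le)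
        _ = 2 ^ p := by field_simp
  -- the exact value of the outer integral of the dominating function
  have h_val : (∫ x in S, ‖x‖ ^ (-p)) = (d:ℝ) * (κ * (R ^ ((d:ℝ) - p) / (p - (d:ℝ)))) := by
    have hpolar := integral_fun_norm_addHaar (volume : Measure (EuclideanSpace ℝ (Fin d)))
      ((Ici R).indicator (fun y : ℝ => y ^ (-p)))
    rw [finrank_euclideanSpace_fin] at hpolar
    have hL : (∫ x : EuclideanSpace ℝ (Fin d), (Ici R).indicator (fun y : ℝ => y ^ (-p)) ‖x‖)
        = ∫ x in S, ‖x‖ ^ (-p) := by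
      rw [← integral_indicator hS_meas]
      congr 1
    have hR' : (∫ y in Ioi (0:ℝ), y ^ (d - 1) • (Ici R).indicator (fun y : ℝ => y ^ (-p)) y)
        = R ^ ((d:ℝ) - p) / (p - (d:ℝ)) := by
      have e1 : ∀ y : ℝ, y ^ (d - 1) • (Ici R).indicator (fun y : ℝ => y ^ (-p)) y
          = (Ici R).indicator (fun y : ℝ => y ^ (d - 1) * y ^ (-p)) y := by
        intro y
        by_cases hy : y ∈ Ici R <;> simp [hy]
      simp_rw [e1]
      rw [integral_indicator measurableSet_Ici, Measure.restrict_restrict measurableSet_Ici,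
        inter_eq_self_of_subset_left (fun y (hy : y ∈ Ici R) => mem_Ioi.mpr (lt_of_lt_of_le hR0 hy)),
        integral_Ici_eq_integral_Ioi]
      have he : ∀ y ∈ Ioi R, y ^ (d - 1) * y ^ (-p) = y ^ ((d:ℝ) - 1 - p) := by
        intro y hy
        have hy0 : 0 < y := lt_trans hR0 hy
        rw [← Real.rpow_natCast y (d - 1), ← Real.rpow_add hy0]
        congr 1
        rw [Nat.cast_sub hd]
        push_cast
        ring
      rw [setIntegral_congr_fun measurableSet_Ioi he,
        integral_Ioi_rpow_of_lt (by linarith) hR0,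
        show (d:ℝ) - 1 - p + 1 = (d:ℝ) - p by ring,
        div_eq_div_iff (ne_of_lt (by linarith : (d:ℝ) - p < 0))
          (ne_of_gt (by linarith : (0:ℝ) < p - (d:ℝ)))]
      ring
    rw [hL] at hpolar
    rw [hpolar, hR', nsmul_eq_mul, smul_eq_mul, measureReal_def, ← hκdef]
  -- upper bound for the outer integral
  have h_dom_int : IntegrableOn
      (fun x : EuclideanSpace ℝ (Fin d) => C₂ * (u⁻¹ * ‖x‖ ^ (-p))) S :=
    (h_out_int.const_mul u⁻¹).const_mul C₂
  have h_I_int : IntegrableOn (fun x : EuclideanSpace ℝ (Fin d) => F ‖x‖) S := by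
    apply Integrable.mono' h_dom_int hFnorm_meas.aestronglyMeasurable
    filter_upwards [ae_restrict_mem hS_meas] with x hx
    have hx' : R ≤ ‖x‖ := hx
    rw [Real.norm_eq_abs, abs_of_nonneg (hF_nonneg _ (norm_nonneg x))]
    exact hF_upper ‖x‖ (le_trans (by linarith) hx')
  have hIle : (∫ x in S, F ‖x‖) ≤ C₃ * M := by
    have h1 : (∫ x in S, F ‖x‖) ≤ ∫ x in S, C₂ * (u⁻¹ * ‖x‖ ^ (-p)) := by
      apply setIntegral_mono_on h_I_int h_dom_int hS_meas
      intro x hx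
      have hx' : R ≤ ‖x‖ := hx
      exact hF_upper ‖x‖ (le_trans (by linarith) hx')
    have h2 : (∫ x in S, C₂ * (u⁻¹ * ‖x‖ ^ (-p)))
        = C₂ * (u⁻¹ * ∫ x in S, ‖x‖ ^ (-p)) := by
      rw [integral_const_mul, integral_const_mul]
    rw [h2, h_val] at h1
    refine le_trans h1 (le_of_eq ?_)
    rw [hMeq, hC₃def]
    ring
  -- lower bound for the inner integral at radius 2R
  set b : ℝ := min (1/2) ((2*R) ^ (-p) * u⁻¹) with hbdef
  have hb0 : 0 < b := by
    rw [hbdef]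
    exact lt_min (by norm_num) (by positivity)
  have hb2 : 2 * b ≤ 1 := by
    have := min_le_left (1/2 : ℝ) ((2*R) ^ (-p) * u⁻¹)
    rw [← hbdef] at this
    linarith
  have hub : u * (2*b) ≤ 2 * (2*R) ^ (-p) := by
    have h1 : b ≤ (2*R) ^ (-p) * u⁻¹ := by
      rw [hbdef]; exact min_le_right _ _
    calc u * (2*b) ≤ u * (2*((2*R) ^ (-p) * u⁻¹)) := by
          apply mul_le_mul_of_nonneg_left (by linarith) hu0.le
      _ = 2 * (2*R) ^ (-p) * (u * u⁻¹) := by ring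
      _ = 2 * (2*R) ^ (-p) := by rw [mul_inv_cancel₀ hu0.ne', mul_one]
  have harg2 : ∀ v ∈ Ioc b (2*b), (2*R) ^ d * (u*v) ^ γ ≤ 2 := by
    intro v hv
    have hv0 : 0 < v := lt_trans hb0 hv.1
    have huv : u * v ≤ 2 * (2*R) ^ (-p) :=
      le_trans (mul_le_mul_of_nonneg_left hv.2 hu0.le) hub
    have h1 : (u*v) ^ γ ≤ (2 * (2*R) ^ (-p)) ^ γ :=
      rpow_le_rpow (by positivity) huv hγ0.le
    have h2 : (2*R) ^ d * (u*v) ^ γ ≤ (2*R) ^ d * (2 * (2*R) ^ (-p)) ^ γ :=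
      mul_le_mul_of_nonneg_left h1 (by positivity)
    refine le_trans h2 ?_
    have hpγ : p * γ = (d:ℝ) := by rw [hp]; field_simp
    have h3 : ((2*R):ℝ) ^ d * (2 * (2*R) ^ (-p)) ^ γ = 2 ^ γ := by
      rw [mul_rpow (by norm_num) (by positivity), ← Real.rpow_natCast (2*R) d,
        ← Real.rpow_mul h2R0.le,
        show ((2*R):ℝ) ^ ((d:ℕ):ℝ) * (2 ^ γ * (2*R) ^ (-p * γ))
          = 2 ^ γ * ((2*R) ^ ((d:ℕ):ℝ) * (2*R) ^ (-p * γ)) from by ring,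
        ← Real.rpow_add h2R0,
        show ((d:ℕ):ℝ) + (-p * γ) = 0 from by rw [neg_mul, hpγ]; ring,
        rpow_zero, mul_one]
    rw [h3]
    calc (2:ℝ) ^ γ ≤ 2 ^ (1:ℝ) := rpow_le_rpow_of_exponent_le one_le_two hγ1.le
      _ = 2 := rpow_one 2
  have hρ2 : c * 2 ^ (-δ) ≤ ρ 2 := (hρ_bound 2 one_le_two).1
  have hFlow : c * 2 ^ (-δ) * b ≤ F (2*R) := by
    have hsub : Ioc b (2*b) ⊆ Ioc 0 1 := Ioc_subset_Ioc hb0.le hb2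
    have hstep1 : (∫ v in Ioc b (2*b), ρ ((2*R) ^ d * (u*v) ^ γ)) ≤ F (2*R) := by
      apply setIntegral_mono_set (h_int (2*R) h2R0.le)
      · filter_upwards [ae_restrict_mem measurableSet_Ioc] with v hv
        exact (hρ_range _ (harg_nonneg _ _ h2R0.le hv.1.le)).1
      · exact HasSubset.Subset.eventuallyLE hsub
    refine le_trans ?_ hstep1
    have hconst : (∫ v in Ioc b (2*b), (c * 2 ^ (-δ)))
        ≤ ∫ v in Ioc b (2*b), ρ ((2*R) ^ d * (u*v) ^ γ) := by
      apply setIntegral_mono_on (integrableOn_const measure_Ioc_lt_top.ne)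
        ((h_int (2*R) h2R0.le).mono_set hsub) measurableSet_Ioc
      intro v hv
      have harg0 : 0 ≤ (2*R) ^ d * (u*v) ^ γ :=
        harg_nonneg _ _ h2R0.le (le_trans hb0.le hv.1.le)
      calc c * 2 ^ (-δ) ≤ ρ 2 := hρ2
        _ ≤ ρ ((2*R) ^ d * (u*v) ^ γ) :=
          hρ_mono (mem_Ici.mpr harg0) (mem_Ici.mpr (by norm_num)) (harg2 v hv)
    refine le_trans (le_of_eq ?_) hconst
    rw [setIntegral_const, measureReal_def, Real.volume_Ioc, smul_eq_mul,
      ENNReal.toReal_ofReal (by linarith)]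
    ring
  -- the annulus
  set A : Set (EuclideanSpace ℝ (Fin d)) :=
    {x | R ≤ ‖x‖} ∩ Metric.closedBall 0 (2*R) with hAdef
  have hA_sub : A ⊆ S := by rw [hAdef]; exact inter_subset_left
  have hA_meas : MeasurableSet A := by
    rw [hAdef]
    exact hS_meas.inter measurableSet_closedBall
  have hA_eq : A = Metric.closedBall (0 : EuclideanSpace ℝ (Fin d)) (2*R)
      \ Metric.ball 0 R := by
    rw [hAdef]
    ext x
    simp only [mem_inter_iff, mem_setOf_eq, Metric.mem_closedBall, Metric.mem_ball,
      mem_diff, dist_zero_right, not_lt]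
    tauto
  have hvolA : κ * R ^ d ≤ (volume A).toReal := by
    have hsub' : Metric.ball (0 : EuclideanSpace ℝ (Fin d)) R
        ⊆ Metric.closedBall 0 (2*R) :=
      Metric.ball_subset_closedBall.trans (Metric.closedBall_subset_closedBall (by linarith))
    have h1 : volume A = volume (Metric.closedBall (0 : EuclideanSpace ℝ (Fin d)) (2*R))
        - volume (Metric.ball (0 : EuclideanSpace ℝ (Fin d)) R) := by
      rw [hA_eq]
      exact measure_diff hsub' measurableSet_ball.nullMeasurableSet measure_ball_lt_top.ne
    have h2 : volume (Metric.closedBall (0 : EuclideanSpace ℝ (Fin d)) (2*R))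
        = ENNReal.ofReal ((2*R) ^ d) * volume (Metric.ball (0 : EuclideanSpace ℝ (Fin d)) 1) := by
      rw [Measure.addHaar_closedBall _ _ h2R0.le, finrank_euclideanSpace_fin]
    have h3 : volume (Metric.ball (0 : EuclideanSpace ℝ (Fin d)) R)
        = ENNReal.ofReal (R ^ d) * volume (Metric.ball (0 : EuclideanSpace ℝ (Fin d)) 1) := by
      rw [Measure.addHaar_ball _ _ hR0.le, finrank_euclideanSpace_fin]
    have hle : ENNReal.ofReal (R ^ d) * volume (Metric.ball (0 : EuclideanSpace ℝ (Fin d)) 1)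
        ≤ ENNReal.ofReal ((2*R) ^ d) * volume (Metric.ball (0 : EuclideanSpace ℝ (Fin d)) 1) := by
      apply mul_le_mul_left
      apply ENNReal.ofReal_le_ofReal
      apply pow_le_pow_left₀ hR0.le (by linarith)
    have hnetop : ENNReal.ofReal ((2*R) ^ d)
        * volume (Metric.ball (0 : EuclideanSpace ℝ (Fin d)) 1) ≠ ⊤ :=
      ENNReal.mul_ne_top ENNReal.ofReal_ne_top measure_ball_lt_top.ne
    rw [h1, h2, h3, ENNReal.toReal_sub_of_le hle hnetop, ENNReal.toReal_mul,
      ENNReal.toReal_mul, ENNReal.toReal_ofReal (by positivity),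
      ENNReal.toReal_ofReal (by positivity), ← hκdef]
    have h2d : (2:ℝ) * R ^ d ≤ (2*R) ^ d := by
      rw [mul_pow]
      have : (2:ℝ) ≤ 2 ^ d := by
        calc (2:ℝ) = 2 ^ 1 := (pow_one 2).symm
        _ ≤ 2 ^ d := pow_le_pow_right₀ one_le_two hd
      nlinarith [pow_pos hR0 d]
    nlinarith [pow_pos hR0 d, hκ]
  -- the lower bound for the outer integral
  have hIlow : c₀ * min M 1 ≤ ∫ x in S, F ‖x‖ := by
    have h1 : (∫ x in A, F ‖x‖) ≤ ∫ x in S, F ‖x‖ := by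
      apply setIntegral_mono_set h_I_int
      · filter_upwards [ae_restrict_mem hS_meas] with x _
        exact hF_nonneg _ (norm_nonneg x)
      · exact HasSubset.Subset.eventuallyLE hA_sub
    have hA_fin : volume A ≠ ⊤ := by
      apply ne_of_lt
      exact lt_of_le_of_lt (measure_mono (hA_eq ▸ diff_subset)) measure_closedBall_lt_top
    have h2 : F (2*R) * (volume A).toReal ≤ ∫ x in A, F ‖x‖ := by
      have hconstA : (∫ _x in A, F (2*R)) ≤ ∫ x in A, F ‖x‖ := by
        apply setIntegral_mono_on
          (integrableOn_const hA_fin)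
          (h_I_int.mono_set hA_sub) hA_meas
        intro x hx
        have hx2 : ‖x‖ ≤ 2*R := by
          rw [hAdef] at hx
          have := hx.2
          rwa [Metric.mem_closedBall, dist_zero_right] at this
        exact hF_anti ‖x‖ (2*R) (norm_nonneg x) hx2
      rw [setIntegral_const, smul_eq_mul, mul_comm] at hconstA
      exact hconstA
    have hF2R0 : 0 ≤ F (2*R) := hF_nonneg _ h2R0.le
    have hmin0 : 0 ≤ min M 1 := le_min hM0.le zero_le_one
    have hRd1 : (1:ℝ) ≤ R ^ d := by
      calc (1:ℝ) = 1 ^ d := (one_pow d).symm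
        _ ≤ R ^ d := pow_le_pow_left₀ zero_le_one hR1 d
    have h2p : (2:ℝ) ^ (-p) ≤ 1/2 := by
      have h1' : (2:ℝ) ^ (-p) ≤ 2 ^ (-1:ℝ) :=
        rpow_le_rpow_of_exponent_le one_le_two (by linarith)
      rw [Real.rpow_neg_one] at h1'
      linarith
    have hMb : (2*R) ^ (-p) * u⁻¹ * R ^ d = 2 ^ (-p) * M := by
      rw [hMeq, mul_rpow (by norm_num : (0:ℝ) ≤ 2) hR0.le, ← Real.rpow_natCast R d,
        show 2 ^ (-p) * R ^ (-p) * u⁻¹ * R ^ ((d:ℕ):ℝ)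
          = 2 ^ (-p) * (u⁻¹ * (R ^ (-p) * R ^ ((d:ℕ):ℝ))) from by ring,
        ← Real.rpow_add hR0, show -p + ((d:ℕ):ℝ) = (d:ℝ) - p from by push_cast; ring]
    have hkey : 2 ^ (-p) * min M 1 ≤ b * R ^ d := by
      rw [hbdef, min_mul_of_nonneg _ _ (pow_nonneg hR0.le d)]
      apply le_min
      · have hh1 : (2:ℝ) ^ (-p) * min M 1 ≤ 1/2 := by
          have h0 : (0:ℝ) ≤ 2 ^ (-p) := rpow_nonneg (by norm_num) _
          nlinarith [min_le_right M 1]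
        nlinarith
      · rw [hMb]
        exact mul_le_mul_of_nonneg_left (min_le_left _ _)
          (rpow_nonneg (by norm_num) _)
    calc c₀ * min M 1 = (c * 2 ^ (-δ)) * κ * (2 ^ (-p) * min M 1) := by
          rw [hc₀def]; ring
      _ ≤ (c * 2 ^ (-δ)) * κ * (b * R ^ d) := by
          apply mul_le_mul_of_nonneg_left hkey (by positivity)
      _ = (c * 2 ^ (-δ) * b) * (κ * R ^ d) := by ring
      _ ≤ F (2*R) * (volume A).toReal :=
          mul_le_mul hFlow hvolA (by positivity) hF2R0
      _ ≤ ∫ x in A, F ‖x‖ := h2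
      _ ≤ ∫ x in S, F ‖x‖ := h1
  -- conclusion
  have hIeq : (∫ x in S, ∫ v in Ioc (0:ℝ) 1, ρ (‖x‖ ^ d * (u * v) ^ γ))
      = ∫ x in S, F ‖x‖ := rfl
  rw [hIeq]
  have hmin0' : 0 ≤ min M 1 := le_min hM0.le zero_le_one
  constructor
  · apply le_min
    · calc min c₀ 1 * min M 1 ≤ c₀ * min M 1 :=
            mul_le_mul_of_nonneg_right (min_le_left _ _) hmin0'
        _ ≤ _ := hIlow
    · calc min c₀ 1 * min M 1 ≤ 1 * 1 :=
            mul_le_mul (min_le_right _ _) (min_le_right _ _) hmin0' zero_le_one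
        _ = 1 := one_mul 1
  · rcases le_total M 1 with h | h
    · rw [min_eq_left h]
      calc min (∫ x in S, F ‖x‖) 1 ≤ ∫ x in S, F ‖x‖ := min_le_left _ _
        _ ≤ C₃ * M := hIle
        _ ≤ max C₃ 1 * M := mul_le_mul_of_nonneg_right (le_max_left _ _) hM0.le
    · rw [min_eq_right h]
      calc min (∫ x in S, F ‖x‖) 1 ≤ 1 := min_le_right _ _
        _ ≤ max C₃ 1 := le_max_right _ _
        _ = max C₃ 1 * 1 := (mul_one _).symm
end

section
/- Let d ≥ 1 be an integer, let 0 < γ < 1, let 1 < δ < 1/γ, and let ρ be a soft profile with decay exponent δ. Then there exist constants 0 < c' ≤ C' < ∞ (depending only on d, γ, δ and the constants in the definition of ρ) such that for every u ∈ (0,1] and every R ≥ 2 one has c'·min(u^{−γδ} R^{d(1−δ)}, 1) ≤ min( ∫_{{x ∈ ℝ^d : |x| ≥ R}} ∫_0^1 ρ(|x|^d (u v)^γ) dv dx , 1 ) ≤ C'·min(u^{−γδ} R^{d(1−δ)}, 1). -/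
open MeasureTheory Real Set Metric

private lemma aux_integrableOn_norm_rpow (d : ℕ) (hd : 1 ≤ d) (p : ℝ) (hp : (d : ℝ) < p)
    (T : ℝ) (hT : 1 ≤ T) :
    IntegrableOn (fun x : EuclideanSpace ℝ (Fin d) => ‖x‖ ^ (-p)) {x | T ≤ ‖x‖} := by
  have hfin : (Module.finrank ℝ (EuclideanSpace ℝ (Fin d)) : ℝ) < p := by
    rwa [finrank_euclideanSpace, Fintype.card_fin]
  have hint : Integrable (fun x : EuclideanSpace ℝ (Fin d) => (1 + ‖x‖) ^ (-p)) :=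
    integrable_one_add_norm hfin
  have hp0 : 0 < p := lt_of_le_of_lt (by positivity) hp
  refine ((hint.const_mul ((2:ℝ) ^ p)).integrableOn).mono' ?_ ?_
  · exact (Measurable.aestronglyMeasurable (by fun_prop))
  · filter_upwards [ae_restrict_mem (by
      exact measurableSet_le measurable_const measurable_norm)] with x hx
    have hx1 : (1:ℝ) ≤ ‖x‖ := le_trans hT hx
    have h0 : (0:ℝ) < ‖x‖ := lt_of_lt_of_le one_pos hx1
    rw [Real.norm_eq_abs, abs_of_nonneg (rpow_nonneg h0.le _)]
    have h2 : (1 + ‖x‖) ≤ 2 * ‖x‖ := by linarith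
    have : (2 * ‖x‖) ^ (-p) ≤ (1 + ‖x‖) ^ (-p) :=
      rpow_le_rpow_of_nonpos (by positivity) h2 (by linarith)
    calc ‖x‖ ^ (-p) = (2:ℝ) ^ p * (2 * ‖x‖) ^ (-p) := by
          rw [mul_rpow (by norm_num) h0.le, ← mul_assoc, ← Real.rpow_add (by norm_num),
            add_neg_cancel, rpow_zero, one_mul]
      _ ≤ (2:ℝ) ^ p * (1 + ‖x‖) ^ (-p) := by
          exact mul_le_mul_of_nonneg_left this (by positivity)

private lemma aux_setIntegral_norm_rpow (d : ℕ) (hd : 1 ≤ d) (p : ℝ) (hp : (d : ℝ) < p)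
    (T : ℝ) (hT : 0 < T) :
    ∫ x in {x : EuclideanSpace ℝ (Fin d) | T ≤ ‖x‖}, ‖x‖ ^ (-p)
      = ((d : ℝ) * (volume (ball (0 : EuclideanSpace ℝ (Fin d)) 1)).toReal / (p - d))
        * T ^ ((d : ℝ) - p) := by
  haveI : Nontrivial (EuclideanSpace ℝ (Fin d)) := by
    apply Module.nontrivial_of_finrank_pos (R := ℝ)
    rw [finrank_euclideanSpace, Fintype.card_fin]; omega
  have hdim : Module.finrank ℝ (EuclideanSpace ℝ (Fin d)) = d := by
    rw [finrank_euclideanSpace, Fintype.card_fin]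
  have hmeas : MeasurableSet {x : EuclideanSpace ℝ (Fin d) | T ≤ ‖x‖} :=
    measurableSet_le measurable_const measurable_norm
  have key := MeasureTheory.integral_fun_norm_addHaar (volume : Measure (EuclideanSpace ℝ (Fin d)))
    ((Ici T).indicator (fun r : ℝ => r ^ (-p)))
  rw [hdim] at key
  have h1 : ∫ x : EuclideanSpace ℝ (Fin d), (Ici T).indicator (fun r : ℝ => r ^ (-p)) ‖x‖
      = ∫ x in {x : EuclideanSpace ℝ (Fin d) | T ≤ ‖x‖}, ‖x‖ ^ (-p) := by
    rw [← integral_indicator hmeas]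
    refine integral_congr_ae (ae_of_all _ fun x => ?_)
    by_cases hx : T ≤ ‖x‖ <;> simp [Set.indicator, hx, Set.mem_setOf_eq]
  have h2 : ∫ y in Ioi (0:ℝ), y ^ (d - 1) • (Ici T).indicator (fun r : ℝ => r ^ (-p)) y
      = ∫ y in Ioi T, y ^ ((d:ℝ) - 1 - p) := by
    have : ∀ y : ℝ, y ^ (d - 1) • (Ici T).indicator (fun r : ℝ => r ^ (-p)) y
        = (Ici T).indicator (fun r : ℝ => r ^ (d-1) * r ^ (-p)) y := by
      intro y
      by_cases hy : y ∈ Ici T <;> simp [Set.indicator, hy, smul_eq_mul]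
    rw [MeasureTheory.integral_congr_ae (ae_of_all _ fun y => this y),
      MeasureTheory.setIntegral_indicator measurableSet_Ici]
    have hset : Ioi (0:ℝ) ∩ Ici T = Ici T := by
      ext y; simp only [mem_inter_iff, mem_Ioi, mem_Ici]
      constructor
      · exact fun h => h.2
      · exact fun h => ⟨lt_of_lt_of_le hT h, h⟩
    rw [hset, MeasureTheory.integral_Ici_eq_integral_Ioi]
    refine setIntegral_congr_fun measurableSet_Ioi fun y hy => ?_
    have hy0 : 0 < y := lt_trans hT hy
    rw [← Real.rpow_natCast y (d-1), ← Real.rpow_add hy0]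
    congr 1
    have : ((d - 1 : ℕ) : ℝ) = (d : ℝ) - 1 := by
      have := hd; push_cast [Nat.cast_sub hd]; ring
    rw [this]; ring
  rw [h1, h2, integral_Ioi_rpow_of_lt (by linarith) hT] at key
  rw [key]
  have hne : (d:ℝ) - 1 - p + 1 = (d:ℝ) - p := by ring
  rw [hne]
  rw [nsmul_eq_mul, smul_eq_mul]
  have hpd : (d:ℝ) - p ≠ 0 := by intro h; nlinarith
  have hpd2 : p - (d:ℝ) ≠ 0 := by intro h; nlinarith
  field_simp
  simp only [measureReal_def]; ring

/-- One-edge escape probability asymptotics for a soft profile in the regime `1 < δ < 1/γ`: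
the expected number of direct connections of a vertex with mark `u` at the origin to
vertices outside `B(0,R)`, truncated at 1, is of order `min(u^{-γδ} R^{d(1-δ)}, 1)`. -/
theorem stmt_2 (d : ℕ) (hd : 1 ≤ d) (γ δ : ℝ) (hγ0 : 0 < γ) (hγ1 : γ < 1)
    (hδ1 : 1 < δ) (hδ2 : δ < 1 / γ)
    (ρ : ℝ → ℝ) (c C : ℝ) (hc : 0 < c) (hcC : c ≤ C)
    (hρ_range : ∀ x : ℝ, 0 ≤ x → 0 ≤ ρ x ∧ ρ x ≤ 1)
    (hρ_mono : AntitoneOn ρ (Ici (0 : ℝ)))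
    (hρ_bound : ∀ x : ℝ, 1 ≤ x → c * x ^ (-δ) ≤ ρ x ∧ ρ x ≤ C * x ^ (-δ)) :
    ∃ c' C' : ℝ, 0 < c' ∧ c' ≤ C' ∧ ∀ u R : ℝ, u ∈ Ioc (0 : ℝ) 1 → 2 ≤ R →
      c' * min (u ^ (-(γ * δ)) * R ^ ((d : ℝ) * (1 - δ))) 1 ≤
          min (∫ x in {x : EuclideanSpace ℝ (Fin d) | R ≤ ‖x‖},
              ∫ v in Ioc (0 : ℝ) 1, ρ (‖x‖ ^ d * (u * v) ^ γ)) 1 ∧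
      min (∫ x in {x : EuclideanSpace ℝ (Fin d) | R ≤ ‖x‖},
              ∫ v in Ioc (0 : ℝ) 1, ρ (‖x‖ ^ d * (u * v) ^ γ)) 1 ≤
          C' * min (u ^ (-(γ * δ)) * R ^ ((d : ℝ) * (1 - δ))) 1 := by
  have hγδ1 : γ * δ < 1 := by
    have h := (lt_div_iff₀ hγ0).mp hδ2
    linarith [h]
  have hγδ0 : 0 < γ * δ := by positivity
  have hd0 : (0:ℝ) < (d:ℝ) := by exact_mod_cast hd
  have hdδ : (d:ℝ) < (d:ℝ) * δ := by nlinarith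
  -- constants
  set κ : ℝ := ((d : ℝ) * (volume (ball (0 : EuclideanSpace ℝ (Fin d)) 1)).toReal
    / ((d:ℝ) * δ - d)) with hκdef
  have hballpos : 0 < (volume (ball (0 : EuclideanSpace ℝ (Fin d)) 1)).toReal := by
    refine ENNReal.toReal_pos (ne_of_gt (measure_ball_pos _ _ one_pos)) (ne_of_lt measure_ball_lt_top)
  have hκ : 0 < κ := by
    apply div_pos (by positivity) (by linarith)
  have hKvInt : IntegrableOn (fun v : ℝ => v ^ (-(γ*δ))) (Ioc 0 1) := by
    rw [← intervalIntegrable_iff_integrableOn_Ioc_of_le zero_le_one]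
    exact intervalIntegral.intervalIntegrable_rpow' (by linarith)
  set Kv : ℝ := ∫ v in Ioc (0:ℝ) 1, v ^ (-(γ*δ)) with hKvdef
  have hKv0 : 0 ≤ Kv := by
    refine setIntegral_nonneg measurableSet_Ioc fun v hv => rpow_nonneg (le_of_lt hv.1) _
  set C₀ : ℝ := max C 1 with hC₀def
  have hC₀1 : (1:ℝ) ≤ C₀ := le_max_right _ _
  have hC₀C : C ≤ C₀ := le_max_left _ _
  -- the modified profile
  set ρ' : ℝ → ℝ := fun x => ρ (max x 0) with hρ'def
  have hρ'anti : Antitone ρ' := fun a b hab =>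
    hρ_mono (le_max_right a 0) (le_max_right b 0) (max_le_max hab le_rfl)
  have hρ'meas : Measurable ρ' := hρ'anti.measurable
  have hρ'eq : ∀ x : ℝ, 0 ≤ x → ρ' x = ρ x := fun x hx => by
    simp only [hρ'def, max_eq_left hx]
  have hρ'01 : ∀ x : ℝ, 0 ≤ ρ' x ∧ ρ' x ≤ 1 := fun x => hρ_range _ (le_max_right x 0)
  have hρ'ub : ∀ x : ℝ, 0 < x → ρ' x ≤ C₀ * x ^ (-δ) := by
    intro x hx
    rcases le_or_gt 1 x with h1 | h1
    · rw [hρ'eq x hx.le]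
      calc ρ x ≤ C * x ^ (-δ) := (hρ_bound x h1).2
        _ ≤ C₀ * x ^ (-δ) := mul_le_mul_of_nonneg_right hC₀C (rpow_nonneg hx.le _)
    · have hx1 : (1:ℝ) ≤ x ^ (-δ) := by
        rw [show (1:ℝ) = x ^ (0:ℝ) by rw [rpow_zero]]
        exact rpow_le_rpow_of_exponent_ge hx h1.le (by linarith)
      calc ρ' x ≤ 1 := (hρ'01 x).2
        _ ≤ C₀ * x ^ (-δ) := by nlinarith
  have hρ'lb : ∀ x : ℝ, 1 ≤ x → c * x ^ (-δ) ≤ ρ' x := by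
    intro x hx
    rw [hρ'eq x (by linarith)]
    exact (hρ_bound x hx).1
  -- rpow algebra helper
  have hsplit : ∀ r w : ℝ, 0 < r → 0 < w →
      (r ^ d * w ^ γ) ^ (-δ) = w ^ (-(γ*δ)) * r ^ (-((d:ℝ)*δ)) := by
    intro r w hr hw
    rw [Real.mul_rpow (by positivity) (by positivity), ← Real.rpow_natCast r d,
      ← Real.rpow_mul hr.le, ← Real.rpow_mul hw.le, mul_comm]
    rw [show γ * (-δ) = -(γ*δ) by ring, show (d:ℝ) * (-δ) = -((d:ℝ)*δ) by ring]
  refine ⟨min (c * κ) 1, max (C₀ * Kv * κ) 1, lt_min (by positivity) one_pos, ?_, ?_⟩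
  · exact le_trans (min_le_right _ _) (le_max_right _ _)
  intro u R hu hR
  obtain ⟨hu0, hu1⟩ := hu
  have hR0 : (0:ℝ) < R := lt_of_lt_of_le two_pos hR
  set M : ℝ := u ^ (-(γ*δ)) * R ^ ((d:ℝ)*(1-δ)) with hMdef
  have hM0 : 0 < M := by positivity
  set S : Set (EuclideanSpace ℝ (Fin d)) := {x | R ≤ ‖x‖} with hSdef
  have hSmeas : MeasurableSet S := measurableSet_le measurable_const measurable_norm
  set g : EuclideanSpace ℝ (Fin d) → ℝ :=
    fun x => ∫ v in Ioc (0:ℝ) 1, ρ' (‖x‖ ^ d * (u * v) ^ γ) with hgdef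
  -- replace ρ by ρ' in the statement
  have hIeq : (∫ x in S, ∫ v in Ioc (0:ℝ) 1, ρ (‖x‖ ^ d * (u * v) ^ γ)) = ∫ x in S, g x := by
    refine integral_congr_ae (ae_of_all _ fun x => ?_)
    refine setIntegral_congr_fun measurableSet_Ioc fun v hv => ?_
    rw [hρ'eq]
    exact mul_nonneg (by positivity) (rpow_nonneg (mul_nonneg hu0.le hv.1.le) γ)
  rw [hIeq]
  set I : ℝ := ∫ x in S, g x with hIdef
  -- basic properties of g
  have hg0 : ∀ x, 0 ≤ g x := fun x =>
    integral_nonneg fun v => (hρ'01 _).1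
  have hginner_int : ∀ x : EuclideanSpace ℝ (Fin d),
      IntegrableOn (fun v : ℝ => ρ' (‖x‖ ^ d * (u * v) ^ γ)) (Ioc 0 1) := by
    intro x
    have h1 : IntegrableOn (fun _ : ℝ => (1:ℝ)) (Ioc 0 1) volume :=
      integrableOn_const (by rw [Real.volume_Ioc]; norm_num)
    refine h1.mono' (Measurable.aestronglyMeasurable ?_) ?_
    · fun_prop
    · refine ae_of_all _ fun v => ?_
      rw [Real.norm_eq_abs, abs_of_nonneg (hρ'01 _).1]
      exact (hρ'01 _).2
  have hgmeas : AEStronglyMeasurable g (volume.restrict S) := by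
    have : StronglyMeasurable g := by
      have hm : StronglyMeasurable
          (fun q : (EuclideanSpace ℝ (Fin d)) × ℝ => ρ' (‖q.1‖ ^ d * (u * q.2) ^ γ)) := by
        apply Measurable.stronglyMeasurable
        fun_prop
      exact hm.integral_prod_right'
    exact this.aestronglyMeasurable.restrict
  -- upper bound for g on S
  have hgub : ∀ x ∈ S, g x ≤ C₀ * Kv * u ^ (-(γ*δ)) * ‖x‖ ^ (-((d:ℝ)*δ)) := by
    intro x hx
    have hr0 : (0:ℝ) < ‖x‖ := lt_of_lt_of_le hR0 hx
    have step : ∀ v ∈ Ioc (0:ℝ) 1, ρ' (‖x‖ ^ d * (u * v) ^ γ)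
        ≤ (C₀ * u ^ (-(γ*δ)) * ‖x‖ ^ (-((d:ℝ)*δ))) * v ^ (-(γ*δ)) := by
      intro v hv
      have hv0 : 0 < v := hv.1
      have harg : 0 < ‖x‖ ^ d * (u * v) ^ γ := by positivity
      calc ρ' (‖x‖ ^ d * (u * v) ^ γ) ≤ C₀ * (‖x‖ ^ d * (u * v) ^ γ) ^ (-δ) := hρ'ub _ harg
        _ = (C₀ * u ^ (-(γ*δ)) * ‖x‖ ^ (-((d:ℝ)*δ))) * v ^ (-(γ*δ)) := by
            rw [hsplit ‖x‖ (u*v) hr0 (by positivity),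
              Real.mul_rpow hu0.le hv0.le]
            ring
    have hRHSint : IntegrableOn
        (fun v : ℝ => (C₀ * u ^ (-(γ*δ)) * ‖x‖ ^ (-((d:ℝ)*δ))) * v ^ (-(γ*δ))) (Ioc 0 1) :=
      hKvInt.const_mul _
    calc g x ≤ ∫ v in Ioc (0:ℝ) 1,
          (C₀ * u ^ (-(γ*δ)) * ‖x‖ ^ (-((d:ℝ)*δ))) * v ^ (-(γ*δ)) := by
          refine integral_mono_of_nonneg (ae_of_all _ fun v => (hρ'01 _).1) hRHSint ?_
          filter_upwards [ae_restrict_mem measurableSet_Ioc] with v hv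
          exact step v hv
      _ = C₀ * Kv * u ^ (-(γ*δ)) * ‖x‖ ^ (-((d:ℝ)*δ)) := by
          rw [MeasureTheory.integral_const_mul]
          rw [hKvdef]; ring
  have hnormint : IntegrableOn
      (fun x : EuclideanSpace ℝ (Fin d) => ‖x‖ ^ (-((d:ℝ)*δ))) S :=
    aux_integrableOn_norm_rpow d hd _ hdδ R (by linarith)
  have hgint : IntegrableOn g S := by
    refine ((hnormint.const_mul (C₀ * Kv * u ^ (-(γ*δ)))).mono' hgmeas ?_)
    filter_upwards [ae_restrict_mem hSmeas] with x hx
    rw [Real.norm_eq_abs, abs_of_nonneg (hg0 x)]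
    calc g x ≤ C₀ * Kv * u ^ (-(γ*δ)) * ‖x‖ ^ (-((d:ℝ)*δ)) := hgub x hx
      _ = C₀ * Kv * u ^ (-(γ*δ)) * ‖x‖ ^ (-((d:ℝ)*δ)) := rfl
  -- upper bound for I
  have hIub : I ≤ (C₀ * Kv * κ) * M := by
    calc I ≤ ∫ x in S, C₀ * Kv * u ^ (-(γ*δ)) * ‖x‖ ^ (-((d:ℝ)*δ)) :=
        setIntegral_mono_on hgint (hnormint.const_mul _) hSmeas hgub
      _ = C₀ * Kv * u ^ (-(γ*δ)) * (κ * R ^ ((d:ℝ) - (d:ℝ)*δ)) := by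
        rw [MeasureTheory.integral_const_mul, aux_setIntegral_norm_rpow d hd _ hdδ R hR0]
      _ = (C₀ * Kv * κ) * M := by
        rw [hMdef, show (d:ℝ) - (d:ℝ)*δ = (d:ℝ)*(1-δ) by ring]
        ring
  have hI0 : 0 ≤ I := setIntegral_nonneg hSmeas fun x _ => hg0 x
  -- lower bound machine
  have key : ∀ T : ℝ, R ≤ T → 1 ≤ u ^ γ * T ^ d →
      (c * κ) * (u ^ (-(γ*δ)) * T ^ ((d:ℝ)*(1-δ))) ≤ I := by
    intro T hRT hT1
    have hT0 : (0:ℝ) < T := lt_of_lt_of_le hR0 hRT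
    set S' : Set (EuclideanSpace ℝ (Fin d)) := {x | T ≤ ‖x‖} with hS'def
    have hS'meas : MeasurableSet S' := measurableSet_le measurable_const measurable_norm
    have hsub : S' ⊆ S := fun x hx => le_trans hRT hx
    have hstep : ∀ x ∈ S', c * (u ^ (-(γ*δ)) * ‖x‖ ^ (-((d:ℝ)*δ))) ≤ g x := by
      intro x hx
      have hr0 : (0:ℝ) < ‖x‖ := lt_of_lt_of_le hT0 hx
      have hargT : (1:ℝ) ≤ u ^ γ * ‖x‖ ^ d := by
        calc (1:ℝ) ≤ u ^ γ * T ^ d := hT1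
          _ ≤ u ^ γ * ‖x‖ ^ d := by
            apply mul_le_mul_of_nonneg_left _ (rpow_nonneg hu0.le _)
            exact pow_le_pow_left₀ hT0.le hx d
      have harg : (1:ℝ) ≤ ‖x‖ ^ d * u ^ γ := by linarith [hargT]
      have hmono : ∀ v ∈ Ioc (0:ℝ) 1,
          ρ' (‖x‖ ^ d * u ^ γ) ≤ ρ' (‖x‖ ^ d * (u * v) ^ γ) := by
        intro v hv
        apply hρ'anti
        refine mul_le_mul_of_nonneg_left ?_ (by positivity)
        exact rpow_le_rpow (mul_nonneg hu0.le hv.1.le) (mul_le_of_le_one_right hu0.le hv.2) hγ0.le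
      calc c * (u ^ (-(γ*δ)) * ‖x‖ ^ (-((d:ℝ)*δ)))
          = c * (‖x‖ ^ d * u ^ γ) ^ (-δ) := by rw [hsplit ‖x‖ u hr0 hu0]
        _ ≤ ρ' (‖x‖ ^ d * u ^ γ) := hρ'lb _ harg
        _ = ∫ v in Ioc (0:ℝ) 1, ρ' (‖x‖ ^ d * u ^ γ) := by
            rw [MeasureTheory.setIntegral_const, measureReal_def, Real.volume_Ioc]
            norm_num
        _ ≤ g x := by
            refine integral_mono_of_nonneg (ae_of_all _ fun v => (hρ'01 _).1)
              (hginner_int x) ?_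
            filter_upwards [ae_restrict_mem measurableSet_Ioc] with v hv
            exact hmono v hv
    have hnormint' : IntegrableOn
        (fun x : EuclideanSpace ℝ (Fin d) => ‖x‖ ^ (-((d:ℝ)*δ))) S' :=
      aux_integrableOn_norm_rpow d hd _ hdδ T (by linarith)
    calc (c * κ) * (u ^ (-(γ*δ)) * T ^ ((d:ℝ)*(1-δ)))
        = ∫ x in S', c * (u ^ (-(γ*δ)) * ‖x‖ ^ (-((d:ℝ)*δ))) := by
          rw [MeasureTheory.integral_const_mul, MeasureTheory.integral_const_mul,
            aux_setIntegral_norm_rpow d hd _ hdδ T hT0,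
            show (d:ℝ) - (d:ℝ)*δ = (d:ℝ)*(1-δ) by ring]
          ring
      _ ≤ ∫ x in S', g x := by
          refine setIntegral_mono_on ?_ (hgint.mono_set hsub) hS'meas hstep
          exact (hnormint'.const_mul (u ^ (-(γ*δ)))).const_mul c
      _ ≤ I := by
          refine setIntegral_mono_set hgint (ae_of_all _ fun x => hg0 x) ?_
          exact HasSubset.Subset.eventuallyLE hsub
  -- conclude
  constructor
  · -- lower bound
    rcases le_or_gt 1 (u ^ γ * R ^ d) with hA | hB
    · have hkey := key R le_rfl hA
      rw [← hMdef] at hkey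
      refine le_min ?_ ?_
      · have h1 : min (c*κ) 1 * min M 1 ≤ (c*κ) * M :=
          mul_le_mul (min_le_left _ _) (min_le_left _ _)
            (le_min hM0.le zero_le_one) (by positivity)
        linarith
      · have h1 : min (c*κ) 1 * min M 1 ≤ 1 * 1 :=
          mul_le_mul (min_le_right _ _) (min_le_right _ _)
            (le_min hM0.le zero_le_one) zero_le_one
        linarith
    · -- case B
      set T : ℝ := u ^ (-(γ/(d:ℝ))) with hTdef
      have hTd : T ^ d = u ^ (-γ) := by
        rw [hTdef, ← Real.rpow_natCast (u ^ (-(γ/(d:ℝ)))) d, ← Real.rpow_mul hu0.le]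
        congr 1
        field_simp
      have hT1 : u ^ γ * T ^ d = 1 := by
        rw [hTd, ← Real.rpow_add hu0]
        simp
      have hRT : R ≤ T := by
        by_contra hcon
        push_neg at hcon
        have hTpos : (0:ℝ) < T := by rw [hTdef]; positivity
        have : T ^ d ≤ R ^ d := pow_le_pow_left₀ hTpos.le hcon.le d
        have : u ^ γ * T ^ d ≤ u ^ γ * R ^ d :=
          mul_le_mul_of_nonneg_left this (rpow_nonneg hu0.le _)
        rw [hT1] at this
        linarith
      have hval : u ^ (-(γ*δ)) * T ^ ((d:ℝ)*(1-δ)) = u ^ (-γ) := by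
        rw [hTdef, ← Real.rpow_mul hu0.le, ← Real.rpow_add hu0]
        congr 1
        field_simp
        ring
      have hkey := key T hRT (le_of_eq hT1.symm)
      rw [hval] at hkey
      have hu_ge : (1:ℝ) ≤ u ^ (-γ) := by
        rw [show (1:ℝ) = u ^ (0:ℝ) by rw [rpow_zero]]
        exact rpow_le_rpow_of_exponent_ge hu0 hu1 (by linarith)
      have hIc : c * κ ≤ I := by nlinarith
      refine le_min ?_ ?_
      · have h1 : min (c*κ) 1 * min M 1 ≤ min (c*κ) 1 * 1 :=
          mul_le_mul_of_nonneg_left (min_le_right _ _) (le_min (by positivity) zero_le_one)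
        have h2 : min (c*κ) 1 ≤ c * κ := min_le_left _ _
        linarith
      · have h1 : min (c*κ) 1 * min M 1 ≤ 1 * 1 :=
          mul_le_mul (min_le_right _ _) (min_le_right _ _)
            (le_min hM0.le zero_le_one) zero_le_one
        linarith
  · -- upper bound
    rcases le_or_gt M 1 with hM1 | hM1
    · rw [min_eq_left hM1]
      calc min I 1 ≤ I := min_le_left _ _
        _ ≤ (C₀ * Kv * κ) * M := hIub
        _ ≤ max (C₀ * Kv * κ) 1 * M :=
          mul_le_mul_of_nonneg_right (le_max_left _ _) hM0.le
    · rw [min_eq_right hM1.le]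
      calc min I 1 ≤ 1 := min_le_right _ _
        _ ≤ max (C₀ * Kv * κ) 1 := le_max_right _ _
        _ = max (C₀ * Kv * κ) 1 * 1 := (mul_one _).symm
end

section
/- Let d ≥ 1 be an integer, let 0 < γ < 1 and let r₀ > 0. Then there exist R₀ ≥ 2 and constants 0 < c' ≤ C' < ∞ (depending only on d, γ and r₀) such that for every u ∈ (0,1] and every R ≥ R₀ one has c'·min(u^{−1} R^{d(1−1/γ)}, 1) ≤ min( ∫_{{x ∈ ℝ^d : |x| ≥ R}} ∫_0^1 𝟙{ |x|^d (u v)^γ ≤ r₀ } dv dx , 1 ) ≤ C'·min(u^{−1} R^{d(1−1/γ)}, 1). -/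
open MeasureTheory Real Set

private lemma aux_min_mul_le {K M : ℝ} (hK : 0 ≤ K) (hM : 0 ≤ M) :
    min (K * M) 1 ≤ max K 1 * min M 1 := by
  rcases le_or_gt M 1 with h | h
  · rw [min_eq_left h]
    calc min (K * M) 1 ≤ K * M := min_le_left _ _
      _ ≤ max K 1 * M := mul_le_mul_of_nonneg_right (le_max_left _ _) hM
  · rw [min_eq_right h.le]
    calc min (K * M) 1 ≤ 1 := min_le_right _ _
      _ ≤ max K 1 * 1 := by rw [mul_one]; exact le_max_right _ _

private lemma aux_le_min_mul {K M B : ℝ} (hK : 0 ≤ K) (hM : 0 ≤ M) (hB : 1 ≤ B) :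
    min K 1 * min M 1 ≤ min (K * M) B := by
  apply le_min
  · exact mul_le_mul (min_le_left _ _) (min_le_left _ _) (le_min hM zero_le_one) hK
  · calc min K 1 * min M 1
        ≤ 1 * 1 := mul_le_mul (min_le_right _ _) (min_le_right _ _)
          (le_min hM zero_le_one) zero_le_one
      _ = 1 := one_mul 1
      _ ≤ B := hB

/-- inner integral computation -/
private lemma inner_calc (d : ℕ) (γ : ℝ) (hγ0 : 0 < γ) (r₀ : ℝ) (hr₀ : 0 < r₀)
    (u : ℝ) (hu0 : 0 < u) (n : ℝ) (hn : 0 < n) :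
    (∫ v in Ioc (0:ℝ) 1, if n ^ d * (u * v) ^ γ ≤ r₀ then (1:ℝ) else 0)
      = min (u⁻¹ * (r₀ ^ (1/γ) * n ^ (-((d:ℝ)/γ)))) 1 := by
  have hγ' : γ ≠ 0 := hγ0.ne'
  set p : ℝ := (d:ℝ)/γ with hp_def
  set t : ℝ := u⁻¹ * (r₀ ^ (1/γ) * n ^ (-p)) with ht_def
  have ht0 : 0 < t :=
    mul_pos (inv_pos.2 hu0) (mul_pos (rpow_pos_of_pos hr₀ _) (rpow_pos_of_pos hn _))
  have hB : 0 < r₀ * n ^ (-(d:ℝ)) := mul_pos hr₀ (rpow_pos_of_pos hn _)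
  have hT : (r₀ * n ^ (-(d:ℝ))) ^ (1/γ) = r₀ ^ (1/γ) * n ^ (-p) := by
    rw [Real.mul_rpow hr₀.le (rpow_nonneg hn.le _), ← Real.rpow_mul hn.le]
    congr 1
    rw [hp_def]; ring
  have hdiv : r₀ / n ^ d = r₀ * n ^ (-(d:ℝ)) := by
    rw [Real.rpow_neg hn.le, Real.rpow_natCast, div_eq_mul_inv]
  have hnd : (0:ℝ) < n ^ d := pow_pos hn d
  have hiff : ∀ v ∈ Ioc (0:ℝ) 1, (n ^ d * (u * v) ^ γ ≤ r₀ ↔ v ≤ t) := by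
    intro v hv
    have hv0 : 0 < v := hv.1
    have huv : 0 < u * v := mul_pos hu0 hv0
    constructor
    · intro h
      rw [← le_div_iff₀' hnd, hdiv] at h
      have h2 : ((u*v) ^ γ) ^ (1/γ) ≤ (r₀ * n ^ (-(d:ℝ))) ^ (1/γ) :=
        Real.rpow_le_rpow (rpow_nonneg huv.le _) h (by positivity)
      rw [← Real.rpow_mul huv.le, mul_one_div, div_self hγ', Real.rpow_one, hT] at h2
      calc v = u⁻¹ * (u * v) := by field_simp
        _ ≤ u⁻¹ * (r₀ ^ (1/γ) * n ^ (-p)) :=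
            mul_le_mul_of_nonneg_left h2 (inv_nonneg.2 hu0.le)
    · intro h
      have h2 : u * v ≤ r₀ ^ (1/γ) * n ^ (-p) := by
        have h3 := mul_le_mul_of_nonneg_left h hu0.le
        rwa [ht_def, ← mul_assoc, mul_inv_cancel₀ hu0.ne', one_mul] at h3
      have h3 : (u*v) ^ γ ≤ (r₀ ^ (1/γ) * n ^ (-p)) ^ γ :=
        Real.rpow_le_rpow huv.le h2 hγ0.le
      rw [← hT, ← Real.rpow_mul hB.le, one_div, inv_mul_cancel₀ hγ', Real.rpow_one] at h3
      calc n ^ d * (u*v) ^ γ ≤ n ^ d * (r₀ * n ^ (-(d:ℝ))) :=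
          mul_le_mul_of_nonneg_left h3 (pow_nonneg hn.le _)
        _ = r₀ := by
            rw [Real.rpow_neg hn.le, Real.rpow_natCast]
            field_simp
  set m : ℝ := min t 1 with hm_def
  have hm0 : 0 < m := lt_min ht0 one_pos
  calc (∫ v in Ioc (0:ℝ) 1, if n ^ d * (u * v) ^ γ ≤ r₀ then (1:ℝ) else 0)
      = ∫ v in Ioc (0:ℝ) 1, (Ioc (0:ℝ) m).indicator (fun _ => (1:ℝ)) v := by
        apply setIntegral_congr_fun measurableSet_Ioc
        intro v hv
        show (if n ^ d * (u * v) ^ γ ≤ r₀ then (1:ℝ) else 0)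
          = (Ioc (0:ℝ) m).indicator (fun _ => (1:ℝ)) v
        rw [if_congr (hiff v hv) rfl rfl, Set.indicator_apply]
        by_cases h : v ≤ t
        · rw [if_pos h, if_pos (Set.mem_Ioc.mpr ⟨hv.1, le_min h hv.2⟩)]
        · rw [if_neg h, if_neg (fun hmem => h (le_trans (Set.mem_Ioc.mp hmem).2 (min_le_left _ _)))]
    _ = ∫ v in Ioc (0:ℝ) m, (1:ℝ) := by
        rw [setIntegral_indicator measurableSet_Ioc,
          Set.inter_eq_right.2 (Ioc_subset_Ioc_right (min_le_right t 1))]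
    _ = m := by
        simp [Real.volume_Ioc, ENNReal.toReal_ofReal hm0.le, hm0.le]

/-- One-edge escape probability asymptotics for the hard profile `ρ = 1_{[0,r₀]}`
(formally `δ = ∞`): for `R` large, the expected number of direct connections of a vertex
with mark `u` at the origin to vertices outside `B(0,R)`, truncated at 1, is of order
`min(u⁻¹ R^{d(1-1/γ)}, 1)`. -/
theorem stmt_4 (d : ℕ) (hd : 1 ≤ d) (γ : ℝ) (hγ0 : 0 < γ) (hγ1 : γ < 1)
    (r₀ : ℝ) (hr₀ : 0 < r₀) :
    ∃ R₀ : ℝ, 2 ≤ R₀ ∧ ∃ c' C' : ℝ, 0 < c' ∧ c' ≤ C' ∧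
      ∀ u R : ℝ, u ∈ Ioc (0 : ℝ) 1 → R₀ ≤ R →
      c' * min (u⁻¹ * R ^ ((d : ℝ) * (1 - 1 / γ))) 1 ≤
          min (∫ x in {x : EuclideanSpace ℝ (Fin d) | R ≤ ‖x‖},
              ∫ v in Ioc (0 : ℝ) 1,
                (if ‖x‖ ^ d * (u * v) ^ γ ≤ r₀ then (1 : ℝ) else 0)) 1 ∧
      min (∫ x in {x : EuclideanSpace ℝ (Fin d) | R ≤ ‖x‖},
              ∫ v in Ioc (0 : ℝ) 1,
                (if ‖x‖ ^ d * (u * v) ^ γ ≤ r₀ then (1 : ℝ) else 0)) 1 ≤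
          C' * min (u⁻¹ * R ^ ((d : ℝ) * (1 - 1 / γ))) 1 := by
  have hγ' : γ ≠ 0 := hγ0.ne'
  set p : ℝ := (d:ℝ)/γ with hp_def
  have hd0 : (0:ℝ) < d := by exact_mod_cast Nat.lt_of_lt_of_le Nat.zero_lt_one hd
  have hdp : (d:ℝ) < p := by
    rw [hp_def, lt_div_iff₀ hγ0]
    nlinarith
  haveI : Nontrivial (EuclideanSpace ℝ (Fin d)) := by
    apply Module.nontrivial_of_finrank_pos (R := ℝ)
    rw [finrank_euclideanSpace_fin]; exact hd
  set κ : ℝ := (volume (Metric.ball (0:EuclideanSpace ℝ (Fin d)) 1)).toReal with hκ_def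
  have hκ0 : 0 < κ :=
    ENNReal.toReal_pos (Metric.measure_ball_pos _ _ one_pos).ne' measure_ball_lt_top.ne
  set K : ℝ := r₀ ^ (1/γ) * 2 ^ (-p) with hK_def
  have hK0 : 0 < K := mul_pos (rpow_pos_of_pos hr₀ _) (rpow_pos_of_pos two_pos _)
  set c₁ : ℝ := (d:ℝ) * κ * min K 1 with hc₁_def
  have hc₁0 : 0 < c₁ := mul_pos (mul_pos hd0 hκ0) (lt_min hK0 one_pos)
  set C₁ : ℝ := (d:ℝ) * κ * r₀ ^ (1/γ) / (p - (d:ℝ)) with hC₁_def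
  have hC₁0 : 0 ≤ C₁ := by
    apply div_nonneg _ (by linarith)
    exact mul_nonneg (mul_nonneg hd0.le hκ0.le) (rpow_nonneg hr₀.le _)
  refine ⟨2, le_refl 2, min c₁ 1, max C₁ 1, lt_min hc₁0 one_pos,
    le_trans (min_le_right _ _) (le_max_right _ _), ?_⟩
  intro u R hu hR
  have hu0 : 0 < u := hu.1
  have hR0 : (0:ℝ) < R := by linarith
  have hexp : (d:ℝ) * (1 - 1/γ) = (d:ℝ) - p := by rw [hp_def]; ring
  rw [hexp]
  set M : ℝ := u⁻¹ * R ^ ((d:ℝ) - p) with hM_def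
  have hM0 : 0 ≤ M := mul_nonneg (inv_nonneg.2 hu0.le) (rpow_nonneg hR0.le _)
  set a : ℝ := u⁻¹ * r₀ ^ (1/γ) with ha_def
  have ha0 : 0 < a := mul_pos (inv_pos.2 hu0) (rpow_pos_of_pos hr₀ _)
  set φ : ℝ → ℝ := fun r => min (u⁻¹ * (r₀ ^ (1/γ) * r ^ (-p))) 1 with hφ_def
  set F : ℝ → ℝ := fun r => if R ≤ r then φ r else 0 with hF_def
  have hS : MeasurableSet {x : EuclideanSpace ℝ (Fin d) | R ≤ ‖x‖} :=
    measurableSet_le measurable_const measurable_norm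
  -- reduce I to the radial integral
  have hI1 : (∫ x in {x : EuclideanSpace ℝ (Fin d) | R ≤ ‖x‖},
      ∫ v in Ioc (0:ℝ) 1, (if ‖x‖ ^ d * (u * v) ^ γ ≤ r₀ then (1:ℝ) else 0))
      = ∫ x in {x : EuclideanSpace ℝ (Fin d) | R ≤ ‖x‖}, φ ‖x‖ := by
    apply setIntegral_congr_fun hS
    intro x hx
    have hn : 0 < ‖x‖ := lt_of_lt_of_le hR0 hx
    exact inner_calc d γ hγ0 r₀ hr₀ u hu0 ‖x‖ hn
  have hI2 : (∫ x in {x : EuclideanSpace ℝ (Fin d) | R ≤ ‖x‖}, φ ‖x‖)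
      = ∫ x : EuclideanSpace ℝ (Fin d), F ‖x‖ := by
    rw [← integral_indicator hS]
    apply integral_congr_ae
    filter_upwards with x
    by_cases h : R ≤ ‖x‖ <;>
      simp [hF_def, Set.indicator_apply, Set.mem_setOf_eq, h]
  have hrad := MeasureTheory.integral_fun_norm_addHaar
    (volume : Measure (EuclideanSpace ℝ (Fin d))) F
  rw [finrank_euclideanSpace_fin, measureReal_def, ← hκ_def, nsmul_eq_mul, smul_eq_mul, ← mul_assoc] at hrad
  -- the radial integral as an integral over (R, ∞)
  have hJ : (∫ y in Ioi (0:ℝ), y ^ (d - 1) • F y)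
      = ∫ y in Ioi R, y ^ (d - 1) * φ y := by
    have e1 : (fun y : ℝ => y ^ (d - 1) • F y)
        = fun y => (Ici R).indicator (fun y => y ^ (d - 1) * φ y) y := by
      funext y
      by_cases h : R ≤ y <;>
        simp [hF_def, Set.indicator_apply, Set.mem_Ici, h]
    have hsub : Ioi (0:ℝ) ∩ Ici R = Ici R :=
      Set.inter_eq_right.2 (fun y hy => lt_of_lt_of_le hR0 hy)
    rw [e1, setIntegral_indicator measurableSet_Ici, hsub, integral_Ici_eq_integral_Ioi]
  -- 1d integrability and bounds
  have hs_lt : (d:ℝ) - 1 - p < -1 := by linarith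
  have hcast : ((d - 1 : ℕ) : ℝ) = (d:ℝ) - 1 := by
    rw [Nat.cast_sub hd, Nat.cast_one]
  have hInt0 : IntegrableOn (fun y : ℝ => y ^ ((d:ℝ) - 1 - p)) (Ioi R) :=
    integrableOn_Ioi_rpow_of_lt hs_lt hR0
  have hInt1 : IntegrableOn (fun y : ℝ => a * y ^ ((d:ℝ) - 1 - p)) (Ioi R) :=
    hInt0.const_mul a
  have hφnn : ∀ y : ℝ, 0 < y → 0 ≤ φ y := by
    intro y hy
    apply le_min _ zero_le_one
    exact mul_nonneg (inv_nonneg.2 hu0.le)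
      (mul_nonneg (rpow_nonneg hr₀.le _) (rpow_nonneg hy.le _))
  have hbound : ∀ y ∈ Ioi R, y ^ (d - 1) * φ y ≤ a * y ^ ((d:ℝ) - 1 - p) := by
    intro y hy
    have hy0 : 0 < y := lt_trans hR0 hy
    have e : (y:ℝ) ^ (d - 1) * (u⁻¹ * (r₀ ^ (1/γ) * y ^ (-p))) = a * y ^ ((d:ℝ) - 1 - p) := by
      have e2 : ((d:ℝ) - 1) + (-p) = (d:ℝ) - 1 - p := by ring
      rw [ha_def, ← Real.rpow_natCast y (d - 1), hcast, ← e2, Real.rpow_add hy0]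
      ring
    calc y ^ (d - 1) * φ y ≤ y ^ (d - 1) * (u⁻¹ * (r₀ ^ (1/γ) * y ^ (-p))) :=
        mul_le_mul_of_nonneg_left (min_le_left _ _) (pow_nonneg hy0.le _)
      _ = a * y ^ ((d:ℝ) - 1 - p) := e
  have hg_meas : Measurable (fun y : ℝ => y ^ (d - 1) * φ y) := by
    rw [hφ_def]; fun_prop
  have hg_int : IntegrableOn (fun y : ℝ => y ^ (d - 1) * φ y) (Ioi R) := by
    apply Integrable.mono hInt1 hg_meas.aestronglyMeasurable
    rw [ae_restrict_iff' measurableSet_Ioi]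
    filter_upwards with y hy
    have hy0 : 0 < y := lt_trans hR0 hy
    rw [Real.norm_of_nonneg (mul_nonneg (pow_nonneg hy0.le _) (hφnn y hy0)),
      Real.norm_of_nonneg (mul_nonneg ha0.le (rpow_nonneg hy0.le _))]
    exact hbound y hy
  -- upper bound for the radial integral
  have hJ_upper : (∫ y in Ioi R, y ^ (d - 1) * φ y)
      ≤ a * (R ^ ((d:ℝ) - p) / (p - (d:ℝ))) := by
    calc (∫ y in Ioi R, y ^ (d - 1) * φ y)
        ≤ ∫ y in Ioi R, a * y ^ ((d:ℝ) - 1 - p) :=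
          setIntegral_mono_on hg_int hInt1 measurableSet_Ioi hbound
      _ = a * ∫ y in Ioi R, y ^ ((d:ℝ) - 1 - p) := integral_const_mul a _
      _ = a * (R ^ ((d:ℝ) - p) / (p - (d:ℝ))) := by
          rw [integral_Ioi_rpow_of_lt hs_lt hR0]
          congr 1
          have h2 : (d:ℝ) - 1 - p + 1 = (d:ℝ) - p := by ring
          rw [h2, div_eq_div_iff (by linarith : (d:ℝ) - p ≠ 0) (by linarith : p - (d:ℝ) ≠ 0)]
          ring
  -- lower bound for the radial integral
  have hp0 : (0:ℝ) < p := lt_trans hd0 hdp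
  have hφmin : ∀ y ∈ Ioc R (2*R),
      R ^ (d - 1) * min (a * (2*R) ^ (-p)) 1 ≤ y ^ (d - 1) * φ y := by
    intro y hy
    have hy0 : 0 < y := lt_trans hR0 hy.1
    have h1 : R ^ (d - 1) ≤ y ^ (d - 1) := pow_le_pow_left₀ hR0.le hy.1.le _
    have h3 : (2*R) ^ (-p) ≤ y ^ (-p) :=
      Real.rpow_le_rpow_of_nonpos hy0 hy.2 (neg_nonpos.2 hp0.le)
    have h2 : a * (2*R) ^ (-p) ≤ u⁻¹ * (r₀ ^ (1/γ) * y ^ (-p)) := by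
      rw [ha_def, mul_assoc]
      exact mul_le_mul_of_nonneg_left
        (mul_le_mul_of_nonneg_left h3 (rpow_nonneg hr₀.le _)) (inv_nonneg.2 hu0.le)
    have h2' : min (a * (2*R) ^ (-p)) 1 ≤ φ y := min_le_min h2 le_rfl
    have hmnn : 0 ≤ min (a * (2*R) ^ (-p)) 1 :=
      le_min (mul_nonneg ha0.le (rpow_nonneg (by linarith) _)) zero_le_one
    exact mul_le_mul h1 h2' hmnn (pow_nonneg hy0.le _)
  have hg_nonneg : 0 ≤ᵐ[volume.restrict (Ioi R)] fun y : ℝ => y ^ (d - 1) * φ y := by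
    filter_upwards [ae_restrict_mem measurableSet_Ioi] with y hy
    exact mul_nonneg (pow_nonneg (lt_trans hR0 hy).le _) (hφnn y (lt_trans hR0 hy))
  have hJ_lower : R ^ (d - 1) * min (a * (2*R) ^ (-p)) 1 * R
      ≤ ∫ y in Ioi R, y ^ (d - 1) * φ y := by
    have hIoc : IntegrableOn (fun y : ℝ => y ^ (d - 1) * φ y) (Ioc R (2*R)) :=
      hg_int.mono_set Ioc_subset_Ioi_self
    have step1 : (∫ _ in Ioc R (2*R), (R ^ (d - 1) * min (a * (2*R) ^ (-p)) 1 : ℝ))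
        ≤ ∫ y in Ioc R (2*R), y ^ (d - 1) * φ y :=
      setIntegral_mono_on
        (integrableOn_const (by rw [Real.volume_Ioc]; exact ENNReal.ofReal_ne_top))
        hIoc measurableSet_Ioc hφmin
    have step2 : (∫ y in Ioc R (2*R), y ^ (d - 1) * φ y)
        ≤ ∫ y in Ioi R, y ^ (d - 1) * φ y :=
      setIntegral_mono_set hg_int hg_nonneg (HasSubset.Subset.eventuallyLE Ioc_subset_Ioi_self)
    have hvol : (∫ _ in Ioc R (2*R), (R ^ (d - 1) * min (a * (2*R) ^ (-p)) 1 : ℝ))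
        = R ^ (d - 1) * min (a * (2*R) ^ (-p)) 1 * R := by
      rw [setIntegral_const, measureReal_def, Real.volume_Ioc, ENNReal.toReal_ofReal (by linarith), smul_eq_mul]
      ring
    linarith
  -- collect: the original integral equals d κ J
  have hIeq : (∫ x in {x : EuclideanSpace ℝ (Fin d) | R ≤ ‖x‖},
      ∫ v in Ioc (0:ℝ) 1, (if ‖x‖ ^ d * (u * v) ^ γ ≤ r₀ then (1:ℝ) else 0))
      = (d:ℝ) * κ * ∫ y in Ioi R, y ^ (d - 1) * φ y := by
    rw [hI1, hI2, hrad, hJ]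
  -- algebraic identities
  have hRd : (R:ℝ) ^ (d - 1) * R = R ^ d := by
    rw [← pow_succ]
    congr 1
    omega
  have hRdpos : (0:ℝ) < R ^ d := pow_pos hR0 d
  have hRd1 : (1:ℝ) ≤ R ^ d := one_le_pow₀ (by linarith)
  have hRdp : R ^ (-p) * R ^ d = R ^ ((d:ℝ) - p) := by
    rw [← Real.rpow_natCast R d, ← Real.rpow_add hR0]
    congr 1
    ring
  have e2 : R ^ (d - 1) * min (a * (2*R) ^ (-p)) 1 * R = min (K * M) (R ^ d) := by
    have e3 : R ^ (d - 1) * min (a * (2*R) ^ (-p)) 1 * R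
        = R ^ d * min (a * (2*R) ^ (-p)) 1 := by rw [← hRd]; ring
    rw [e3, mul_min_of_nonneg _ _ hRdpos.le, mul_one]
    congr 1
    rw [Real.mul_rpow two_pos.le hR0.le, hK_def, hM_def, ha_def, ← hRdp]
    ring
  have hmM : (0:ℝ) ≤ min M 1 := le_min hM0 zero_le_one
  constructor
  · -- lower bound
    apply le_min
    · rw [hIeq]
      calc min c₁ 1 * min M 1 ≤ c₁ * min M 1 :=
          mul_le_mul_of_nonneg_right (min_le_left _ _) hmM
        _ = (d:ℝ) * κ * (min K 1 * min M 1) := by rw [hc₁_def]; ring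
        _ ≤ (d:ℝ) * κ * (R ^ (d - 1) * min (a * (2*R) ^ (-p)) 1 * R) := by
            apply mul_le_mul_of_nonneg_left _ (mul_nonneg hd0.le hκ0.le)
            rw [e2]
            exact aux_le_min_mul hK0.le hM0 hRd1
        _ ≤ (d:ℝ) * κ * ∫ y in Ioi R, y ^ (d - 1) * φ y :=
            mul_le_mul_of_nonneg_left hJ_lower (mul_nonneg hd0.le hκ0.le)
    · exact mul_le_one₀ (min_le_right _ _) hmM (min_le_right _ _)
  · -- upper bound
    have hub : (∫ x in {x : EuclideanSpace ℝ (Fin d) | R ≤ ‖x‖},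
        ∫ v in Ioc (0:ℝ) 1, (if ‖x‖ ^ d * (u * v) ^ γ ≤ r₀ then (1:ℝ) else 0))
        ≤ C₁ * M := by
      rw [hIeq]
      calc (d:ℝ) * κ * ∫ y in Ioi R, y ^ (d - 1) * φ y
          ≤ (d:ℝ) * κ * (a * (R ^ ((d:ℝ) - p) / (p - (d:ℝ)))) :=
            mul_le_mul_of_nonneg_left hJ_upper (mul_nonneg hd0.le hκ0.le)
        _ = C₁ * M := by
            rw [hC₁_def, ha_def, hM_def]
            field_simp
    calc min (∫ x in {x : EuclideanSpace ℝ (Fin d) | R ≤ ‖x‖},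
        ∫ v in Ioc (0:ℝ) 1, (if ‖x‖ ^ d * (u * v) ^ γ ≤ r₀ then (1:ℝ) else 0)) 1
        ≤ min (C₁ * M) 1 := min_le_min hub le_rfl
      _ ≤ max C₁ 1 * min M 1 := aux_min_mul_le hC₁0 hM0
end

section
/- Let d ≥ 1 be an integer, let 0 < γ < 1, let 1 < δ < 1/γ, and let ρ be a soft profile with decay exponent δ. Then there exist constants 0 < c' ≤ C' < ∞ (depending only on d, γ, δ and the constants in the definition of ρ) such that for every u ∈ (0,1], every r ≥ 1 and every x ∈ ℝ^d with |x| = R ≥ 2r, one has c'·r^d·min(u^{−γδ} R^{−dδ}, 1) ≤ ∫_{B(0,r)} ∫_0^1 ρ(|x−y|^d (u v)^γ) dv dy ≤ C'·r^d·min(u^{−γδ} R^{−dδ}, 1). -/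
open MeasureTheory Real Set

set_option maxHeartbeats 1000000

private lemma min_scale {t q L : ℝ} (hL : 1 ≤ L) (h : t ≤ L * q) :
    min t 1 ≤ L * min q 1 := by
  rcases le_total q 1 with h1 | h1
  · rw [min_eq_left h1]; exact (min_le_left t 1).trans h
  · rw [min_eq_right h1, mul_one]; exact (min_le_right t 1).trans hL

/-- One-edge connection probability from a fixed vertex `(x,u)` with `|x| = R ≥ 2r` to the
ball `B(0,r)`, soft profile, regime `1 < δ < 1/γ`: the expected number of direct
connections is of order `r^d · min(u^{-γδ} R^{-dδ}, 1)`. -/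
theorem stmt_5 (d : ℕ) (hd : 1 ≤ d) (γ δ : ℝ) (hγ0 : 0 < γ) (hγ1 : γ < 1)
    (hδ1 : 1 < δ) (hδ2 : δ < 1 / γ)
    (ρ : ℝ → ℝ) (c C : ℝ) (hc : 0 < c) (hcC : c ≤ C)
    (hρ_range : ∀ x : ℝ, 0 ≤ x → 0 ≤ ρ x ∧ ρ x ≤ 1)
    (hρ_mono : AntitoneOn ρ (Ici (0 : ℝ)))
    (hρ_bound : ∀ x : ℝ, 1 ≤ x → c * x ^ (-δ) ≤ ρ x ∧ ρ x ≤ C * x ^ (-δ)) :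
    ∃ c' C' : ℝ, 0 < c' ∧ c' ≤ C' ∧
      ∀ u r R : ℝ, u ∈ Ioc (0 : ℝ) 1 → 1 ≤ r →
        ∀ x : EuclideanSpace ℝ (Fin d), ‖x‖ = R → 2 * r ≤ R →
      c' * (r ^ d * min (u ^ (-(γ * δ)) * R ^ (-((d : ℝ) * δ))) 1) ≤
          (∫ y in Metric.ball (0 : EuclideanSpace ℝ (Fin d)) r,
              ∫ v in Ioc (0 : ℝ) 1, ρ (‖x - y‖ ^ d * (u * v) ^ γ)) ∧
      (∫ y in Metric.ball (0 : EuclideanSpace ℝ (Fin d)) r,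
              ∫ v in Ioc (0 : ℝ) 1, ρ (‖x - y‖ ^ d * (u * v) ^ γ)) ≤
          C' * (r ^ d * min (u ^ (-(γ * δ)) * R ^ (-((d : ℝ) * δ))) 1) := by
  have hδ0 : 0 < δ := lt_trans one_pos hδ1
  have hs0 : 0 < γ * δ := mul_pos hγ0 hδ0
  have hs1 : γ * δ < 1 := by
    have h := mul_lt_mul_of_pos_left hδ2 hγ0
    rwa [mul_one_div, div_self hγ0.ne'] at h
  have h1s : 0 < 1 - γ * δ := by linarith
  set K : ℝ := max C 1 with hK
  have hK1 : 1 ≤ K := le_max_right _ _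
  set K2 : ℝ := K / (1 - γ * δ) with hK2def
  have hK21 : 1 ≤ K2 := by
    rw [hK2def, le_div_iff₀ h1s]; nlinarith
  set V : ℝ := (volume (Metric.ball (0 : EuclideanSpace ℝ (Fin d)) 1)).toReal with hV
  have hV0 : 0 < V := by
    refine ENNReal.toReal_pos ?_ ?_
    · exact (Metric.measure_ball_pos volume 0 one_pos).ne'
    · exact measure_ball_lt_top.ne
  have hdδ0 : 0 ≤ (d : ℝ) * δ := by positivity
  refine ⟨c * (3 / 2 : ℝ) ^ (-((d : ℝ) * δ)) * V,
    max (c * (3 / 2 : ℝ) ^ (-((d : ℝ) * δ)) * V) (K2 * 2 ^ ((d : ℝ) * δ) * V),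
    by positivity, le_max_left _ _, ?_⟩
  intro u r R hu hr x hx hR
  obtain ⟨hu0, hu1⟩ := hu
  have hr0 : 0 < r := lt_of_lt_of_le one_pos hr
  have hR2 : 2 ≤ R := by nlinarith
  have hR0 : 0 < R := by linarith
  set M : ℝ := min (u ^ (-(γ * δ)) * R ^ (-((d : ℝ) * δ))) 1 with hM
  have hM0 : 0 ≤ M := le_min (by positivity) one_pos.le
  -- the modified profile
  set ρt : ℝ → ℝ := fun t => ρ (max t 0) with hρt
  have hρt_anti : Antitone ρt := fun a b hab =>
    hρ_mono (mem_Ici.2 (le_max_right a 0)) (mem_Ici.2 (le_max_right b 0))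
      (max_le_max hab le_rfl)
  have hρt_meas : Measurable ρt := hρt_anti.measurable
  have hρt_range : ∀ t, 0 ≤ ρt t ∧ ρt t ≤ 1 := fun t => hρ_range _ (le_max_right t 0)
  have hρt_eq : ∀ t : ℝ, 0 ≤ t → ρt t = ρ t := by
    intro t ht; simp only [hρt, max_eq_left ht]
  set F : ℝ → ℝ := fun w => ∫ v in Ioc (0 : ℝ) 1, ρt ((max w 0) ^ d * (u * v) ^ γ) with hF
  have hmeas_inner : ∀ w : ℝ,
      Measurable fun v : ℝ => ρt ((max w 0) ^ d * (u * v) ^ γ) := by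
    intro w
    exact hρt_meas.comp
      (measurable_const.mul (((Real.continuous_rpow_const hγ0.le).comp
        (continuous_const.mul continuous_id)).measurable))
  have hIoc_fin : volume (Ioc (0 : ℝ) 1) < ⊤ := by
    rw [Real.volume_Ioc]; exact ENNReal.ofReal_lt_top
  have hInt : ∀ f : ℝ → ℝ, Measurable f → (∀ t, 0 ≤ f t ∧ f t ≤ 1) →
      IntegrableOn f (Ioc (0 : ℝ) 1) := by
    intro f hm hb
    refine Integrable.mono' (g := fun _ => (1 : ℝ))
      (integrableOn_const hIoc_fin.ne) hm.aestronglyMeasurable ?_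
    exact ae_of_all _ fun v => by
      rw [Real.norm_eq_abs, abs_of_nonneg (hb v).1]; exact (hb v).2
  have hconst : ∀ q : ℝ, (∫ _ in Ioc (0 : ℝ) 1, q) = q := by
    intro q
    rw [setIntegral_const, measureReal_def, Real.volume_Ioc]
    norm_num
  have hconst_int : ∀ q : ℝ, IntegrableOn (fun _ => q) (Ioc (0 : ℝ) 1) := fun q =>
    integrableOn_const hIoc_fin.ne
  have hrpow_int : IntegrableOn (fun v : ℝ => v ^ (-(γ * δ))) (Ioc (0 : ℝ) 1) := by
    have h := intervalIntegral.intervalIntegrable_rpow' (a := 0) (b := 1)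
      (r := -(γ * δ)) (by linarith)
    rwa [intervalIntegrable_iff_integrableOn_Ioc_of_le zero_le_one] at h
  have hrpow_val : (∫ v in Ioc (0 : ℝ) 1, v ^ (-(γ * δ))) = 1 / (1 - γ * δ) := by
    rw [← intervalIntegral.integral_of_le zero_le_one,
      integral_rpow (Or.inl (by linarith)),
      Real.one_rpow, Real.zero_rpow (by linarith)]
    ring_nf
  have hu_pow0 : 0 < u ^ γ := Real.rpow_pos_of_pos hu0 γ
  have hu_pow1 : u ^ γ ≤ 1 := Real.rpow_le_one hu0.le hu1 hγ0.le
  -- inner integral sandwich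
  have hinner : ∀ w : ℝ, 1 ≤ w →
      c * min ((w ^ d * u ^ γ) ^ (-δ)) 1 ≤ F w ∧
      F w ≤ K2 * min ((w ^ d * u ^ γ) ^ (-δ)) 1 := by
    intro w hw1
    have hw0 : 0 < w := lt_of_lt_of_le one_pos hw1
    have hmax : max w 0 = w := max_eq_left hw0.le
    set b : ℝ := w ^ d * u ^ γ with hb
    have hb0 : 0 < b := mul_pos (pow_pos hw0 d) hu_pow0
    have harg : ∀ v ∈ Ioc (0 : ℝ) 1, (max w 0) ^ d * (u * v) ^ γ = b * v ^ γ := by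
      intro v hv
      rw [hmax, Real.mul_rpow hu0.le hv.1.le, hb]; ring
    have hvγpos : ∀ v ∈ Ioc (0 : ℝ) 1, 0 < v ^ γ := fun v hv =>
      Real.rpow_pos_of_pos hv.1 γ
    have hvγle : ∀ v ∈ Ioc (0 : ℝ) 1, v ^ γ ≤ 1 := fun v hv =>
      Real.rpow_le_one hv.1.le hv.2 hγ0.le
    have hFint : IntegrableOn (fun v : ℝ => ρt ((max w 0) ^ d * (u * v) ^ γ))
        (Ioc (0 : ℝ) 1) := hInt _ (hmeas_inner w) fun t => hρt_range _
    constructor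
    · -- lower bound
      have hpt : ∀ v ∈ Ioc (0 : ℝ) 1,
          c * min (b ^ (-δ)) 1 ≤ ρt ((max w 0) ^ d * (u * v) ^ γ) := by
        intro v hv
        rw [harg v hv, hρt_eq _ (mul_nonneg hb0.le (hvγpos v hv).le)]
        rcases le_total b 1 with hble | hbge
        · have h1 : b * v ^ γ ≤ 1 := by nlinarith [hvγle v hv, hvγpos v hv]
          have h2 : ρ 1 ≤ ρ (b * v ^ γ) := hρ_mono
            (mem_Ici.2 (mul_nonneg hb0.le (hvγpos v hv).le))
            (mem_Ici.2 zero_le_one) h1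
          have h3 : c ≤ ρ 1 := by
            have h := (hρ_bound 1 le_rfl).1
            rwa [Real.one_rpow, mul_one] at h
          have hmin : min (b ^ (-δ)) 1 = 1 :=
            min_eq_right (Real.one_le_rpow_of_pos_of_le_one_of_nonpos hb0 hble
              (by linarith))
          rw [hmin, mul_one]; linarith
        · have h1 : b * v ^ γ ≤ b := by nlinarith [hvγle v hv]
          have h2 : ρ b ≤ ρ (b * v ^ γ) := hρ_mono
            (mem_Ici.2 (mul_nonneg hb0.le (hvγpos v hv).le))
            (mem_Ici.2 hb0.le) h1
          have h3 : c * b ^ (-δ) ≤ ρ b := (hρ_bound b hbge).1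
          have hmin : min (b ^ (-δ)) 1 = b ^ (-δ) :=
            min_eq_left (Real.rpow_le_one_of_one_le_of_nonpos hbge (by linarith))
          rw [hmin]; linarith
      calc c * min (b ^ (-δ)) 1 = ∫ _ in Ioc (0 : ℝ) 1, c * min (b ^ (-δ)) 1 :=
            (hconst _).symm
        _ ≤ F w := setIntegral_mono_on (hconst_int _) hFint measurableSet_Ioc hpt
    · -- upper bound
      have hFle1 : F w ≤ 1 := by
        calc F w ≤ ∫ _ in Ioc (0 : ℝ) 1, (1 : ℝ) :=
              setIntegral_mono_on hFint (hconst_int 1) measurableSet_Ioc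
                fun v _ => (hρt_range _).2
          _ = 1 := hconst 1
      have hFleB : F w ≤ K2 * b ^ (-δ) := by
        have hpt : ∀ v ∈ Ioc (0 : ℝ) 1,
            ρt ((max w 0) ^ d * (u * v) ^ γ) ≤ K * b ^ (-δ) * v ^ (-(γ * δ)) := by
          intro v hv
          rw [harg v hv, hρt_eq _ (mul_nonneg hb0.le (hvγpos v hv).le)]
          have hargpos : 0 < b * v ^ γ := mul_pos hb0 (hvγpos v hv)
          have hsplit : (b * v ^ γ) ^ (-δ) = b ^ (-δ) * v ^ (-(γ * δ)) := by
            rw [Real.mul_rpow hb0.le (hvγpos v hv).le, ← Real.rpow_mul hv.1.le,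
              mul_neg]
          rcases le_total 1 (b * v ^ γ) with h1 | h1
          · calc ρ (b * v ^ γ) ≤ C * (b * v ^ γ) ^ (-δ) := (hρ_bound _ h1).2
              _ ≤ K * (b * v ^ γ) ^ (-δ) :=
                mul_le_mul_of_nonneg_right (le_max_left _ _)
                  (Real.rpow_nonneg hargpos.le _)
              _ = K * b ^ (-δ) * v ^ (-(γ * δ)) := by rw [hsplit]; ring
          · have h2 : (1 : ℝ) ≤ (b * v ^ γ) ^ (-δ) :=
              Real.one_le_rpow_of_pos_of_le_one_of_nonpos hargpos h1 (by linarith)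
            calc ρ (b * v ^ γ) ≤ 1 := (hρ_range _ hargpos.le).2
              _ ≤ (b * v ^ γ) ^ (-δ) := h2
              _ ≤ K * (b * v ^ γ) ^ (-δ) :=
                le_mul_of_one_le_left (Real.rpow_nonneg hargpos.le _) hK1
              _ = K * b ^ (-δ) * v ^ (-(γ * δ)) := by rw [hsplit]; ring
        have h := setIntegral_mono_on hFint
          ((hrpow_int.const_mul (K * b ^ (-δ)))) measurableSet_Ioc hpt
        rw [MeasureTheory.integral_const_mul, hrpow_val] at h
        calc F w ≤ K * b ^ (-δ) * (1 / (1 - γ * δ)) := h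
          _ = K2 * b ^ (-δ) := by rw [hK2def]; ring
      rcases le_total (b ^ (-δ)) 1 with hm | hm
      · rw [min_eq_left hm]; exact hFleB
      · rw [min_eq_right hm, mul_one]
        exact hFle1.trans hK21
  -- rewrite exponent
  have hMexp : ∀ w : ℝ, 0 < w →
      (w ^ d * u ^ γ) ^ (-δ) = w ^ (-((d : ℝ) * δ)) * u ^ (-(γ * δ)) := by
    intro w hw
    rw [Real.mul_rpow (pow_pos hw d).le hu_pow0.le, ← Real.rpow_natCast w d,
      ← Real.rpow_mul hw.le, ← Real.rpow_mul hu0.le, mul_neg, mul_neg]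
  -- pointwise estimates on the ball
  have h2pow1 : (1 : ℝ) ≤ (2 : ℝ) ^ ((d : ℝ) * δ) :=
    Real.one_le_rpow one_le_two hdδ0
  have h32pow1 : (1 : ℝ) ≤ (3 / 2 : ℝ) ^ ((d : ℝ) * δ) :=
    Real.one_le_rpow (by norm_num) hdδ0
  have h32cancel : (3 / 2 : ℝ) ^ (-((d : ℝ) * δ)) * (3 / 2 : ℝ) ^ ((d : ℝ) * δ) = 1 := by
    rw [← Real.rpow_add (by norm_num : (0 : ℝ) < 3 / 2)]
    simp
  have houter : ∀ y ∈ Metric.ball (0 : EuclideanSpace ℝ (Fin d)) r,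
      c * (3 / 2 : ℝ) ^ (-((d : ℝ) * δ)) * M ≤ F ‖x - y‖ ∧
      F ‖x - y‖ ≤ K2 * 2 ^ ((d : ℝ) * δ) * M := by
    intro y hy
    have hyr : ‖y‖ < r := by simpa using hy
    have hw1 : R / 2 ≤ ‖x - y‖ := by
      have h := norm_sub_norm_le x y
      rw [hx] at h
      linarith
    have hw2 : ‖x - y‖ ≤ 3 / 2 * R := by
      have h := norm_sub_le x y
      rw [hx] at h
      linarith
    have hwge1 : 1 ≤ ‖x - y‖ := by linarith
    have hwpos : 0 < ‖x - y‖ := by linarith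
    obtain ⟨hlo, hhi⟩ := hinner ‖x - y‖ hwge1
    rw [hMexp _ hwpos] at hlo hhi
    -- upper transition
    have hwR_up : ‖x - y‖ ^ (-((d : ℝ) * δ)) ≤
        2 ^ ((d : ℝ) * δ) * R ^ (-((d : ℝ) * δ)) := by
      have h1 : ‖x - y‖ ^ (-((d : ℝ) * δ)) ≤ (R / 2) ^ (-((d : ℝ) * δ)) :=
        Real.rpow_le_rpow_of_nonpos (by positivity) hw1 (by linarith)
      have h2 : (R / 2) ^ (-((d : ℝ) * δ)) =
          2 ^ ((d : ℝ) * δ) * R ^ (-((d : ℝ) * δ)) := by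
        rw [Real.div_rpow hR0.le (by norm_num : (0 : ℝ) ≤ 2), div_eq_mul_inv,
          ← Real.rpow_neg (by norm_num : (0 : ℝ) ≤ 2), neg_neg, mul_comm]
      linarith [h1, h2.le]
    have hup : min (‖x - y‖ ^ (-((d : ℝ) * δ)) * u ^ (-(γ * δ))) 1 ≤
        2 ^ ((d : ℝ) * δ) * M := by
      refine min_scale h2pow1 ?_
      calc ‖x - y‖ ^ (-((d : ℝ) * δ)) * u ^ (-(γ * δ))
          ≤ 2 ^ ((d : ℝ) * δ) * R ^ (-((d : ℝ) * δ)) * u ^ (-(γ * δ)) :=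
            mul_le_mul_of_nonneg_right hwR_up (Real.rpow_nonneg hu0.le _)
        _ = 2 ^ ((d : ℝ) * δ) * (u ^ (-(γ * δ)) * R ^ (-((d : ℝ) * δ))) := by ring
    -- lower transition
    have hwR_lo : R ^ (-((d : ℝ) * δ)) ≤
        (3 / 2 : ℝ) ^ ((d : ℝ) * δ) * ‖x - y‖ ^ (-((d : ℝ) * δ)) := by
      have h1 : (3 / 2 * R) ^ (-((d : ℝ) * δ)) ≤ ‖x - y‖ ^ (-((d : ℝ) * δ)) :=
        Real.rpow_le_rpow_of_nonpos hwpos hw2 (by linarith)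
      have h2 : (3 / 2 * R) ^ (-((d : ℝ) * δ)) =
          (3 / 2 : ℝ) ^ (-((d : ℝ) * δ)) * R ^ (-((d : ℝ) * δ)) :=
        Real.mul_rpow (by norm_num) hR0.le
      rw [h2] at h1
      calc R ^ (-((d : ℝ) * δ))
          = (3 / 2 : ℝ) ^ ((d : ℝ) * δ) *
              ((3 / 2 : ℝ) ^ (-((d : ℝ) * δ)) * R ^ (-((d : ℝ) * δ))) := by
            rw [← mul_assoc, mul_comm ((3 / 2 : ℝ) ^ ((d : ℝ) * δ)), h32cancel, one_mul]
        _ ≤ (3 / 2 : ℝ) ^ ((d : ℝ) * δ) * ‖x - y‖ ^ (-((d : ℝ) * δ)) :=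
            mul_le_mul_of_nonneg_left h1 (by positivity)
    have hlo2 : M ≤ (3 / 2 : ℝ) ^ ((d : ℝ) * δ) *
        min (‖x - y‖ ^ (-((d : ℝ) * δ)) * u ^ (-(γ * δ))) 1 := by
      refine min_scale h32pow1 ?_
      calc u ^ (-(γ * δ)) * R ^ (-((d : ℝ) * δ))
          ≤ u ^ (-(γ * δ)) *
              ((3 / 2 : ℝ) ^ ((d : ℝ) * δ) * ‖x - y‖ ^ (-((d : ℝ) * δ))) :=
            mul_le_mul_of_nonneg_left hwR_lo (Real.rpow_nonneg hu0.le _)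
        _ = (3 / 2 : ℝ) ^ ((d : ℝ) * δ) *
              (‖x - y‖ ^ (-((d : ℝ) * δ)) * u ^ (-(γ * δ))) := by ring
    constructor
    · calc c * (3 / 2 : ℝ) ^ (-((d : ℝ) * δ)) * M
          ≤ c * (3 / 2 : ℝ) ^ (-((d : ℝ) * δ)) *
            ((3 / 2 : ℝ) ^ ((d : ℝ) * δ) *
              min (‖x - y‖ ^ (-((d : ℝ) * δ)) * u ^ (-(γ * δ))) 1) :=
            mul_le_mul_of_nonneg_left hlo2 (by positivity)
        _ = c * min (‖x - y‖ ^ (-((d : ℝ) * δ)) * u ^ (-(γ * δ))) 1 := by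
            rw [mul_assoc c, ← mul_assoc ((3 / 2 : ℝ) ^ (-((d : ℝ) * δ))), h32cancel,
              one_mul]
        _ ≤ F ‖x - y‖ := hlo
    · calc F ‖x - y‖ ≤ K2 * min (‖x - y‖ ^ (-((d : ℝ) * δ)) * u ^ (-(γ * δ))) 1 := hhi
        _ ≤ K2 * (2 ^ ((d : ℝ) * δ) * M) :=
            mul_le_mul_of_nonneg_left hup (by linarith)
        _ = K2 * 2 ^ ((d : ℝ) * δ) * M := by ring
  -- F ∘ norm : measurable and bounded
  have hF01 : ∀ w : ℝ, 0 ≤ F w ∧ F w ≤ 1 := by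
    intro w
    constructor
    · exact setIntegral_nonneg measurableSet_Ioc fun v _ => (hρt_range _).1
    · calc F w ≤ ∫ _ in Ioc (0 : ℝ) 1, (1 : ℝ) :=
          setIntegral_mono_on (hInt _ (hmeas_inner w) fun t => hρt_range _)
            (hconst_int 1) measurableSet_Ioc fun v _ => (hρt_range _).2
        _ = 1 := hconst 1
  have hFanti : Antitone F := by
    intro w1 w2 h12
    refine setIntegral_mono_on (hInt _ (hmeas_inner w2) fun t => hρt_range _)
      (hInt _ (hmeas_inner w1) fun t => hρt_range _) measurableSet_Ioc ?_
    intro v hv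
    apply hρt_anti
    apply mul_le_mul_of_nonneg_right
    · exact pow_le_pow_left₀ (le_max_right w1 0) (max_le_max h12 le_rfl) d
    · exact Real.rpow_nonneg (mul_nonneg hu0.le hv.1.le) _
  have hFnorm_meas : Measurable fun y : EuclideanSpace ℝ (Fin d) => F ‖x - y‖ :=
    hFanti.measurable.comp ((continuous_const.sub continuous_id).norm.measurable)
  have hFnorm_int : IntegrableOn (fun y : EuclideanSpace ℝ (Fin d) => F ‖x - y‖)
      (Metric.ball (0 : EuclideanSpace ℝ (Fin d)) r) := by
    refine Integrable.mono' (g := fun _ => (1 : ℝ))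
      (integrableOn_const measure_ball_lt_top.ne)
      hFnorm_meas.aestronglyMeasurable ?_
    exact ae_of_all _ fun y => by
      rw [Real.norm_eq_abs, abs_of_nonneg (hF01 _).1]; exact (hF01 _).2
  -- identify the integrand with F
  have hIeq : (∫ y in Metric.ball (0 : EuclideanSpace ℝ (Fin d)) r,
      ∫ v in Ioc (0 : ℝ) 1, ρ (‖x - y‖ ^ d * (u * v) ^ γ)) =
      ∫ y in Metric.ball (0 : EuclideanSpace ℝ (Fin d)) r, F ‖x - y‖ := by
    refine integral_congr_ae (ae_of_all _ fun y => ?_)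
    simp only [hF]
    refine setIntegral_congr_fun measurableSet_Ioc fun v hv => ?_
    have h0 : (0 : ℝ) ≤ ‖x - y‖ ^ d * (u * v) ^ γ :=
      mul_nonneg (pow_nonneg (norm_nonneg _) d)
        (Real.rpow_nonneg (mul_nonneg hu0.le hv.1.le) γ)
    rw [max_eq_left (norm_nonneg (x - y))]
    exact (hρt_eq _ h0).symm
  -- volume of the ball
  have hvol : (volume (Metric.ball (0 : EuclideanSpace ℝ (Fin d)) r)).toReal =
      r ^ d * V := by
    have hnt : Nontrivial (EuclideanSpace ℝ (Fin d)) := by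
      haveI : Nonempty (Fin d) := ⟨⟨0, hd⟩⟩
      exact inferInstance
    rw [Measure.addHaar_ball volume (0 : EuclideanSpace ℝ (Fin d)) hr0.le,
      finrank_euclideanSpace_fin, ENNReal.toReal_mul,
      ENNReal.toReal_ofReal (by positivity)]
  rw [hIeq]
  have hball_meas : MeasurableSet (Metric.ball (0 : EuclideanSpace ℝ (Fin d)) r) :=
    measurableSet_ball
  constructor
  · calc c * (3 / 2 : ℝ) ^ (-((d : ℝ) * δ)) * V * (r ^ d * M)
        = (volume (Metric.ball (0 : EuclideanSpace ℝ (Fin d)) r)).toReal •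
            (c * (3 / 2 : ℝ) ^ (-((d : ℝ) * δ)) * M) := by
          rw [hvol, smul_eq_mul]; ring
      _ = ∫ _ in Metric.ball (0 : EuclideanSpace ℝ (Fin d)) r,
            (c * (3 / 2 : ℝ) ^ (-((d : ℝ) * δ)) * M) := (setIntegral_const _).symm
      _ ≤ ∫ y in Metric.ball (0 : EuclideanSpace ℝ (Fin d)) r, F ‖x - y‖ :=
          setIntegral_mono_on (integrableOn_const measure_ball_lt_top.ne)
            hFnorm_int hball_meas fun y hy => (houter y hy).1
  · calc (∫ y in Metric.ball (0 : EuclideanSpace ℝ (Fin d)) r, F ‖x - y‖)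
        ≤ ∫ _ in Metric.ball (0 : EuclideanSpace ℝ (Fin d)) r,
            (K2 * 2 ^ ((d : ℝ) * δ) * M) :=
          setIntegral_mono_on hFnorm_int
            (integrableOn_const measure_ball_lt_top.ne) hball_meas
            fun y hy => (houter y hy).2
      _ = (volume (Metric.ball (0 : EuclideanSpace ℝ (Fin d)) r)).toReal •
            (K2 * 2 ^ ((d : ℝ) * δ) * M) := setIntegral_const _
      _ = (K2 * 2 ^ ((d : ℝ) * δ) * V) * (r ^ d * M) := by
          rw [hvol, smul_eq_mul]; ring
      _ ≤ max (c * (3 / 2 : ℝ) ^ (-((d : ℝ) * δ)) * V)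
            (K2 * 2 ^ ((d : ℝ) * δ) * V) * (r ^ d * M) := by
          apply mul_le_mul_of_nonneg_right (le_max_right _ _)
          positivity
end

section
/- Let d ≥ 1 be an integer, let 0 < γ < 1, let δ > 1/γ, and let ρ be a soft profile with decay exponent δ. Then there exist constants 0 < c' ≤ C' < ∞ (depending only on d, γ, δ and the constants in the definition of ρ) such that for every u ∈ (0,1], every r ≥ 1 and every x ∈ ℝ^d with |x| = R ≥ 2r, one has c'·r^d·min(u^{−1} R^{−d/γ}, 1) ≤ ∫_{B(0,r)} ∫_0^1 ρ(|x−y|^d (u v)^γ) dv dy ≤ C'·r^d·min(u^{−1} R^{−d/γ}, 1). -/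
open MeasureTheory Real Set


-- integrability of bounded measurable fn on finite measure set
lemma aux_integrableOn {f : ℝ → ℝ} (hm : Measurable f)
    (hb : ∀ t, 0 ≤ f t ∧ f t ≤ 1) (a b : ℝ) :
    IntegrableOn f (Ioc a b) volume := by
  apply Integrable.mono' (g := fun _ => (1:ℝ))
  · exact integrableOn_const (by simp [Real.volume_Ioc])
  · exact hm.aestronglyMeasurable.restrict
  · filter_upwards with t
    rw [Real.norm_eq_abs, abs_le]
    exact ⟨by linarith [(hb t).1], (hb t).2⟩

lemma inner_est {γ δ c C : ℝ} (hγ0 : 0 < γ) (hδ : 1 / γ < δ)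
    (ρt : ℝ → ℝ) (hc : 0 < c)
    (hrange : ∀ t, 0 ≤ ρt t ∧ ρt t ≤ 1)
    (hmono : Antitone ρt)
    (hbound : ∀ t, 1 ≤ t → c * t ^ (-δ) ≤ ρt t ∧ ρt t ≤ C * t ^ (-δ))
    {u : ℝ} (hu : u ∈ Ioc (0:ℝ) 1) {w : ℝ} (hw : 1 ≤ w) :
    c * min 1 (w ^ (-(1/γ)) / u) ≤ (∫ v in Ioc (0:ℝ) 1, ρt (w * (u*v)^γ)) ∧
    (∫ v in Ioc (0:ℝ) 1, ρt (w * (u*v)^γ)) ≤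
      (1 + C / (γ*δ - 1)) * min 1 (w ^ (-(1/γ)) / u) := by
  obtain ⟨hu0, hu1⟩ := hu
  have hγne : γ ≠ 0 := ne_of_gt hγ0
  have hβ : 1 < γ * δ := by
    rw [div_lt_iff₀ hγ0] at hδ; nlinarith
  have hC : 0 < C := lt_of_lt_of_le hc (by
    have h1 := (hbound 1 le_rfl).1
    have h2 := (hbound 1 le_rfl).2
    simp [Real.one_rpow] at h1 h2
    linarith)
  have hw0 : (0:ℝ) < w := lt_of_lt_of_le one_pos hw
  set a : ℝ := w ^ (-(1/γ)) with ha
  have ha0 : 0 < a := Real.rpow_pos_of_pos hw0 _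
  have ha1 : a ≤ 1 := Real.rpow_le_one_of_one_le_of_nonpos hw
    (by rw [neg_nonpos]; positivity)
  set v₀ : ℝ := min 1 (a/u) with hv₀
  have hv₀0 : 0 < v₀ := lt_min one_pos (div_pos ha0 hu0)
  have hv₀1 : v₀ ≤ 1 := min_le_left _ _
  have haγ : a ^ γ = w⁻¹ := by
    rw [ha, ← Real.rpow_mul hw0.le]
    rw [show -(1/γ) * γ = -1 by field_simp, Real.rpow_neg_one]
  set f : ℝ → ℝ := fun v => ρt (w * (u*v)^γ) with hf
  have hfm : Measurable f := by
    apply hmono.measurable.comp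
    exact (measurable_const.mul (((continuous_const.mul continuous_id).rpow_const
      (fun v => Or.inr hγ0.le)).measurable))
  have hfb : ∀ t, 0 ≤ f t ∧ f t ≤ 1 := fun t => hrange _
  have hfi1 : IntegrableOn f (Ioc 0 1) volume := aux_integrableOn hfm hfb 0 1
  have hfi0 : IntegrableOn f (Ioc 0 v₀) volume := aux_integrableOn hfm hfb 0 v₀
  have hfi2 : IntegrableOn f (Ioc v₀ 1) volume := aux_integrableOn hfm hfb v₀ 1
  -- pointwise lower bound on Ioc 0 v₀
  have hptA : ∀ v ∈ Ioc (0:ℝ) v₀, c ≤ f v := by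
    intro v hv
    have hv0 : 0 < v := hv.1
    have huv0 : 0 < u * v := mul_pos hu0 hv0
    have h1 : u * v ≤ a := by
      calc u * v ≤ u * (a/u) := by
            apply mul_le_mul_of_nonneg_left (le_trans hv.2 (min_le_right _ _)) hu0.le
        _ = a := by field_simp
    have h2 : (u*v)^γ ≤ a^γ := Real.rpow_le_rpow huv0.le h1 hγ0.le
    have harg : w * (u*v)^γ ≤ 1 := by
      calc w * (u*v)^γ ≤ w * a^γ := by nlinarith
        _ = 1 := by rw [haγ]; field_simp
    have harg0 : 0 ≤ w * (u*v)^γ :=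
      mul_nonneg hw0.le (Real.rpow_nonneg huv0.le _)
    have hρ1 : c ≤ ρt 1 := by
      have := (hbound 1 le_rfl).1; simpa [Real.one_rpow] using this
    exact le_trans hρ1 (hmono harg)
  -- pointwise upper bound on Ioc v₀ 1
  have hptB : ∀ v ∈ Ioc v₀ (1:ℝ), f v ≤ C * v₀^(γ*δ) * v^(-(γ*δ)) := by
    intro v hv
    have hv0 : 0 < v := lt_trans hv₀0 hv.1
    have huv0 : 0 < u * v := mul_pos hu0 hv0
    have hau : a/u < 1 := by
      by_contra h
      push_neg at h
      have : v₀ = 1 := min_eq_left h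
      have := hv.1; have := hv.2; linarith
    have hv₀eq : v₀ = a/u := min_eq_right hau.le
    have h1 : a ≤ u * v := by
      have : a/u < v := by rw [← hv₀eq]; exact hv.1
      calc a = u * (a/u) := by field_simp
        _ ≤ u * v := mul_le_mul_of_nonneg_left this.le hu0.le
    have h2 : a^γ ≤ (u*v)^γ := Real.rpow_le_rpow ha0.le h1 hγ0.le
    have harg : 1 ≤ w * (u*v)^γ := by
      have : w * a^γ = 1 := by rw [haγ]; field_simp
      nlinarith
    have hb2 := (hbound _ harg).2
    have heq : (w * (u*v)^γ) ^ (-δ) = v₀^(γ*δ) * v^(-(γ*δ)) := by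
      rw [Real.mul_rpow hw0.le (Real.rpow_nonneg huv0.le _),
        ← Real.rpow_mul huv0.le, Real.mul_rpow hu0.le hv0.le, hv₀eq,
        Real.div_rpow ha0.le hu0.le, ha, ← Real.rpow_mul hw0.le,
        show -(1/γ)*(γ*δ) = -δ by field_simp,
        show γ * -δ = -(γ*δ) by ring, Real.rpow_neg hu0.le]
      ring
    rw [heq] at hb2
    calc f v ≤ C * (v₀^(γ*δ) * v^(-(γ*δ))) := hb2
      _ = C * v₀^(γ*δ) * v^(-(γ*δ)) := by ring
  constructor
  · -- lower bound
    have h1 : ∫ v in Ioc (0:ℝ) v₀, f v ≤ ∫ v in Ioc (0:ℝ) 1, f v := by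
      apply setIntegral_mono_set hfi1
      · exact Filter.Eventually.of_forall fun t => (hfb t).1
      · exact HasSubset.Subset.eventuallyLE (Ioc_subset_Ioc_right hv₀1)
    have h2 : c * v₀ ≤ ∫ v in Ioc (0:ℝ) v₀, f v := by
      have := setIntegral_mono_on
        (integrableOn_const (by simp [Real.volume_Ioc]))
        hfi0 measurableSet_Ioc hptA
      rwa [setIntegral_const, measureReal_def, Real.volume_Ioc, smul_eq_mul, sub_zero,
        ENNReal.toReal_ofReal hv₀0.le, mul_comm] at this
    exact le_trans h2 h1
  · -- upper bound
    have hsplit : Ioc (0:ℝ) 1 = Ioc 0 v₀ ∪ Ioc v₀ 1 :=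
      (Ioc_union_Ioc_eq_Ioc hv₀0.le hv₀1).symm
    have hsum : ∫ v in Ioc (0:ℝ) 1, f v
        = (∫ v in Ioc (0:ℝ) v₀, f v) + ∫ v in Ioc v₀ 1, f v := by
      rw [hsplit]
      exact setIntegral_union (Ioc_disjoint_Ioc_of_le le_rfl) measurableSet_Ioc hfi0 hfi2
    have hA : ∫ v in Ioc (0:ℝ) v₀, f v ≤ v₀ := by
      have := setIntegral_mono_on hfi0
        (integrableOn_const (by simp [Real.volume_Ioc]))
        measurableSet_Ioc (fun v hv => (hfb v).2)
      rwa [setIntegral_const, measureReal_def, Real.volume_Ioc, smul_eq_mul, sub_zero,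
        ENNReal.toReal_ofReal hv₀0.le, mul_one] at this
    have hgi : IntegrableOn (fun v => C * v₀^(γ*δ) * v^(-(γ*δ))) (Ioc v₀ 1) volume := by
      apply IntegrableOn.mono_set (t := Icc v₀ 1) ?_ Ioc_subset_Icc_self
      apply ContinuousOn.integrableOn_Icc
      apply ContinuousOn.mul continuousOn_const
      apply ContinuousOn.rpow_const continuousOn_id
      intro x hx
      exact Or.inl (ne_of_gt (lt_of_lt_of_le hv₀0 hx.1))
    have hD : (0:ℝ) < γ*δ - 1 := by linarith
    have hB : ∫ v in Ioc v₀ 1, f v ≤ C / (γ*δ - 1) * v₀ := by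
      have hint := setIntegral_mono_on hfi2 hgi measurableSet_Ioc hptB
      have hval : ∫ v in Ioc v₀ 1, (C * v₀^(γ*δ) * v^(-(γ*δ)))
          = C * v₀^(γ*δ) * ∫ v in Ioc v₀ 1, v^(-(γ*δ)) := integral_const_mul _ _
      have hIoc : ∫ v in Ioc v₀ 1, (v:ℝ)^(-(γ*δ))
          = ∫ v in v₀..1, (v:ℝ)^(-(γ*δ)) := (intervalIntegral.integral_of_le hv₀1).symm
      have hval2 : ∫ v in v₀..1, (v:ℝ)^(-(γ*δ))
          = ((1:ℝ) ^ (-(γ*δ)+1) - v₀^(-(γ*δ)+1))/(-(γ*δ)+1) := by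
        apply integral_rpow
        right
        refine ⟨fun h => ?_, ?_⟩
        · have : γ*δ = 1 := by linarith [neg_injective h]
          linarith
        · rw [Set.uIcc_of_le hv₀1]
          intro h
          exact absurd h.1 (not_le.2 hv₀0)
      set p := v₀^(-(γ*δ)+1) with hp
      set q := v₀^(γ*δ) with hq
      have hp0 : 0 < p := Real.rpow_pos_of_pos hv₀0 _
      have hq0 : 0 < q := Real.rpow_pos_of_pos hv₀0 _
      have hqp : q * p = v₀ := by
        rw [hp, hq, ← Real.rpow_add hv₀0]
        norm_num
      have hrw : ((1:ℝ) ^ (-(γ*δ)+1) - p)/(-(γ*δ)+1) = (p - 1)/(γ*δ-1) := by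
        rw [Real.one_rpow]
        rw [div_eq_div_iff (by linarith) (by linarith)]
        ring
      calc ∫ v in Ioc v₀ 1, f v ≤ C * q * ((p-1)/(γ*δ-1)) := by
            rw [hval, hIoc, hval2, hrw] at hint; exact hint
        _ ≤ C * q * (p/(γ*δ-1)) := by
            apply mul_le_mul_of_nonneg_left _ (by positivity)
            gcongr
            linarith
        _ = C / (γ*δ - 1) * v₀ := by rw [← hqp]; ring
    calc ∫ v in Ioc (0:ℝ) 1, f v = _ := hsum
      _ ≤ v₀ + C / (γ*δ - 1) * v₀ := add_le_add hA hB
      _ = (1 + C/(γ*δ-1)) * v₀ := by ring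

/-- One-edge connection probability from a fixed vertex `(x,u)` with `|x| = R ≥ 2r` to the
ball `B(0,r)`, soft profile, regime `δ > 1/γ`: the expected number of direct connections
is of order `r^d · min(u⁻¹ R^{-d/γ}, 1)`. -/
theorem stmt_6 (d : ℕ) (hd : 1 ≤ d) (γ δ : ℝ) (hγ0 : 0 < γ) (hγ1 : γ < 1)
    (hδ : 1 / γ < δ)
    (ρ : ℝ → ℝ) (c C : ℝ) (hc : 0 < c) (hcC : c ≤ C)
    (hρ_range : ∀ x : ℝ, 0 ≤ x → 0 ≤ ρ x ∧ ρ x ≤ 1)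
    (hρ_mono : AntitoneOn ρ (Ici (0 : ℝ)))
    (hρ_bound : ∀ x : ℝ, 1 ≤ x → c * x ^ (-δ) ≤ ρ x ∧ ρ x ≤ C * x ^ (-δ)) :
    ∃ c' C' : ℝ, 0 < c' ∧ c' ≤ C' ∧
      ∀ u r R : ℝ, u ∈ Ioc (0 : ℝ) 1 → 1 ≤ r →
        ∀ x : EuclideanSpace ℝ (Fin d), ‖x‖ = R → 2 * r ≤ R →
      c' * (r ^ d * min (u⁻¹ * R ^ (-((d : ℝ) / γ))) 1) ≤
          (∫ y in Metric.ball (0 : EuclideanSpace ℝ (Fin d)) r,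
              ∫ v in Ioc (0 : ℝ) 1, ρ (‖x - y‖ ^ d * (u * v) ^ γ)) ∧
      (∫ y in Metric.ball (0 : EuclideanSpace ℝ (Fin d)) r,
              ∫ v in Ioc (0 : ℝ) 1, ρ (‖x - y‖ ^ d * (u * v) ^ γ)) ≤
          C' * (r ^ d * min (u⁻¹ * R ^ (-((d : ℝ) / γ))) 1) := by
  haveI : Nontrivial (EuclideanSpace ℝ (Fin d)) :=
    Module.nontrivial_of_finrank_pos (R := ℝ) (by rw [finrank_euclideanSpace_fin]; omega)
  have hγne : γ ≠ 0 := ne_of_gt hγ0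
  set e : ℝ := (d:ℝ)/γ with he
  have he0 : 0 ≤ e := by positivity
  set ρt : ℝ → ℝ := fun t => ρ (max t 0) with hρt
  have hanti : Antitone ρt := fun s t hst =>
    hρ_mono (mem_Ici.2 (le_max_right s 0)) (mem_Ici.2 (le_max_right t 0))
      (max_le_max hst le_rfl)
  have hrange' : ∀ t, 0 ≤ ρt t ∧ ρt t ≤ 1 := fun t => hρ_range _ (le_max_right _ _)
  have hbound' : ∀ t, 1 ≤ t → c * t ^ (-δ) ≤ ρt t ∧ ρt t ≤ C * t ^ (-δ) := by
    intro t ht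
    have hmax : max t 0 = t := max_eq_left (by linarith)
    simp only [hρt, hmax]
    exact hρ_bound t ht
  have hC : 0 < C := lt_of_lt_of_le hc hcC
  have hβ : 0 < γ*δ - 1 := by rw [div_lt_iff₀ hγ0] at hδ; nlinarith
  set K : ℝ := 1 + C/(γ*δ-1) with hK
  have hK1 : 1 ≤ K := by
    have : 0 ≤ C/(γ*δ-1) := by positivity
    simp only [hK]; linarith
  have hc1 : c ≤ 1 := by
    have h1 := (hρ_bound 1 le_rfl).1
    have h2 := (hρ_range 1 zero_le_one).2
    simp only [Real.one_rpow, mul_one] at h1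
    linarith
  set K2 : ℝ := (2:ℝ)^e with hK2
  have hK2pos : 0 < K2 := Real.rpow_pos_of_pos two_pos _
  have hK21 : 1 ≤ K2 := Real.one_le_rpow one_le_two he0
  set Vol1 : ℝ := (volume (Metric.ball (0 : EuclideanSpace ℝ (Fin d)) 1)).toReal with hVol
  have hVol0 : 0 < Vol1 :=
    ENNReal.toReal_pos (ne_of_gt (Metric.measure_ball_pos _ _ one_pos)) measure_ball_lt_top.ne
  refine ⟨c * K2⁻¹ * Vol1, K * K2 * Vol1, by positivity, ?_, ?_⟩
  · have h1 : c * K2⁻¹ ≤ K * K2 := by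
      calc c * K2⁻¹ ≤ 1 * 1 :=
            mul_le_mul hc1 (inv_le_one_of_one_le₀ hK21) (by positivity) one_pos.le
        _ = 1 := by ring
        _ ≤ K * K2 := by nlinarith
    exact mul_le_mul_of_nonneg_right h1 hVol0.le
  intro u r R hu hr x hx hRr
  obtain ⟨hu0, hu1⟩ := hu
  have hr0 : (0:ℝ) < r := lt_of_lt_of_le one_pos hr
  have hR2 : (2:ℝ) ≤ R := le_trans (by linarith) hRr
  have hR0 : (0:ℝ) < R := by linarith
  set M : ℝ := min (u⁻¹ * R ^ (-e)) 1 with hM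
  have hM0 : 0 < M := lt_min (by positivity) one_pos
  have hinteq : ∀ y : EuclideanSpace ℝ (Fin d),
      (∫ v in Ioc (0:ℝ) 1, ρ (‖x - y‖ ^ d * (u * v) ^ γ))
      = ∫ v in Ioc (0:ℝ) 1, ρt (‖x - y‖ ^ d * (u * v) ^ γ) := by
    intro y
    apply setIntegral_congr_fun measurableSet_Ioc
    intro v hv
    have h0 : 0 ≤ ‖x - y‖ ^ d * (u*v) ^ γ :=
      mul_nonneg (pow_nonneg (norm_nonneg _) d)
        (Real.rpow_nonneg (mul_nonneg hu0.le hv.1.le) γ)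
    show ρ _ = ρt _
    simp only [hρt]
    rw [max_eq_left h0]
  simp only [hinteq]
  set F : EuclideanSpace ℝ (Fin d) → ℝ :=
    fun y => ∫ v in Ioc (0:ℝ) 1, ρt (‖x - y‖ ^ d * (u * v) ^ γ) with hF
  have hmap : Measurable fun p : (EuclideanSpace ℝ (Fin d)) × ℝ =>
      ‖x - p.1‖ ^ d * (u * p.2) ^ γ := by
    apply Measurable.mul
    · exact ((continuous_const.sub continuous_fst).norm.pow d).measurable
    · exact ((continuous_const.mul continuous_snd).rpow_const
        (fun p => Or.inr hγ0.le)).measurable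
  have hFm : Measurable F :=
    (MeasureTheory.StronglyMeasurable.integral_prod_right'
      (ν := volume.restrict (Ioc (0:ℝ) 1))
      (hanti.measurable.comp hmap).stronglyMeasurable).measurable
  have hmapy : ∀ y : EuclideanSpace ℝ (Fin d),
      Measurable fun v : ℝ => ‖x - y‖ ^ d * (u * v) ^ γ := by
    intro y
    exact (continuous_const.mul ((continuous_const.mul continuous_id).rpow_const
      (fun v => Or.inr hγ0.le))).measurable
  have hFy_int : ∀ y, IntegrableOn
      (fun v => ρt (‖x - y‖ ^ d * (u*v)^γ)) (Ioc (0:ℝ) 1) volume :=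
    fun y => aux_integrableOn (hanti.measurable.comp (hmapy y)) (fun t => hrange' _) 0 1
  have hF0 : ∀ y, 0 ≤ F y :=
    fun y => setIntegral_nonneg measurableSet_Ioc (fun v _ => (hrange' _).1)
  have hF1 : ∀ y, F y ≤ 1 := by
    intro y
    calc F y ≤ ∫ v in Ioc (0:ℝ) 1, (1:ℝ) :=
        setIntegral_mono_on (hFy_int y)
          (integrableOn_const (by simp [Real.volume_Ioc]))
          measurableSet_Ioc (fun v _ => (hrange' _).2)
      _ = 1 := by simp [Real.volume_Ioc]
  have hFint : IntegrableOn F (Metric.ball (0:EuclideanSpace ℝ (Fin d)) r) volume := by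
    apply Integrable.mono' (g := fun _ => (1:ℝ))
    · exact integrableOn_const measure_ball_lt_top.ne
    · exact hFm.aestronglyMeasurable.restrict
    · filter_upwards with y
      rw [Real.norm_eq_abs, abs_le]
      exact ⟨by linarith [hF0 y], hF1 y⟩
  have hgeom : ∀ y ∈ Metric.ball (0:EuclideanSpace ℝ (Fin d)) r,
      1 ≤ ‖x - y‖ ∧ R/2 ≤ ‖x - y‖ ∧ ‖x - y‖ ≤ 2*R := by
    intro y hy
    have hyr : ‖y‖ < r := mem_ball_zero_iff.1 hy
    have h1 : R - r ≤ ‖x - y‖ := by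
      have := norm_sub_norm_le x y
      rw [hx] at this; linarith
    have h2 : ‖x - y‖ ≤ R + r := by
      have := norm_sub_le x y
      rw [hx] at this; linarith
    exact ⟨by linarith, by linarith, by linarith⟩
  have hmono_min : ∀ w1 w2 : ℝ, 0 < w1 → w1 ≤ w2 →
      min 1 (w2 ^ (-(1/γ))/u) ≤ min 1 (w1 ^ (-(1/γ))/u) := by
    intro w1 w2 h0 h12
    have hle : w2 ^ (-(1/γ)) ≤ w1 ^ (-(1/γ)) :=
      Real.rpow_le_rpow_of_nonpos h0 h12 (by rw [neg_nonpos]; positivity)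
    exact min_le_min le_rfl (by gcongr)
  have hpow : ∀ s : ℝ, 0 < s → ((s^d : ℝ)) ^ (-(1/γ)) = s ^ (-e) := by
    intro s hs
    rw [← Real.rpow_natCast s d, ← Real.rpow_mul hs.le]
    congr 1
    rw [he]; field_simp
  have h2R : (((2*R)^d : ℝ)) ^ (-(1/γ)) = K2⁻¹ * R ^ (-e) := by
    rw [hpow _ (by positivity), Real.mul_rpow two_pos.le hR0.le,
      Real.rpow_neg two_pos.le, hK2]
  have hR2' : (((R/2)^d : ℝ)) ^ (-(1/γ)) = K2 * R ^ (-e) := by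
    rw [hpow _ (by positivity), div_eq_mul_inv, Real.mul_rpow hR0.le (by positivity),
      Real.inv_rpow two_pos.le, Real.rpow_neg two_pos.le, inv_inv, hK2, mul_comm]
  have hMlo : K2⁻¹ * M ≤ min 1 ((K2⁻¹ * R^(-e))/u) := by
    apply le_min
    · calc K2⁻¹ * M ≤ 1 * 1 :=
          mul_le_mul (inv_le_one_of_one_le₀ hK21) (min_le_right _ _) hM0.le one_pos.le
        _ = 1 := by ring
    · calc K2⁻¹ * M ≤ K2⁻¹ * (u⁻¹ * R^(-e)) :=
          mul_le_mul_of_nonneg_left (min_le_left _ _) (by positivity)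
        _ = (K2⁻¹ * R^(-e))/u := by field_simp
  have hMhi : min 1 ((K2 * R^(-e))/u) ≤ K2 * M := by
    have hKM : K2 * M = min (K2*(u⁻¹ * R^(-e))) (K2*1) := by
      rw [hM, mul_min_of_nonneg _ _ hK2pos.le]
    rw [hKM]
    apply le_min
    · calc min 1 ((K2 * R^(-e))/u) ≤ (K2 * R^(-e))/u := min_le_right _ _
        _ = K2*(u⁻¹ * R^(-e)) := by field_simp
    · calc min 1 ((K2 * R^(-e))/u) ≤ 1 := min_le_left _ _
        _ ≤ K2*1 := by rw [mul_one]; exact hK21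
  have hlow : ∀ y ∈ Metric.ball (0:EuclideanSpace ℝ (Fin d)) r,
      c * (K2⁻¹ * M) ≤ F y := by
    intro y hy
    obtain ⟨h1, hloR, hhiR⟩ := hgeom y hy
    have hwpos : (0:ℝ) < ‖x - y‖ ^ d := by positivity
    have hw1 : (1:ℝ) ≤ ‖x - y‖ ^ d := by
      calc (1:ℝ) = 1^d := (one_pow d).symm
        _ ≤ ‖x - y‖^d := pow_le_pow_left₀ one_pos.le h1 d
    have hwhi : ‖x - y‖ ^ d ≤ (2*R)^d := pow_le_pow_left₀ (norm_nonneg _) hhiR d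
    have hIE := (inner_est hγ0 hδ ρt hc hrange' hanti hbound' ⟨hu0, hu1⟩ hw1).1
    calc c * (K2⁻¹ * M) ≤ c * min 1 ((K2⁻¹*R^(-e))/u) :=
        mul_le_mul_of_nonneg_left hMlo hc.le
      _ = c * min 1 ((((2*R)^d : ℝ))^(-(1/γ))/u) := by rw [h2R]
      _ ≤ c * min 1 ((‖x - y‖^d)^(-(1/γ))/u) :=
        mul_le_mul_of_nonneg_left (hmono_min _ _ hwpos hwhi) hc.le
      _ ≤ F y := hIE
  have hhigh : ∀ y ∈ Metric.ball (0:EuclideanSpace ℝ (Fin d)) r,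
      F y ≤ K * (K2 * M) := by
    intro y hy
    obtain ⟨h1, hloR, hhiR⟩ := hgeom y hy
    have hw1 : (1:ℝ) ≤ ‖x - y‖ ^ d := by
      calc (1:ℝ) = 1^d := (one_pow d).symm
        _ ≤ ‖x - y‖^d := pow_le_pow_left₀ one_pos.le h1 d
    have hwlo : ((R/2):ℝ)^d ≤ ‖x - y‖ ^ d := pow_le_pow_left₀ (by positivity) hloR d
    have hIE := (inner_est hγ0 hδ ρt hc hrange' hanti hbound' ⟨hu0, hu1⟩ hw1).2
    calc F y ≤ K * min 1 ((‖x-y‖^d)^(-(1/γ))/u) := hIE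
      _ ≤ K * min 1 ((((R/2)^d : ℝ))^(-(1/γ))/u) :=
        mul_le_mul_of_nonneg_left (hmono_min _ _ (by positivity) hwlo) (by linarith)
      _ = K * min 1 ((K2*R^(-e))/u) := by rw [hR2']
      _ ≤ K * (K2 * M) := mul_le_mul_of_nonneg_left hMhi (by linarith)
  have hvol : (volume (Metric.ball (0:EuclideanSpace ℝ (Fin d)) r)).toReal
      = r^d * Vol1 := by
    rw [Measure.addHaar_ball _ _ hr0.le, finrank_euclideanSpace_fin,
      ENNReal.toReal_mul, ENNReal.toReal_ofReal (by positivity), hVol]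
  constructor
  · have hlowInt : c * (K2⁻¹*M) * (r^d * Vol1)
        ≤ ∫ y in Metric.ball (0:EuclideanSpace ℝ (Fin d)) r, F y := by
      have := setIntegral_mono_on
        (integrableOn_const measure_ball_lt_top.ne) hFint
        measurableSet_ball hlow
      rwa [setIntegral_const, measureReal_def, smul_eq_mul, hvol, mul_comm] at this
    calc c*K2⁻¹*Vol1 * (r^d*M) = c * (K2⁻¹*M) * (r^d*Vol1) := by ring
      _ ≤ _ := hlowInt
  · have hhighInt : (∫ y in Metric.ball (0:EuclideanSpace ℝ (Fin d)) r, F y)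
        ≤ K * (K2*M) * (r^d * Vol1) := by
      have := setIntegral_mono_on hFint
        (integrableOn_const measure_ball_lt_top.ne)
        measurableSet_ball hhigh
      rwa [setIntegral_const, measureReal_def, smul_eq_mul, hvol, mul_comm] at this
    calc (∫ y in Metric.ball (0:EuclideanSpace ℝ (Fin d)) r, F y)
        ≤ K * (K2*M) * (r^d * Vol1) := hhighInt
      _ = K*K2*Vol1 * (r^d*M) := by ring
end

section
/- Let d ≥ 1 be an integer, let 0 < γ < 1, let δ = 1/γ, and let ρ be a soft profile with decay exponent δ. Then there exist constants 0 < c' ≤ C' < ∞ (depending only on d, γ and the constants in the definition of ρ) such that for every u ∈ (0,1], every r ≥ 1 and every x ∈ ℝ^d with |x| = R ≥ 2r, one has c'·r^d·min(u^{−1} R^{−dδ}(1 + log₊(u R^{dδ})), 1) ≤ ∫_{B(0,r)} ∫_0^1 ρ(|x−y|^d (u v)^γ) dv dy ≤ C'·r^d·min(u^{−1} R^{−dδ}(1 + log₊(u R^{dδ})), 1). -/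
open MeasureTheory Real Set

/-- `b(1 - log b) ≤ 1` for `0 < b ≤ 1`. -/
lemma aux_mul_le_one {b : ℝ} (hb : 0 < b) (hb1 : b ≤ 1) : b * (1 - Real.log b) ≤ 1 := by
  have h := Real.log_le_sub_one_of_pos (x := b⁻¹) (by positivity)
  rw [Real.log_inv] at h
  have hbi : b * b⁻¹ = 1 := mul_inv_cancel₀ hb.ne'
  nlinarith

noncomputable def hfun (b : ℝ) : ℝ := min (b * (1 + max (Real.log b⁻¹) 0)) 1

lemma hfun_le_one (b : ℝ) : hfun b ≤ 1 := min_le_right _ _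

lemma hfun_eval_ge {b : ℝ} (hb : 1 ≤ b) : hfun b = 1 := by
  have h1 : Real.log b⁻¹ ≤ 0 := Real.log_nonpos (by positivity) (inv_le_one_of_one_le₀ hb)
  rw [hfun, max_eq_right h1]
  simp [min_eq_right, hb]

lemma hfun_eval_lt {b : ℝ} (hb : 0 < b) (hb1 : b ≤ 1) : hfun b = b * (1 - Real.log b) := by
  have h1 : 0 ≤ Real.log b⁻¹ := Real.log_nonneg (one_le_inv_iff₀.2 ⟨hb, hb1⟩)
  rw [hfun, max_eq_left h1, Real.log_inv]
  rw [min_eq_left]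
  · ring_nf
  · have := aux_mul_le_one hb hb1; linarith [this]

lemma hfun_pos {b : ℝ} (hb : 0 < b) : 0 < hfun b := by
  rcases le_or_gt b 1 with h | h
  · rw [hfun_eval_lt hb h]
    have : Real.log b ≤ 0 := Real.log_nonpos hb.le h
    nlinarith
  · rw [hfun_eval_ge h.le]; norm_num

lemma hfun_mono {b₁ b₂ : ℝ} (hb₁ : 0 < b₁) (h : b₁ ≤ b₂) : hfun b₁ ≤ hfun b₂ := by
  rcases le_or_gt 1 b₂ with h2 | h2
  · rw [hfun_eval_ge h2]; exact hfun_le_one _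
  · have hb₂ : 0 < b₂ := hb₁.trans_le h
    rw [hfun_eval_lt hb₁ (h.trans h2.le), hfun_eval_lt hb₂ h2.le]
    have hl : Real.log (b₂ / b₁) ≤ b₂ / b₁ - 1 := Real.log_le_sub_one_of_pos (by positivity)
    rw [Real.log_div (by positivity) (by positivity)] at hl
    have hlb2 : Real.log b₂ ≤ 0 := Real.log_nonpos (by positivity) h2.le
    have hb1d : b₁ * (b₂ / b₁) = b₂ := by field_simp
    nlinarith

lemma hfun_subhom {κ b : ℝ} (hκ : 1 ≤ κ) (hb : 0 < b) : hfun (κ * b) ≤ κ * hfun b := by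
  have hκ0 : 0 < κ := lt_of_lt_of_le one_pos hκ
  have hκb : 0 < κ * b := by positivity
  rcases le_or_gt (κ * b) 1 with h | h
  · have hb1 : b ≤ 1 := by nlinarith
    rw [hfun_eval_lt hκb h, hfun_eval_lt hb hb1]
    have hlogκ : 0 ≤ Real.log κ := Real.log_nonneg hκ
    have hlogb : Real.log b ≤ 0 := Real.log_nonpos hb.le hb1
    rw [Real.log_mul hκ0.ne' hb.ne']
    nlinarith
  · rw [hfun_eval_ge h.le]
    rcases le_or_gt 1 b with h2 | h2
    · rw [hfun_eval_ge h2]; linarith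
    · rw [hfun_eval_lt hb h2.le]
      have hlogb : Real.log b ≤ 0 := Real.log_nonpos hb.le h2.le
      nlinarith

lemma G_integrableOn {b : ℝ} (hb : 0 < b) (s : Set ℝ) (hs : s ⊆ Ioc (0:ℝ) 1) (hms : MeasurableSet s) :
    IntegrableOn (fun v : ℝ => min (b / v) 1) s := by
  apply MeasureTheory.Measure.integrableOn_of_bounded (M := 1)
  · exact ((measure_mono hs).trans_lt (by simp)).ne
  · exact ((measurable_const.div measurable_id).min measurable_const).aestronglyMeasurable
  · filter_upwards [ae_restrict_mem hms] with v hv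
    have hv0 : 0 < v := (hs hv).1
    rw [Real.norm_eq_abs, abs_le]
    constructor
    · have : (0:ℝ) ≤ min (b / v) 1 := le_min (by positivity) one_pos.le
      linarith
    · exact min_le_right _ _

lemma G_eval {b : ℝ} (hb : 0 < b) :
    (∫ v in Ioc (0:ℝ) 1, min (b / v) 1) = hfun b := by
  rcases le_or_gt 1 b with h | h
  · rw [hfun_eval_ge h]
    rw [setIntegral_congr_fun measurableSet_Ioc (g := fun _ => (1:ℝ))
      (fun v hv => min_eq_right ((le_div_iff₀ hv.1).2 (by nlinarith [hv.2])))]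
    simp
  · have hsplit : Ioc (0:ℝ) b ∪ Ioc b 1 = Ioc 0 1 := Ioc_union_Ioc_eq_Ioc hb.le h.le
    rw [← hsplit, setIntegral_union (Ioc_disjoint_Ioc_of_le le_rfl) measurableSet_Ioc
        (G_integrableOn hb _ (by rw [← hsplit]; exact subset_union_left) measurableSet_Ioc)
        (G_integrableOn hb _ (by rw [← hsplit]; exact subset_union_right) measurableSet_Ioc)]
    have h1 : (∫ v in Ioc (0:ℝ) b, min (b / v) 1) = b := by
      rw [setIntegral_congr_fun measurableSet_Ioc (g := fun _ => (1:ℝ))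
        (fun v hv => min_eq_right ((le_div_iff₀ hv.1).2 (by nlinarith [hv.2])))]
      simp [hb.le]
    have h2 : (∫ v in Ioc b 1, min (b / v) 1) = b * (- Real.log b) := by
      rw [setIntegral_congr_fun measurableSet_Ioc (g := fun v => b * v⁻¹)
        (fun v hv => by
          rw [min_eq_left, div_eq_mul_inv]
          rw [div_le_one (lt_trans hb hv.1)]
          exact hv.1.le)]
      rw [MeasureTheory.integral_const_mul, ← intervalIntegral.integral_of_le h.le,
        integral_inv_of_pos hb one_pos, Real.log_div one_ne_zero hb.ne', Real.log_one]
      ring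
    rw [h1, h2, hfun_eval_lt hb h.le]
    ring

lemma rho_pointwise {δ : ℝ} {ρ : ℝ → ℝ} {c C : ℝ} (hc : 0 < c)
    (hρ_range : ∀ x : ℝ, 0 ≤ x → 0 ≤ ρ x ∧ ρ x ≤ 1)
    (hρ_mono : AntitoneOn ρ (Ici (0 : ℝ)))
    (hρ_bound : ∀ x : ℝ, 1 ≤ x → c * x ^ (-δ) ≤ ρ x ∧ ρ x ≤ C * x ^ (-δ))
    (hδ : 0 < δ) {x : ℝ} (hx : 0 < x) :
    c * min (x ^ (-δ)) 1 ≤ ρ x ∧ ρ x ≤ (max 1 C) * min (x ^ (-δ)) 1 := by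
  rcases le_or_gt 1 x with h | h
  · have hle : x ^ (-δ) ≤ 1 :=
      Real.rpow_le_one_of_one_le_of_nonpos h (neg_nonpos.2 hδ.le)
    rw [min_eq_left hle]
    refine ⟨(hρ_bound x h).1, (hρ_bound x h).2.trans ?_⟩
    exact mul_le_mul_of_nonneg_right (le_max_right _ _) (Real.rpow_nonneg hx.le _)
  · have hge : 1 ≤ x ^ (-δ) :=
      Real.one_le_rpow_of_pos_of_le_one_of_nonpos hx h.le (neg_nonpos.2 hδ.le)
    rw [min_eq_right hge, mul_one, mul_one]
    constructor
    · have h1 : c ≤ ρ 1 := by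
        have := (hρ_bound 1 le_rfl).1
        rwa [Real.one_rpow, mul_one] at this
      exact h1.trans (hρ_mono (mem_Ici.2 hx.le) (mem_Ici.2 one_pos.le) h.le)
    · exact ((hρ_range x hx.le).2).trans (le_max_left _ _)

lemma key_rpow {d : ℕ} {γ δ u v t : ℝ} (hγ : 0 < γ) (hδ : δ = 1/γ)
    (hu : 0 < u) (hv : 0 < v) (ht : 0 < t) :
    (t ^ d * (u * v) ^ γ) ^ (-δ) = (u * t ^ ((d:ℝ) * δ))⁻¹ / v := by
  have huv : (0:ℝ) < u * v := by positivity
  rw [← Real.rpow_natCast t d,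
    Real.mul_rpow (Real.rpow_nonneg ht.le _) (Real.rpow_nonneg huv.le _),
    ← Real.rpow_mul ht.le, ← Real.rpow_mul huv.le]
  have hγδ : γ * (-δ) = -1 := by rw [hδ]; field_simp
  rw [hγδ, Real.rpow_neg_one, show (d:ℝ) * (-δ) = -((d:ℝ)*δ) by ring,
    Real.rpow_neg ht.le, mul_inv]
  field_simp

lemma g_antitone {ρ : ℝ → ℝ} (hρ_mono : AntitoneOn ρ (Ici (0 : ℝ)))
    {γ u : ℝ} (hγ : 0 < γ) (hu : 0 ≤ u) {s : ℝ} (hs : 0 ≤ s) :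
    Antitone (fun v : ℝ => ρ (s * (u * max v 0) ^ γ)) := by
  intro v₁ v₂ h
  have hb : u * max v₁ 0 ≤ u * max v₂ 0 :=
    mul_le_mul_of_nonneg_left (max_le_max h le_rfl) hu
  have hb1 : 0 ≤ u * max v₁ 0 := by positivity
  have harg : s * (u * max v₁ 0) ^ γ ≤ s * (u * max v₂ 0) ^ γ :=
    mul_le_mul_of_nonneg_left (Real.rpow_le_rpow hb1 hb hγ.le) hs
  exact hρ_mono (mem_Ici.2 (by positivity)) (mem_Ici.2 (by positivity)) harg

lemma g_integrableOn {ρ : ℝ → ℝ} (hρ_range : ∀ x : ℝ, 0 ≤ x → 0 ≤ ρ x ∧ ρ x ≤ 1)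
    (hρ_mono : AntitoneOn ρ (Ici (0 : ℝ)))
    {γ u : ℝ} (hγ : 0 < γ) (hu : 0 ≤ u) {s : ℝ} (hs : 0 ≤ s) :
    IntegrableOn (fun v : ℝ => ρ (s * (u * max v 0) ^ γ)) (Ioc (0:ℝ) 1) := by
  apply MeasureTheory.Measure.integrableOn_of_bounded (M := 1)
  · simp
  · exact ((g_antitone hρ_mono hγ hu hs).measurable).aestronglyMeasurable
  · refine Filter.Eventually.of_forall fun v => ?_
    have h := hρ_range (s * (u * max v 0) ^ γ) (by positivity)
    rw [Real.norm_eq_abs, abs_le]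
    exact ⟨by linarith [h.1], h.2⟩

/-- Inner-integral two-sided bound. -/
lemma inner_comp {d : ℕ} {γ δ : ℝ} (hγ0 : 0 < γ) (hδ : δ = 1 / γ)
    {ρ : ℝ → ℝ} {c C : ℝ} (hc : 0 < c)
    (hρ_range : ∀ x : ℝ, 0 ≤ x → 0 ≤ ρ x ∧ ρ x ≤ 1)
    (hρ_mono : AntitoneOn ρ (Ici (0 : ℝ)))
    (hρ_bound : ∀ x : ℝ, 1 ≤ x → c * x ^ (-δ) ≤ ρ x ∧ ρ x ≤ C * x ^ (-δ))
    {u t : ℝ} (hu : 0 < u) (ht : 0 < t) :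
    c * hfun ((u * t ^ ((d:ℝ) * δ))⁻¹) ≤ (∫ v in Ioc (0:ℝ) 1, ρ (t ^ d * (u * v) ^ γ)) ∧
    (∫ v in Ioc (0:ℝ) 1, ρ (t ^ d * (u * v) ^ γ)) ≤
      (max 1 C) * hfun ((u * t ^ ((d:ℝ) * δ))⁻¹) := by
  have hδ0 : 0 < δ := by rw [hδ]; positivity
  set b : ℝ := (u * t ^ ((d:ℝ) * δ))⁻¹ with hbdef
  have hb : 0 < b := by
    have : (0:ℝ) < t ^ ((d:ℝ)*δ) := Real.rpow_pos_of_pos ht _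
    positivity
  have hts : (0:ℝ) ≤ t ^ d := by positivity
  have hrw : (∫ v in Ioc (0:ℝ) 1, ρ (t ^ d * (u * v) ^ γ)) =
      ∫ v in Ioc (0:ℝ) 1, ρ (t ^ d * (u * max v 0) ^ γ) :=
    setIntegral_congr_fun measurableSet_Ioc (fun v hv => by rw [max_eq_left hv.1.le])
  have hpt : ∀ v ∈ Ioc (0:ℝ) 1,
      c * min (b / v) 1 ≤ ρ (t ^ d * (u * max v 0) ^ γ) ∧
      ρ (t ^ d * (u * max v 0) ^ γ) ≤ (max 1 C) * min (b / v) 1 := by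
    intro v hv
    rw [max_eq_left hv.1.le]
    have hx : 0 < t ^ d * (u * v) ^ γ := by
      have : (0:ℝ) < (u*v)^γ := Real.rpow_pos_of_pos (mul_pos hu hv.1) _
      positivity
    have := rho_pointwise hc hρ_range hρ_mono hρ_bound hδ0 hx
    rwa [key_rpow hγ0 hδ hu hv.1 ht, ← hbdef] at this
  have hint1 : IntegrableOn (fun v : ℝ => ρ (t ^ d * (u * max v 0) ^ γ)) (Ioc (0:ℝ) 1) :=
    g_integrableOn hρ_range hρ_mono hγ0 hu.le hts
  have hint2 : IntegrableOn (fun v : ℝ => min (b / v) 1) (Ioc (0:ℝ) 1) :=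
    G_integrableOn hb _ subset_rfl measurableSet_Ioc
  constructor
  · rw [hrw, ← G_eval hb, ← MeasureTheory.integral_const_mul]
    exact setIntegral_mono_on (hint2.const_mul c) hint1 measurableSet_Ioc
      (fun v hv => (hpt v hv).1)
  · rw [hrw, ← G_eval hb, ← MeasureTheory.integral_const_mul]
    exact setIntegral_mono_on hint1 (hint2.const_mul _) measurableSet_Ioc
      (fun v hv => (hpt v hv).2)

noncomputable def Fg (ρ : ℝ → ℝ) (d : ℕ) (γ u : ℝ) (t : ℝ) : ℝ :=
  ∫ v in Ioc (0:ℝ) 1, ρ ((max t 0) ^ d * (u * max v 0) ^ γ)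

lemma Fg_antitone {ρ : ℝ → ℝ} (hρ_range : ∀ x : ℝ, 0 ≤ x → 0 ≤ ρ x ∧ ρ x ≤ 1)
    (hρ_mono : AntitoneOn ρ (Ici (0 : ℝ)))
    {d : ℕ} {γ u : ℝ} (hγ : 0 < γ) (hu : 0 ≤ u) :
    Antitone (Fg ρ d γ u) := by
  intro t₁ t₂ h
  apply setIntegral_mono_on
    (g_integrableOn hρ_range hρ_mono hγ hu (by positivity))
    (g_integrableOn hρ_range hρ_mono hγ hu (by positivity)) measurableSet_Ioc
  intro v hv
  have hpow : (max t₁ 0) ^ d ≤ (max t₂ 0) ^ d :=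
    pow_le_pow_left₀ (le_max_right _ _) (max_le_max h le_rfl) d
  have harg : (max t₁ 0) ^ d * (u * max v 0) ^ γ ≤ (max t₂ 0) ^ d * (u * max v 0) ^ γ :=
    mul_le_mul_of_nonneg_right hpow (Real.rpow_nonneg (by positivity) _)
  exact hρ_mono (mem_Ici.2 (by positivity)) (mem_Ici.2 (by positivity)) harg

lemma Fg_bounds {ρ : ℝ → ℝ} (hρ_range : ∀ x : ℝ, 0 ≤ x → 0 ≤ ρ x ∧ ρ x ≤ 1)
    (hρ_mono : AntitoneOn ρ (Ici (0 : ℝ)))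
    {d : ℕ} {γ u : ℝ} (hγ : 0 < γ) (hu : 0 ≤ u) (t : ℝ) :
    0 ≤ Fg ρ d γ u t ∧ Fg ρ d γ u t ≤ 1 := by
  constructor
  · apply setIntegral_nonneg measurableSet_Ioc
    intro v _
    exact (hρ_range _ (by positivity)).1
  · calc Fg ρ d γ u t ≤ ∫ _ in Ioc (0:ℝ) 1, (1:ℝ) := by
          apply setIntegral_mono_on
            (g_integrableOn hρ_range hρ_mono hγ hu (by positivity))
            (integrableOn_const (by simp)) measurableSet_Ioc
          intro v _
          exact (hρ_range _ (by positivity)).2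
      _ = 1 := by simp

lemma Fg_eq {ρ : ℝ → ℝ} {d : ℕ} {γ u t : ℝ} (ht : 0 ≤ t) :
    Fg ρ d γ u t = ∫ v in Ioc (0:ℝ) 1, ρ (t ^ d * (u * v) ^ γ) := by
  rw [Fg, max_eq_left ht]
  exact setIntegral_congr_fun measurableSet_Ioc (fun v hv => by rw [max_eq_left hv.1.le])

/-- One-edge connection probability from a fixed vertex `(x,u)` with `|x| = R ≥ 2r` to the
ball `B(0,r)`, soft profile, boundary regime `δ = 1/γ`: the expected number of direct
connections is of order `r^d · min(u⁻¹ R^{-dδ}(1 + log₊(u R^{dδ})), 1)`. -/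
theorem stmt_7 (d : ℕ) (hd : 1 ≤ d) (γ δ : ℝ) (hγ0 : 0 < γ) (hγ1 : γ < 1)
    (hδ : δ = 1 / γ)
    (ρ : ℝ → ℝ) (c C : ℝ) (hc : 0 < c) (hcC : c ≤ C)
    (hρ_range : ∀ x : ℝ, 0 ≤ x → 0 ≤ ρ x ∧ ρ x ≤ 1)
    (hρ_mono : AntitoneOn ρ (Ici (0 : ℝ)))
    (hρ_bound : ∀ x : ℝ, 1 ≤ x → c * x ^ (-δ) ≤ ρ x ∧ ρ x ≤ C * x ^ (-δ)) :
    ∃ c' C' : ℝ, 0 < c' ∧ c' ≤ C' ∧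
      ∀ u r R : ℝ, u ∈ Ioc (0 : ℝ) 1 → 1 ≤ r →
        ∀ x : EuclideanSpace ℝ (Fin d), ‖x‖ = R → 2 * r ≤ R →
      c' * (r ^ d * min (u⁻¹ * R ^ (-((d : ℝ) * δ)) *
              (1 + max (Real.log (u * R ^ ((d : ℝ) * δ))) 0)) 1) ≤
          (∫ y in Metric.ball (0 : EuclideanSpace ℝ (Fin d)) r,
              ∫ v in Ioc (0 : ℝ) 1, ρ (‖x - y‖ ^ d * (u * v) ^ γ)) ∧
      (∫ y in Metric.ball (0 : EuclideanSpace ℝ (Fin d)) r,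
              ∫ v in Ioc (0 : ℝ) 1, ρ (‖x - y‖ ^ d * (u * v) ^ γ)) ≤
          C' * (r ^ d * min (u⁻¹ * R ^ (-((d : ℝ) * δ)) *
              (1 + max (Real.log (u * R ^ ((d : ℝ) * δ))) 0)) 1) := by
  have hδ0 : 0 < δ := by rw [hδ]; positivity
  have he0 : (0:ℝ) ≤ (d:ℝ) * δ := by positivity
  set κ : ℝ := (2:ℝ) ^ ((d:ℝ) * δ) with hκdef
  have hκ1 : 1 ≤ κ := by
    have := Real.rpow_le_rpow_of_exponent_le (one_le_two) he0
    rwa [Real.rpow_zero] at this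
  have hκ0 : 0 < κ := lt_of_lt_of_le one_pos hκ1
  haveI : Nontrivial (EuclideanSpace ℝ (Fin d)) := by
    have : Nonempty (Fin d) := ⟨⟨0, hd⟩⟩
    infer_instance
  set ω : ℝ := (volume (Metric.ball (0 : EuclideanSpace ℝ (Fin d)) 1)).toReal with hωdef
  have hω0 : 0 < ω :=
    ENNReal.toReal_pos (Metric.measure_ball_pos volume _ one_pos).ne' measure_ball_lt_top.ne
  have hC1 : c ≤ max 1 C := hcC.trans (le_max_right _ _)
  have hmax0 : (0:ℝ) < max 1 C := lt_of_lt_of_le one_pos (le_max_left _ _)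
  refine ⟨c * ω / κ, max 1 C * ω * κ, by positivity, ?_, ?_⟩
  · have h1 : c * ω / κ ≤ c * ω := div_le_self (by positivity) hκ1
    have h2 : c * ω ≤ max 1 C * ω * κ :=
      calc c * ω ≤ max 1 C * ω := mul_le_mul_of_nonneg_right hC1 hω0.le
        _ ≤ max 1 C * ω * κ := le_mul_of_one_le_right (by positivity) hκ1
    linarith
  rintro u r R ⟨hu0, hu1⟩ hr x hxR hrR
  have hr0 : (0:ℝ) < r := lt_of_lt_of_le one_pos hr
  have hR0 : (0:ℝ) < R := by linarith
  have hA0 : (0:ℝ) < R ^ ((d:ℝ) * δ) := Real.rpow_pos_of_pos hR0 _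
  set bR : ℝ := (u * R ^ ((d:ℝ) * δ))⁻¹ with hbRdef
  have hbR0 : 0 < bR := by positivity
  have hM : min (u⁻¹ * R ^ (-((d : ℝ) * δ)) *
      (1 + max (Real.log (u * R ^ ((d : ℝ) * δ))) 0)) 1 = hfun bR := by
    have e1 : u⁻¹ * R ^ (-((d:ℝ) * δ)) = bR := by
      rw [Real.rpow_neg hR0.le, hbRdef, mul_inv]
    have e2 : u * R ^ ((d:ℝ) * δ) = bR⁻¹ := by rw [hbRdef, inv_inv]
    rw [hfun, ← e2, ← e1]
  -- geometry: norms in the ball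
  have hgeom : ∀ y ∈ Metric.ball (0 : EuclideanSpace ℝ (Fin d)) r,
      R / 2 ≤ ‖x - y‖ ∧ ‖x - y‖ ≤ 2 * R := by
    intro y hy
    rw [mem_ball_zero_iff] at hy
    have h1 : ‖x‖ - ‖y‖ ≤ ‖x - y‖ := norm_sub_norm_le x y
    have h2 : ‖x - y‖ ≤ ‖x‖ + ‖y‖ := norm_sub_le x y
    rw [hxR] at h1 h2
    constructor <;> nlinarith
  -- rewrite as Fg and integrability
  have hT : (∫ y in Metric.ball (0 : EuclideanSpace ℝ (Fin d)) r,
        ∫ v in Ioc (0 : ℝ) 1, ρ (‖x - y‖ ^ d * (u * v) ^ γ)) =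
      ∫ y in Metric.ball (0 : EuclideanSpace ℝ (Fin d)) r, Fg ρ d γ u ‖x - y‖ :=
    setIntegral_congr_fun measurableSet_ball (fun y _ => (Fg_eq (norm_nonneg _)).symm)
  have hFganti := Fg_antitone hρ_range hρ_mono (d := d) hγ0 hu0.le
  have hFgint : IntegrableOn (fun y => Fg ρ d γ u ‖x - y‖)
      (Metric.ball (0 : EuclideanSpace ℝ (Fin d)) r) := by
    apply MeasureTheory.Measure.integrableOn_of_bounded (M := 1) measure_ball_lt_top.ne
    · exact (hFganti.measurable.comp
        ((continuous_const.sub continuous_id).norm.measurable)).aestronglyMeasurable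
    · refine Filter.Eventually.of_forall fun y => ?_
      have h := Fg_bounds hρ_range hρ_mono (d := d) hγ0 hu0.le ‖x - y‖
      rw [Real.norm_eq_abs, abs_le]; exact ⟨by linarith [h.1], h.2⟩
  have hvol : (volume (Metric.ball (0 : EuclideanSpace ℝ (Fin d)) r)).toReal = r ^ d * ω := by
    rw [MeasureTheory.Measure.addHaar_ball volume _ hr0.le, ENNReal.toReal_mul,
      ENNReal.toReal_ofReal (by positivity), finrank_euclideanSpace_fin]
  -- bounds of the outer integral by constants
  have hconst : ∀ t : ℝ, (∫ _ in Metric.ball (0 : EuclideanSpace ℝ (Fin d)) r,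
      Fg ρ d γ u t) = (r ^ d * ω) * Fg ρ d γ u t := by
    intro t; rw [setIntegral_const, smul_eq_mul, ← hvol]; rfl
  have hlow : (r ^ d * ω) * Fg ρ d γ u (2 * R) ≤
      ∫ y in Metric.ball (0 : EuclideanSpace ℝ (Fin d)) r, Fg ρ d γ u ‖x - y‖ := by
    rw [← hconst (2 * R)]
    exact setIntegral_mono_on (integrableOn_const measure_ball_lt_top.ne) hFgint
      measurableSet_ball (fun y hy => hFganti (hgeom y hy).2)
  have hhigh : (∫ y in Metric.ball (0 : EuclideanSpace ℝ (Fin d)) r, Fg ρ d γ u ‖x - y‖) ≤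
      (r ^ d * ω) * Fg ρ d γ u (R / 2) := by
    rw [← hconst (R / 2)]
    exact setIntegral_mono_on hFgint (integrableOn_const measure_ball_lt_top.ne)
      measurableSet_ball (fun y hy => hFganti (hgeom y hy).1)
  -- inner bounds at t = 2R and t = R/2
  have h2R0 : (0:ℝ) < 2 * R := by linarith
  have hhalf0 : (0:ℝ) < R / 2 := by linarith
  have hb2 : (u * (2 * R) ^ ((d:ℝ) * δ))⁻¹ = κ⁻¹ * bR := by
    rw [Real.mul_rpow (by norm_num) hR0.le, ← hκdef, hbRdef,
      show u * (κ * R ^ ((d:ℝ) * δ)) = κ * (u * R ^ ((d:ℝ) * δ)) by ring, mul_inv]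
  have hbhalf : (u * (R / 2) ^ ((d:ℝ) * δ))⁻¹ = κ * bR := by
    rw [Real.div_rpow hR0.le (by norm_num), ← hκdef, hbRdef, div_eq_mul_inv,
      show u * (R ^ ((d:ℝ) * δ) * κ⁻¹) = κ⁻¹ * (u * R ^ ((d:ℝ) * δ)) by ring, mul_inv,
      inv_inv]
  have hlowFg : c * hfun (κ⁻¹ * bR) ≤ Fg ρ d γ u (2 * R) := by
    rw [Fg_eq h2R0.le, ← hb2]
    exact (inner_comp hγ0 hδ hc hρ_range hρ_mono hρ_bound hu0 h2R0).1
  have hhighFg : Fg ρ d γ u (R / 2) ≤ max 1 C * hfun (κ * bR) := by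
    rw [Fg_eq hhalf0.le, ← hbhalf]
    exact (inner_comp hγ0 hδ hc hρ_range hρ_mono hρ_bound hu0 hhalf0).2
  -- hfun scaling
  have hscale1 : hfun bR / κ ≤ hfun (κ⁻¹ * bR) := by
    have h := hfun_subhom hκ1 (b := κ⁻¹ * bR) (by positivity)
    rw [show κ * (κ⁻¹ * bR) = bR by field_simp] at h
    rw [div_le_iff₀ hκ0]; linarith
  have hscale2 : hfun (κ * bR) ≤ κ * hfun bR := hfun_subhom hκ1 hbR0
  have hhfun0 : 0 < hfun bR := hfun_pos hbR0
  rw [hM, hT]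
  constructor
  · calc c * ω / κ * (r ^ d * hfun bR) = (r ^ d * ω) * (c * (hfun bR / κ)) := by ring
      _ ≤ (r ^ d * ω) * (c * hfun (κ⁻¹ * bR)) := by
          apply mul_le_mul_of_nonneg_left _ (by positivity)
          exact mul_le_mul_of_nonneg_left hscale1 hc.le
      _ ≤ (r ^ d * ω) * Fg ρ d γ u (2 * R) :=
          mul_le_mul_of_nonneg_left hlowFg (by positivity)
      _ ≤ _ := hlow
  · calc (∫ y in Metric.ball (0 : EuclideanSpace ℝ (Fin d)) r, Fg ρ d γ u ‖x - y‖)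
        ≤ (r ^ d * ω) * Fg ρ d γ u (R / 2) := hhigh
      _ ≤ (r ^ d * ω) * (max 1 C * hfun (κ * bR)) :=
          mul_le_mul_of_nonneg_left hhighFg (by positivity)
      _ ≤ (r ^ d * ω) * (max 1 C * (κ * hfun bR)) := by
          apply mul_le_mul_of_nonneg_left _ (by positivity)
          exact mul_le_mul_of_nonneg_left hscale2 hmax0.le
      _ = max 1 C * ω * κ * (r ^ d * hfun bR) := by ring
end

section
/- Let d ≥ 1 be an integer, let 0 < γ < 1/2 and set δ = 1/γ − 1 (so δ > 1). Then there exist constants 0 < c' ≤ C' < ∞ (depending only on d and γ) such that for every R ≥ 2 one has c'·R^{d(1−δ)}·log R ≤ ∫_0^1 v^{−γ} · min(v^{−γδ} R^{d(1−δ)}, 1) dv ≤ C'·R^{d(1−δ)}·log R. -/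
open MeasureTheory Real Set

/-- The mark integral for two-edge escape paths in the boundary regime `δ = 1/γ - 1`:
`∫_0^1 v^{-γ} min(v^{-γδ} R^{d(1-δ)}, 1) dv ≍ R^{d(1-δ)} log R` for `R ≥ 2`. -/
theorem stmt_10 (d : ℕ) (hd : 1 ≤ d) (γ δ : ℝ) (hγ0 : 0 < γ) (hγ1 : γ < 1 / 2)
    (hδ : δ = 1 / γ - 1) :
    ∃ c' C' : ℝ, 0 < c' ∧ c' ≤ C' ∧ ∀ R : ℝ, 2 ≤ R →
      c' * (R ^ ((d : ℝ) * (1 - δ)) * Real.log R) ≤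
          (∫ v in Ioc (0 : ℝ) 1,
              v ^ (-γ) * min (v ^ (-(γ * δ)) * R ^ ((d : ℝ) * (1 - δ))) 1) ∧
      (∫ v in Ioc (0 : ℝ) 1,
              v ^ (-γ) * min (v ^ (-(γ * δ)) * R ^ ((d : ℝ) * (1 - δ))) 1) ≤
          C' * (R ^ ((d : ℝ) * (1 - δ)) * Real.log R) := by
  have hγ1' : γ < 1 := by linarith
  have h1γ : (0:ℝ) < 1 - γ := by linarith
  have hγδ : γ * δ = 1 - γ := by
    rw [hδ]; field_simp
  have hδ1 : (1:ℝ) < δ := by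
    rw [hδ, lt_sub_iff_add_lt, lt_div_iff₀ hγ0]; linarith
  have hd1 : (1:ℝ) ≤ (d:ℝ) := by exact_mod_cast hd
  set β : ℝ := (d:ℝ) * (δ - 1) with hβdef
  have hβ0 : 0 < β := mul_pos (by linarith) (by linarith)
  have hlog2 : 0 < Real.log 2 := Real.log_pos one_lt_two
  refine ⟨β / (1 - γ), (β + 1 / Real.log 2) / (1 - γ), by positivity, ?_, ?_⟩
  · have h : β ≤ β + 1 / Real.log 2 := by
      have : 0 < 1 / Real.log 2 := by positivity
      linarith
    exact div_le_div_of_nonneg_right h h1γ.le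
  intro R hR
  have hR0 : (0:ℝ) < R := by linarith
  have hR1 : (1:ℝ) < R := by linarith
  have hlogR : 0 < Real.log R := Real.log_pos hR1
  set a : ℝ := R ^ ((d:ℝ) * (1 - δ)) with hadef
  have ha0 : 0 < a := Real.rpow_pos_of_pos hR0 _
  have hexp : (d:ℝ) * (1 - δ) = -β := by rw [hβdef]; ring
  have hloga : Real.log a = -β * Real.log R := by
    rw [hadef, Real.log_rpow hR0, hexp]
  set t : ℝ := a ^ (1 - γ)⁻¹ with htdef
  have ht0 : 0 < t := Real.rpow_pos_of_pos ha0 _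
  have hta : t ^ (1 - γ) = a := by
    rw [htdef, ← Real.rpow_mul ha0.le, inv_mul_cancel₀ h1γ.ne', Real.rpow_one]
  have ha1 : a ≤ 1 := by
    rw [hadef]
    apply Real.rpow_le_one_of_one_le_of_nonpos (by linarith)
    nlinarith
  have ht1 : t ≤ 1 := Real.rpow_le_one ha0.le ha1 (by positivity)
  have hlogt : Real.log t = -β / (1 - γ) * Real.log R := by
    rw [htdef, Real.log_rpow ha0, hloga]; ring
  have hmin1 : EqOn (fun v : ℝ => v ^ (-γ) * min (v ^ (-(γ * δ)) * a) 1)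
      (fun v : ℝ => v ^ (-γ)) (Ioc 0 t) := by
    intro v hv
    have hv0 : 0 < v := hv.1
    have h1 : v ^ (1 - γ) ≤ a := hta ▸ Real.rpow_le_rpow hv0.le hv.2 h1γ.le
    have hm : min (v ^ (-(γ * δ)) * a) 1 = 1 := by
      apply min_eq_right
      rw [hγδ, Real.rpow_neg hv0.le, le_inv_mul_iff₀ (Real.rpow_pos_of_pos hv0 _)]
      simpa using h1
    simp only [hm, mul_one]
  have hmin2 : EqOn (fun v : ℝ => v ^ (-γ) * min (v ^ (-(γ * δ)) * a) 1)
      (fun v : ℝ => a * v⁻¹) (Ioc t 1) := by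
    intro v hv
    have hv0 : 0 < v := ht0.trans hv.1
    have h1 : a ≤ v ^ (1 - γ) := hta ▸ Real.rpow_le_rpow ht0.le hv.1.le h1γ.le
    have hm : min (v ^ (-(γ * δ)) * a) 1 = v ^ (-(γ * δ)) * a := by
      apply min_eq_left
      rw [hγδ, Real.rpow_neg hv0.le, inv_mul_le_iff₀ (Real.rpow_pos_of_pos hv0 _), mul_one]
      exact h1
    have hsum : -γ + -(γ * δ) = -1 := by rw [hγδ]; ring
    simp only [hm, ← mul_assoc, ← Real.rpow_add hv0, hsum, Real.rpow_neg_one]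
    ring
  have hint1 : IntegrableOn (fun v : ℝ => v ^ (-γ) * min (v ^ (-(γ * δ)) * a) 1) (Ioc 0 t) := by
    have := (intervalIntegral.intervalIntegrable_rpow' (a := 0) (b := t) (by linarith : (-1:ℝ) < -γ)).1
    exact this.congr_fun hmin1.symm measurableSet_Ioc
  have hint2 : IntegrableOn (fun v : ℝ => v ^ (-γ) * min (v ^ (-(γ * δ)) * a) 1) (Ioc t 1) := by
    have hc : ContinuousOn (fun v : ℝ => a * v⁻¹) (Icc t 1) :=
      continuousOn_const.mul (continuousOn_id.inv₀ fun x hx => (ht0.trans_le hx.1).ne')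
    exact (hc.integrableOn_Icc.mono_set Ioc_subset_Icc_self).congr_fun hmin2.symm measurableSet_Ioc
  have hIoc : Ioc (0:ℝ) 1 = Ioc 0 t ∪ Ioc t 1 := (Ioc_union_Ioc_eq_Ioc ht0.le ht1).symm
  have hI1 : ∫ v in Ioc (0:ℝ) t, v ^ (-γ) * min (v ^ (-(γ * δ)) * a) 1 = a / (1 - γ) := by
    rw [setIntegral_congr_fun measurableSet_Ioc hmin1, ← intervalIntegral.integral_of_le ht0.le,
      integral_rpow (Or.inl (by linarith))]
    rw [Real.zero_rpow (by intro h; nlinarith [h] : -γ + 1 ≠ 0), sub_zero]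
    have h : -γ + 1 = 1 - γ := by ring
    rw [h, hta]
  have hI2 : ∫ v in Ioc t (1:ℝ), v ^ (-γ) * min (v ^ (-(γ * δ)) * a) 1
      = a * (β / (1 - γ) * Real.log R) := by
    rw [setIntegral_congr_fun measurableSet_Ioc hmin2, ← intervalIntegral.integral_of_le ht1,
      intervalIntegral.integral_const_mul, integral_inv (by
        rw [uIcc_of_le ht1]; intro h; exact absurd h.1 (not_le.mpr ht0))]
    rw [one_div, Real.log_inv, hlogt]
    ring
  have hval : ∫ v in Ioc (0:ℝ) 1, v ^ (-γ) * min (v ^ (-(γ * δ)) * a) 1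
      = a / (1 - γ) + a * (β / (1 - γ) * Real.log R) := by
    rw [hIoc, setIntegral_union (Ioc_disjoint_Ioc_of_le le_rfl) measurableSet_Ioc hint1 hint2, hI1, hI2]
  rw [hval]
  have hlog : Real.log 2 ≤ Real.log R := Real.log_le_log (by norm_num) hR
  have hkey : 1 ≤ (Real.log 2)⁻¹ * Real.log R := by
    rw [le_inv_mul_iff₀ hlog2, mul_one]; exact hlog
  have hfrac : 0 ≤ a / (1 - γ) := by positivity
  constructor
  · have heq : β / (1 - γ) * (a * Real.log R) = a * (β / (1 - γ) * Real.log R) := by ring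
    linarith
  · have h2 := mul_le_mul_of_nonneg_left hkey hfrac
    have heq : (β + 1 / Real.log 2) / (1 - γ) * (a * Real.log R)
        = a * (β / (1 - γ) * Real.log R) + a / (1 - γ) * ((Real.log 2)⁻¹ * Real.log R) := by
      field_simp
    rw [heq]
    linarith
end

section
/- Let d ≥ 1 be an integer, let 0 < γ < 1 and set δ = 1/γ. Then there exist R₀ ≥ 2 and constants 0 < c' ≤ C' < ∞ (depending only on d and γ) such that for every R ≥ R₀ one has c'·R^{d(1−γ)(1−δ)}·(log R)^{1−γ} ≤ ∫_0^1 v^{−γ} · min(v^{−1} R^{d(1−δ)}(1 + log₊(v R^{dδ})), 1) dv ≤ C'·R^{d(1−γ)(1−δ)}·(log R)^{1−γ}. -/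
open MeasureTheory Real Set

set_option maxHeartbeats 1000000 in
/-- The mark integral for two-edge escape paths in the boundary regime `δ = 1/γ`:
`∫_0^1 v^{-γ} min(v⁻¹ R^{d(1-δ)}(1 + log₊(v R^{dδ})), 1) dv ≍ R^{d(1-γ)(1-δ)} (log R)^{1-γ}`
for all sufficiently large `R`. -/
theorem stmt_12 (d : ℕ) (hd : 1 ≤ d) (γ δ : ℝ) (hγ0 : 0 < γ) (hγ1 : γ < 1)
    (hδ : δ = 1 / γ) :
    ∃ R₀ : ℝ, 2 ≤ R₀ ∧ ∃ c' C' : ℝ, 0 < c' ∧ c' ≤ C' ∧ ∀ R : ℝ, R₀ ≤ R →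
      c' * (R ^ ((d : ℝ) * (1 - γ) * (1 - δ)) * Real.log R ^ (1 - γ)) ≤
          (∫ v in Ioc (0 : ℝ) 1,
              v ^ (-γ) * min (v⁻¹ * R ^ ((d : ℝ) * (1 - δ)) *
                  (1 + max (Real.log (v * R ^ ((d : ℝ) * δ))) 0)) 1) ∧
      (∫ v in Ioc (0 : ℝ) 1,
              v ^ (-γ) * min (v⁻¹ * R ^ ((d : ℝ) * (1 - δ)) *
                  (1 + max (Real.log (v * R ^ ((d : ℝ) * δ))) 0)) 1) ≤
          C' * (R ^ ((d : ℝ) * (1 - γ) * (1 - δ)) * Real.log R ^ (1 - γ)) := by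
  have h1γ : (0:ℝ) < 1 - γ := by linarith
  have hδ1 : 1 < δ := by rw [hδ]; exact one_lt_one_div hγ0 hγ1
  have hd1 : (1:ℝ) ≤ (d:ℝ) := by exact_mod_cast hd
  have hdδ0 : (0:ℝ) ≤ (d:ℝ) * δ := by nlinarith
  -- eventually R^(1-δ) log R ≤ 1
  have hev : ∀ᶠ R : ℝ in Filter.atTop, Real.log R / R ^ (δ - 1) ≤ 1 :=
    (isLittleO_log_rpow_atTop (show (0:ℝ) < δ - 1 by linarith)).tendsto_div_nhds_zero.eventually_le_const
      one_pos
  obtain ⟨N, hN⟩ := Filter.eventually_atTop.mp (hev.and (Filter.eventually_ge_atTop (3:ℝ)))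
  refine ⟨max N 3, le_trans (by norm_num) (le_max_right _ _),
    1 / (1 - γ), 1 / (1 - γ) + (1 + (d:ℝ) * δ) / γ, by positivity,
    le_add_of_nonneg_right (by positivity), ?_⟩
  intro R hR
  obtain ⟨hdiv, hR3⟩ := hN R (le_trans (le_max_left _ _) hR)
  have hR0 : (0:ℝ) < R := by linarith
  have hR1 : (1:ℝ) ≤ R := by linarith
  have hL1 : (1:ℝ) ≤ Real.log R := by
    rw [Real.le_log_iff_exp_le hR0]
    calc Real.exp 1 ≤ 2.7182818286 := Real.exp_one_lt_d9.le
    _ ≤ R := by linarith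
  set L := Real.log R with hLdef
  have hL0 : (0:ℝ) < L := by linarith
  set A := R ^ ((d:ℝ) * (1 - δ)) with hA
  set B := R ^ ((d:ℝ) * δ) with hB
  have hA0 : 0 < A := Real.rpow_pos_of_pos hR0 _
  have hB0 : 0 < B := Real.rpow_pos_of_pos hR0 _
  set v₁ := A * L with hv₁def
  have hv₁0 : 0 < v₁ := mul_pos hA0 hL0
  -- v₁ ≤ 1
  have hkey : R ^ ((1:ℝ) - δ) * L ≤ 1 := by
    have h : R ^ ((1:ℝ) - δ) = (R ^ (δ - 1))⁻¹ := by
      rw [show (1:ℝ) - δ = -(δ - 1) by ring, Real.rpow_neg hR0.le]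
    rw [h, inv_mul_eq_div]
    exact hdiv
  have hAle : A ≤ R ^ ((1:ℝ) - δ) := by
    apply Real.rpow_le_rpow_of_exponent_le hR1
    nlinarith
  have hv₁1 : v₁ ≤ 1 :=
    le_trans (mul_le_mul_of_nonneg_right hAle hL0.le) hkey
  have hAB : A * B = R ^ (d:ℝ) := by
    rw [hA, hB, ← Real.rpow_add hR0]
    congr 1; ring
  have hlogAB : Real.log (A * B) = (d:ℝ) * L := by
    rw [hAB, Real.log_rpow hR0]
  -- abbreviation for the integrand
  set F : ℝ → ℝ := fun v => v ^ (-γ) *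
      min (v⁻¹ * A * (1 + max (Real.log (v * B)) 0)) 1 with hF
  -- on (0, v₁], the min equals 1
  have hmin : ∀ v ∈ Ioc (0:ℝ) v₁,
      (1:ℝ) ≤ v⁻¹ * A * (1 + max (Real.log (v * B)) 0) := by
    rintro v ⟨hv0, hvle⟩
    rw [mul_assoc, le_inv_mul_iff₀ hv0, mul_one]
    have hm0 : (0:ℝ) ≤ max (Real.log (v * B)) 0 := le_max_right _ _
    rcases le_or_gt v A with h | h
    · nlinarith
    · have hlb : (d:ℝ) * L ≤ Real.log (v * B) := by
        rw [← hlogAB]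
        exact Real.log_le_log (by positivity)
          (mul_le_mul_of_nonneg_right h.le hB0.le)
      have hLm : L ≤ max (Real.log (v * B)) 0 :=
        le_trans (by nlinarith) (le_max_left _ _)
      calc v ≤ A * L := hvle
      _ ≤ A * (1 + max (Real.log (v * B)) 0) := by nlinarith
  have hEqOn : EqOn F (fun v => v ^ (-γ)) (Ioc 0 v₁) := by
    intro v hv
    simp only [hF]
    rw [min_eq_right (hmin v hv), mul_one]
  -- measurability
  have hmeasF : Measurable F := by
    have m1 : Measurable fun v : ℝ => v ^ (-γ) := by fun_prop
    have m2 : Measurable fun v : ℝ =>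
        v⁻¹ * A * (1 + max (Real.log (v * B)) 0) :=
      (measurable_inv.mul_const A).mul
        (measurable_const.add ((Real.measurable_log.comp
          (measurable_id.mul_const B)).max measurable_const))
    exact m1.mul (m2.min measurable_const)
  -- pointwise facts on (0,1]
  have hXnn : ∀ v : ℝ, 0 < v →
      0 ≤ v⁻¹ * A * (1 + max (Real.log (v * B)) 0) := by
    intro v hv
    have h0 : (0:ℝ) ≤ max (Real.log (v * B)) 0 := le_max_right _ _
    have h1 : (0:ℝ) ≤ v⁻¹ * A := by positivity
    exact mul_nonneg h1 (by linarith)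
  have hFnonneg : ∀ v ∈ Ioc (0:ℝ) 1, 0 ≤ F v := by
    rintro v ⟨hv0, -⟩
    exact mul_nonneg (Real.rpow_nonneg hv0.le _)
      (le_min (hXnn v hv0) zero_le_one)
  have hFle : ∀ v ∈ Ioc (0:ℝ) 1, F v ≤ v ^ (-γ) := by
    rintro v ⟨hv0, -⟩
    calc F v ≤ v ^ (-γ) * 1 :=
        mul_le_mul_of_nonneg_left (min_le_right _ _) (Real.rpow_nonneg hv0.le _)
    _ = v ^ (-γ) := mul_one _
  have hgInt : IntegrableOn (fun v : ℝ => v ^ (-γ)) (Ioc (0:ℝ) 1) :=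
    (intervalIntegrable_iff_integrableOn_Ioc_of_le zero_le_one).mp
      (intervalIntegral.intervalIntegrable_rpow' (by linarith))
  have hFint : IntegrableOn F (Ioc (0:ℝ) 1) := by
    apply Integrable.mono' hgInt hmeasF.aestronglyMeasurable
    filter_upwards [ae_restrict_mem measurableSet_Ioc] with v hv
    rw [Real.norm_of_nonneg (hFnonneg v hv)]
    exact hFle v hv
  -- integral of v^(-γ) over Ioc 0 b
  have hI1 : ∀ b : ℝ, 0 ≤ b →
      ∫ v in Ioc (0:ℝ) b, v ^ (-γ) = b ^ (1 - γ) / (1 - γ) := by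
    intro b hb
    rw [← intervalIntegral.integral_of_le hb,
      integral_rpow (Or.inl (by linarith : (-1:ℝ) < -γ)),
      Real.zero_rpow (by linarith : -γ + 1 ≠ 0),
      show -γ + 1 = 1 - γ by ring, sub_zero]
  have hEq1 : ∫ v in Ioc (0:ℝ) v₁, F v = v₁ ^ (1 - γ) / (1 - γ) := by
    rw [setIntegral_congr_fun measurableSet_Ioc hEqOn, hI1 v₁ hv₁0.le]
  -- the target quantity
  have hT : R ^ ((d:ℝ) * (1 - γ) * (1 - δ)) * L ^ (1 - γ) = v₁ ^ (1 - γ) := by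
    rw [hv₁def, Real.mul_rpow hA0.le hL0.le, hA, ← Real.rpow_mul hR0.le,
      show (d:ℝ) * (1 - δ) * (1 - γ) = (d:ℝ) * (1 - γ) * (1 - δ) by ring]
  -- lower bound
  have hlow : ∫ v in Ioc (0:ℝ) v₁, F v ≤ ∫ v in Ioc (0:ℝ) 1, F v := by
    apply setIntegral_mono_set hFint
    · filter_upwards [ae_restrict_mem measurableSet_Ioc] with v hv
      exact hFnonneg v hv
    · exact (Ioc_subset_Ioc_right hv₁1).eventuallyLE
  constructor
  · calc (1 / (1 - γ)) * (R ^ ((d:ℝ) * (1 - γ) * (1 - δ)) * L ^ (1 - γ))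
        = v₁ ^ (1 - γ) / (1 - γ) := by rw [hT]; ring
    _ = ∫ v in Ioc (0:ℝ) v₁, F v := hEq1.symm
    _ ≤ ∫ v in Ioc (0:ℝ) 1, F v := hlow
  -- upper bound
  · have hsplit : ∫ v in Ioc (0:ℝ) 1, F v
        = (∫ v in Ioc (0:ℝ) v₁, F v) + ∫ v in Ioc v₁ 1, F v := by
      rw [← Set.Ioc_union_Ioc_eq_Ioc hv₁0.le hv₁1]
      exact setIntegral_union (Set.Ioc_disjoint_Ioc_of_le le_rfl) measurableSet_Ioc
        (hFint.mono_set (Ioc_subset_Ioc_right hv₁1))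
        (hFint.mono_set (Ioc_subset_Ioc_left hv₁0.le))
    set K := A * (1 + (d:ℝ) * δ * L) with hK
    have hK0 : 0 ≤ K := by nlinarith
    have hg2Int : IntegrableOn (fun v : ℝ => K * v ^ (-1 - γ)) (Ioc v₁ 1) := by
      apply Integrable.const_mul
      refine (intervalIntegrable_iff_integrableOn_Ioc_of_le hv₁1).mp
        (intervalIntegral.intervalIntegrable_rpow (Or.inr ?_))
      rw [Set.uIcc_of_le hv₁1]
      rintro ⟨h0, -⟩
      exact absurd h0 (not_le.mpr hv₁0)
    have hptwise : ∀ v ∈ Ioc v₁ 1, F v ≤ K * v ^ (-1 - γ) := by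
      rintro v ⟨hv1', hv2'⟩
      have hv0 : 0 < v := lt_trans hv₁0 hv1'
      have hm : max (Real.log (v * B)) 0 ≤ (d:ℝ) * δ * L := by
        apply max_le _ (by nlinarith)
        calc Real.log (v * B) ≤ Real.log B :=
            Real.log_le_log (by positivity) (by nlinarith)
        _ = (d:ℝ) * δ * L := by rw [hB, Real.log_rpow hR0]
      have h2 : F v ≤ v ^ (-γ) * (v⁻¹ * A * (1 + max (Real.log (v * B)) 0)) :=
        mul_le_mul_of_nonneg_left (min_le_left _ _) (Real.rpow_nonneg hv0.le _)
      have h3 : v⁻¹ * A * (1 + max (Real.log (v * B)) 0)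
          ≤ v⁻¹ * A * (1 + (d:ℝ) * δ * L) := by
        have hva : (0:ℝ) ≤ v⁻¹ * A := by positivity
        nlinarith
      have h4 : v ^ (-γ) * (v⁻¹ * A * (1 + (d:ℝ) * δ * L)) = K * v ^ (-1 - γ) := by
        rw [hK, show v ^ (-1 - γ) = v ^ (-γ) * v⁻¹ by
          rw [← Real.rpow_neg_one v, ← Real.rpow_add hv0]; congr 1; ring]
        ring
      calc F v ≤ v ^ (-γ) * (v⁻¹ * A * (1 + max (Real.log (v * B)) 0)) := h2
      _ ≤ v ^ (-γ) * (v⁻¹ * A * (1 + (d:ℝ) * δ * L)) :=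
          mul_le_mul_of_nonneg_left h3 (Real.rpow_nonneg hv0.le _)
      _ = K * v ^ (-1 - γ) := h4
    have hI2 : ∫ v in Ioc v₁ 1, K * v ^ (-1 - γ)
        = K * ((v₁ ^ (-γ) - 1) / γ) := by
      rw [MeasureTheory.integral_const_mul]
      congr 1
      rw [← intervalIntegral.integral_of_le hv₁1,
        integral_rpow (Or.inr ⟨(by linarith : (-1 - γ:ℝ) < -1).ne, by
          rw [Set.uIcc_of_le hv₁1]; rintro ⟨h0, -⟩; exact absurd h0 (not_le.mpr hv₁0)⟩)]
      rw [show (-1 - γ + 1 : ℝ) = -γ by ring, Real.one_rpow]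
      rw [div_eq_div_iff (neg_ne_zero.mpr hγ0.ne') hγ0.ne']
      ring
    have hup2 : ∫ v in Ioc v₁ 1, F v ≤ K * ((v₁ ^ (-γ) - 1) / γ) := by
      rw [← hI2]
      exact setIntegral_mono_on (hFint.mono_set (Ioc_subset_Ioc_left hv₁0.le))
        hg2Int measurableSet_Ioc hptwise
    have hv₁pow : v₁ ^ ((1:ℝ) - γ) = v₁ * v₁ ^ (-γ) := by
      rw [show (1:ℝ) - γ = 1 + -γ by ring, Real.rpow_add hv₁0, Real.rpow_one]
    have hKb : K * ((v₁ ^ (-γ) - 1) / γ) ≤ ((1 + (d:ℝ) * δ) / γ) * v₁ ^ (1 - γ) := by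
      have hp : (0:ℝ) ≤ v₁ ^ (-γ) := Real.rpow_nonneg hv₁0.le _
      have h1 : K * (v₁ ^ (-γ) - 1) ≤ (1 + (d:ℝ) * δ) * v₁ ^ (1 - γ) := by
        rw [hv₁pow, hv₁def]
        nlinarith [mul_nonneg (mul_nonneg hA0.le hp) (sub_nonneg.mpr hL1),
          mul_nonneg hA0.le (mul_nonneg hdδ0 hL0.le)]
      calc K * ((v₁ ^ (-γ) - 1) / γ) = K * (v₁ ^ (-γ) - 1) / γ := by ring
      _ ≤ ((1 + (d:ℝ) * δ) * v₁ ^ (1 - γ)) / γ := by gcongr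
      _ = ((1 + (d:ℝ) * δ) / γ) * v₁ ^ (1 - γ) := by ring
    calc ∫ v in Ioc (0:ℝ) 1, F v
        = (∫ v in Ioc (0:ℝ) v₁, F v) + ∫ v in Ioc v₁ 1, F v := hsplit
    _ ≤ v₁ ^ (1 - γ) / (1 - γ) + ((1 + (d:ℝ) * δ) / γ) * v₁ ^ (1 - γ) := by
        rw [hEq1]; exact add_le_add_right (le_trans hup2 hKb) _
    _ = (1 / (1 - γ) + (1 + (d:ℝ) * δ) / γ) * v₁ ^ (1 - γ) := by ring
    _ = (1 / (1 - γ) + (1 + (d:ℝ) * δ) / γ)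
          * (R ^ ((d:ℝ) * (1 - γ) * (1 - δ)) * L ^ (1 - γ)) := by rw [hT]
end

section
/- Let d ≥ 1 be an integer, let 0 < γ < 1/2 and let r > 0. Then ∫_{ℝ^d} ∫_0^1 min(v^{−1} r^d |x|^{−d/γ}, 1) · v^{−γ} dv dx = r^{dγ} · ω_d / ((1 − 2γ)(1 − γ)), where the integrand is interpreted as v^{−γ} at x = 0 (a Lebesgue-null set) and ω_d denotes the Lebesgue measure of the unit ball in ℝ^d. -/
open MeasureTheory Real Set


private lemma inner_ge {γ a : ℝ} (hγ1 : γ < 1) (ha : 1 ≤ a) :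
    ∫ v in Ioc (0 : ℝ) 1, min (v⁻¹ * a) 1 * v ^ (-γ) = 1 / (1 - γ) := by
  rw [setIntegral_congr_fun (g := fun v => v ^ (-γ)) measurableSet_Ioc (fun v hv => by
    have h1 : (1:ℝ) ≤ v⁻¹ := one_le_inv_iff₀.mpr ⟨hv.1, hv.2⟩
    have h2 : v⁻¹ ≤ v⁻¹ * a := le_mul_of_one_le_right (by positivity) ha
    rw [min_eq_right (h1.trans h2), one_mul])]
  rw [← intervalIntegral.integral_of_le zero_le_one, integral_rpow (Or.inl (by linarith)),
    Real.one_rpow, Real.zero_rpow (by linarith), show -γ + 1 = 1 - γ by ring, sub_zero]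

private lemma inner_lt {γ a : ℝ} (hγ0 : 0 < γ) (hγ1 : γ < 1) (ha0 : 0 < a) (ha1 : a < 1) :
    ∫ v in Ioc (0 : ℝ) 1, min (v⁻¹ * a) 1 * v ^ (-γ)
      = a ^ (1 - γ) / (γ * (1 - γ)) - a / γ := by
  have hI1' : IntegrableOn (fun v : ℝ => v ^ (-γ)) (Ioc 0 a) := by
    rw [← intervalIntegrable_iff_integrableOn_Ioc_of_le ha0.le]
    exact intervalIntegral.intervalIntegrable_rpow' (by linarith)
  have hE1 : EqOn (fun v : ℝ => v ^ (-γ)) (fun v => min (v⁻¹ * a) 1 * v ^ (-γ)) (Ioc 0 a) := by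
    intro v hv
    have h1 : (1:ℝ) ≤ v⁻¹ * a := by
      rw [← mul_inv_cancel₀ hv.1.ne', mul_comm v v⁻¹]
      have : (0:ℝ) < v⁻¹ := inv_pos.mpr hv.1
      gcongr
      exact hv.2
    simp only [min_eq_right h1, one_mul]
  have hI2' : IntegrableOn (fun v : ℝ => a * v ^ (-1 - γ)) (Ioc a 1) := by
    rw [← intervalIntegrable_iff_integrableOn_Ioc_of_le ha1.le]
    exact (intervalIntegral.intervalIntegrable_rpow (Or.inr (notMem_uIcc_of_lt ha0 one_pos))).const_mul a
  have hE2 : EqOn (fun v : ℝ => a * v ^ (-1 - γ)) (fun v => min (v⁻¹ * a) 1 * v ^ (-γ)) (Ioc a 1) := by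
    intro v hv
    have hv0 : (0:ℝ) < v := ha0.trans hv.1
    have h1 : v⁻¹ * a ≤ 1 := by
      rw [← mul_inv_cancel₀ hv0.ne', mul_comm v v⁻¹]
      gcongr
      exact hv.1.le
    simp only [min_eq_left h1]
    rw [show (-1 : ℝ) - γ = -1 + -γ by ring, Real.rpow_add hv0, Real.rpow_neg_one]
    ring
  rw [← Ioc_union_Ioc_eq_Ioc ha0.le ha1.le,
    setIntegral_union (Ioc_disjoint_Ioc_of_le le_rfl) measurableSet_Ioc
      (hI1'.congr_fun hE1 measurableSet_Ioc) (hI2'.congr_fun hE2 measurableSet_Ioc),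
    ← setIntegral_congr_fun measurableSet_Ioc hE1, ← setIntegral_congr_fun measurableSet_Ioc hE2,
    ← intervalIntegral.integral_of_le ha0.le, ← intervalIntegral.integral_of_le ha1.le,
    integral_rpow (Or.inl (by linarith)), intervalIntegral.integral_const_mul,
    integral_rpow (Or.inr ⟨by intro h; apply hγ0.ne'; linarith, notMem_uIcc_of_lt ha0 one_pos⟩)]
  rw [Real.zero_rpow (by linarith), show (-1:ℝ) - γ + 1 = -γ by ring, Real.one_rpow,
    show -γ + 1 = 1 - γ by ring, sub_zero]
  have key : a * a ^ (-γ) = a ^ (1 - γ) := by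
    nth_rewrite 1 [← Real.rpow_one a]
    rw [← Real.rpow_add ha0, show (1:ℝ) + -γ = 1 - γ by ring]
  have hγ1' : (1:ℝ) - γ ≠ 0 := by intro h; apply hγ1.ne; linarith
  have hγne := hγ0.ne'
  have expand : a * ((1 - a ^ (-γ)) / -γ) = (a * a ^ (-γ) - a) / γ := by
    rw [div_neg, mul_neg, ← mul_div_assoc, mul_one_sub, ← neg_div, neg_sub]
  rw [expand, key]
  field_simp
  ring

private noncomputable def Fr (d : ℕ) (γ r t : ℝ) : ℝ :=
  ∫ v in Ioc (0 : ℝ) 1, min (v⁻¹ * (r ^ d * t ^ (-((d : ℝ) / γ)))) 1 * v ^ (-γ)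

private lemma Fr_of_le {d : ℕ} (hd : 1 ≤ d) {γ r t : ℝ} (hγ0 : 0 < γ) (hγ1 : γ < 1)
    (hr : 0 < r) (ht : 0 < t) (htr : t ≤ r ^ γ) :
    Fr d γ r t = 1 / (1 - γ) := by
  have hd0 : (0 : ℝ) < (d : ℝ) := by exact_mod_cast hd
  have hpow : t ^ ((d : ℝ) / γ) ≤ r ^ d := by
    calc t ^ ((d : ℝ) / γ) ≤ (r ^ γ) ^ ((d : ℝ) / γ) :=
          Real.rpow_le_rpow ht.le htr (by positivity)
      _ = r ^ d := by
          rw [← Real.rpow_natCast r d, ← Real.rpow_mul hr.le]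
          congr 1
          field_simp
  have ha : 1 ≤ r ^ d * t ^ (-((d : ℝ) / γ)) := by
    rw [Real.rpow_neg ht.le, ← div_eq_mul_inv]
    exact (one_le_div (by positivity)).mpr hpow
  exact inner_ge hγ1 ha

private lemma Fr_of_gt {d : ℕ} (hd : 1 ≤ d) {γ r t : ℝ} (hγ0 : 0 < γ) (hγ1 : γ < 1)
    (hr : 0 < r) (htr : r ^ γ < t) :
    Fr d γ r t = (r ^ d * t ^ (-((d : ℝ) / γ))) ^ (1 - γ) / (γ * (1 - γ))
      - (r ^ d * t ^ (-((d : ℝ) / γ))) / γ := by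
  have hd0 : (0 : ℝ) < (d : ℝ) := by exact_mod_cast hd
  have ht : 0 < t := (Real.rpow_pos_of_pos hr γ).trans htr
  have hpow : r ^ d < t ^ ((d : ℝ) / γ) := by
    calc (r : ℝ) ^ d = (r ^ γ) ^ ((d : ℝ) / γ) := by
          rw [← Real.rpow_natCast r d, ← Real.rpow_mul hr.le]
          congr 1
          field_simp
      _ < t ^ ((d : ℝ) / γ) :=
          Real.rpow_lt_rpow (by positivity) htr (by positivity)
  have ha1 : r ^ d * t ^ (-((d : ℝ) / γ)) < 1 := by
    rw [Real.rpow_neg ht.le, ← div_eq_mul_inv]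
    exact (div_lt_one (by positivity)).mpr hpow
  exact inner_lt hγ0 hγ1 (by positivity) ha1

/-- Exact identity for the three-edge crossing integral in the regime `δ > 1/γ`:
`∫_{ℝ^d} ∫_0^1 min(v⁻¹ r^d |x|^{-d/γ}, 1) v^{-γ} dv dx = r^{dγ} ω_d / ((1 - 2γ)(1 - γ))`,
where `ω_d` is the Lebesgue measure of the unit ball in `ℝ^d`. (At `x = 0`, a Lebesgue-null
set, the value of the integrand is immaterial; here `|x|^{-d/γ} = 0` by the `rpow`
convention.) -/
theorem stmt_14 (d : ℕ) (hd : 1 ≤ d) (γ : ℝ) (hγ0 : 0 < γ) (hγ1 : γ < 1 / 2)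
    (r : ℝ) (hr : 0 < r) :
    (∫ x : EuclideanSpace ℝ (Fin d),
        ∫ v in Ioc (0 : ℝ) 1,
          min (v⁻¹ * r ^ d * ‖x‖ ^ (-((d : ℝ) / γ))) 1 * v ^ (-γ)) =
      r ^ ((d : ℝ) * γ) *
        (volume (Metric.ball (0 : EuclideanSpace ℝ (Fin d)) 1)).toReal /
        ((1 - 2 * γ) * (1 - γ)) := by
  haveI : Nonempty (Fin d) := Fin.pos_iff_nonempty.mp hd
  haveI : Nontrivial (EuclideanSpace ℝ (Fin d)) := inferInstance
  have hγ1' : γ < 1 := by linarith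
  have hΓ : (0:ℝ) < 1 - γ := by linarith
  have h2Γ : (0:ℝ) < 1 - 2 * γ := by linarith
  have hγne := hγ0.ne'
  have hΓne := hΓ.ne'
  have h2Γne := h2Γ.ne'
  have hd0 : (0:ℝ) < (d:ℝ) := by exact_mod_cast hd
  have hdne := hd0.ne'
  have hRpos : (0:ℝ) < r ^ γ := Real.rpow_pos_of_pos hr γ
  -- step 1: radial decomposition
  have step1 : (∫ x : EuclideanSpace ℝ (Fin d),
      ∫ v in Ioc (0 : ℝ) 1, min (v⁻¹ * r ^ d * ‖x‖ ^ (-((d : ℝ) / γ))) 1 * v ^ (-γ))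
      = ∫ x : EuclideanSpace ℝ (Fin d), Fr d γ r ‖x‖ := by
    refine integral_congr_ae (Filter.Eventually.of_forall fun x => ?_)
    unfold Fr
    simp only [mul_assoc]
  rw [step1, MeasureTheory.integral_fun_norm_addHaar volume (Fr d γ r)]
  simp only [finrank_euclideanSpace_fin, nsmul_eq_mul, smul_eq_mul]
  -- exponents
  have hp1 : (d:ℝ) - 1 - (d:ℝ)/γ*(1-γ) < -1 := by
    have : (d:ℝ) < (d:ℝ)/γ*(1-γ) := by
      rw [div_mul_eq_mul_div, lt_div_iff₀ hγ0]
      nlinarith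
    linarith
  have hp2 : (d:ℝ) - 1 - (d:ℝ)/γ < -1 := by
    have : (d:ℝ) < (d:ℝ)/γ := by
      rw [lt_div_iff₀ hγ0]
      nlinarith
    linarith
  -- pointwise identities on the two ranges
  have hE1 : EqOn (fun y : ℝ => y ^ (d-1) * (1/(1-γ)))
      (fun y => y ^ (d-1) * Fr d γ r y) (Ioc 0 (r ^ γ)) := by
    intro y hy
    simp only
    rw [Fr_of_le hd hγ0 hγ1' hr hy.1 hy.2]
  have hE2 : EqOn (fun y : ℝ =>
        r ^ ((d:ℝ)*(1-γ)) / (γ*(1-γ)) * y ^ ((d:ℝ) - 1 - (d:ℝ)/γ*(1-γ))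
          - r ^ ((d:ℝ)) / γ * y ^ ((d:ℝ) - 1 - (d:ℝ)/γ))
      (fun y => y ^ (d-1) * Fr d γ r y) (Ioi (r ^ γ)) := by
    intro y hy
    simp only [mem_Ioi] at hy
    have hy0 : (0:ℝ) < y := hRpos.trans hy
    simp only
    rw [Fr_of_gt hd hγ0 hγ1' hr hy]
    have hA : (r ^ d * y ^ (-((d:ℝ)/γ))) ^ (1-γ)
        = r ^ ((d:ℝ)*(1-γ)) * y ^ (-((d:ℝ)/γ)*(1-γ)) := by
      rw [Real.mul_rpow (by positivity) (by positivity), ← Real.rpow_natCast r d,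
        ← Real.rpow_mul hr.le, ← Real.rpow_mul hy0.le]
    have hY1 : y ^ (d-1) * y ^ (-((d:ℝ)/γ)*(1-γ)) = y ^ ((d:ℝ) - 1 - (d:ℝ)/γ*(1-γ)) := by
      rw [← Real.rpow_natCast y (d-1), ← Real.rpow_add hy0, Nat.cast_sub hd, Nat.cast_one]
      congr 1 <;> ring
    have hY2 : y ^ (d-1) * y ^ (-((d:ℝ)/γ)) = y ^ ((d:ℝ) - 1 - (d:ℝ)/γ) := by
      rw [← Real.rpow_natCast y (d-1), ← Real.rpow_add hy0, Nat.cast_sub hd, Nat.cast_one]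
      congr 1 <;> ring
    have hrd : (r:ℝ) ^ d = r ^ ((d:ℝ)) := (Real.rpow_natCast r d).symm
    rw [hA, hrd, ← hY1, ← hY2]
    ring
  -- integrability
  have hInt1 : IntegrableOn (fun y : ℝ => y ^ (d-1) * (1/(1-γ))) (Ioc 0 (r ^ γ)) :=
    ((continuous_pow (d-1)).mul continuous_const).integrableOn_Ioc
  have hI2a := integrableOn_Ioi_rpow_of_lt hp1 hRpos
  have hI2b := integrableOn_Ioi_rpow_of_lt hp2 hRpos
  have hInt2 : IntegrableOn (fun y : ℝ =>
      r ^ ((d:ℝ)*(1-γ)) / (γ*(1-γ)) * y ^ ((d:ℝ) - 1 - (d:ℝ)/γ*(1-γ))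
        - r ^ ((d:ℝ)) / γ * y ^ ((d:ℝ) - 1 - (d:ℝ)/γ)) (Ioi (r ^ γ)) :=
    (hI2a.const_mul _).sub (hI2b.const_mul _)
  -- split the radial integral
  rw [show Ioi (0:ℝ) = Ioc 0 (r ^ γ) ∪ Ioi (r ^ γ) from (Ioc_union_Ioi_eq_Ioi hRpos.le).symm,
    setIntegral_union (Ioc_disjoint_Ioi le_rfl) measurableSet_Ioi
      (hInt1.congr_fun hE1 measurableSet_Ioc) (hInt2.congr_fun hE2 measurableSet_Ioi),
    ← setIntegral_congr_fun measurableSet_Ioc hE1,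
    ← setIntegral_congr_fun measurableSet_Ioi hE2]
  -- evaluate the three integrals
  have hV1 : ∫ y in Ioc (0:ℝ) (r ^ γ), y ^ (d-1) * (1/(1-γ))
      = r ^ ((d:ℝ)*γ) * (1/((d:ℝ)*(1-γ))) := by
    rw [← intervalIntegral.integral_of_le hRpos.le, intervalIntegral.integral_mul_const,
      integral_pow, Nat.sub_add_cancel hd, zero_pow (by omega),
      ← Real.rpow_natCast (r ^ γ) d, ← Real.rpow_mul hr.le, Nat.cast_sub hd, Nat.cast_one,
      mul_comm γ (d:ℝ)]
    field_simp
    try ring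
    rw [mul_comm (d:ℝ), mul_inv_cancel_right₀ hdne]
  have hV2a : ∫ y in Ioi (r ^ γ), y ^ ((d:ℝ) - 1 - (d:ℝ)/γ*(1-γ))
      = r ^ ((d:ℝ)*(2*γ-1)) * (γ / ((d:ℝ)*(1-2*γ))) := by
    rw [integral_Ioi_rpow_of_lt hp1 hRpos,
      show (d:ℝ) - 1 - (d:ℝ)/γ*(1-γ) + 1 = (d:ℝ)*(2*γ-1)/γ from by field_simp; ring,
      ← Real.rpow_mul hr.le,
      show γ * ((d:ℝ)*(2*γ-1)/γ) = (d:ℝ)*(2*γ-1) from by field_simp]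
    have hne : (d:ℝ)*(2*γ-1) ≠ 0 := by nlinarith
    field_simp
    try ring
    have h' : (-1 + γ * 2) ≠ 0 := by intro h; linarith
    rw [show γ * (-1 + γ * 2)⁻¹ * 2 - (-1 + γ * 2)⁻¹ = (-1 + γ * 2) * (-1 + γ * 2)⁻¹ by ring, mul_inv_cancel₀ h']
  have hV2b : ∫ y in Ioi (r ^ γ), y ^ ((d:ℝ) - 1 - (d:ℝ)/γ)
      = r ^ ((d:ℝ)*(γ-1)) * (γ / ((d:ℝ)*(1-γ))) := by
    rw [integral_Ioi_rpow_of_lt hp2 hRpos,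
      show (d:ℝ) - 1 - (d:ℝ)/γ + 1 = (d:ℝ)*(γ-1)/γ from by field_simp; ring,
      ← Real.rpow_mul hr.le,
      show γ * ((d:ℝ)*(γ-1)/γ) = (d:ℝ)*(γ-1) from by field_simp]
    have hne : (d:ℝ)*(γ-1) ≠ 0 := by nlinarith
    field_simp
    try ring
    have h' : (-1 + γ) ≠ 0 := by intro h; linarith
    rw [show γ * (-1 + γ)⁻¹ - (-1 + γ)⁻¹ = (-1 + γ) * (-1 + γ)⁻¹ by ring, mul_inv_cancel₀ h']
  rw [integral_sub (hI2a.const_mul _) (hI2b.const_mul _), integral_const_mul,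
    integral_const_mul, hV1, hV2a, hV2b]
  -- combine the powers of r
  have hm1 : r ^ ((d:ℝ)*(1-γ)) * r ^ ((d:ℝ)*(2*γ-1)) = r ^ ((d:ℝ)*γ) := by
    rw [← Real.rpow_add hr]
    congr 1
    ring
  have hm2 : r ^ ((d:ℝ)) * r ^ ((d:ℝ)*(γ-1)) = r ^ ((d:ℝ)*γ) := by
    rw [← Real.rpow_add hr]
    congr 1
    ring
  have t2a : r ^ ((d:ℝ)*(1-γ)) / (γ*(1-γ)) * (r ^ ((d:ℝ)*(2*γ-1)) * (γ/((d:ℝ)*(1-2*γ))))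
      = r ^ ((d:ℝ)*γ) * (1/((1-γ)*((d:ℝ)*(1-2*γ)))) := by
    rw [← hm1]
    field_simp
    try ring
  have t2b : r ^ ((d:ℝ)) / γ * (r ^ ((d:ℝ)*(γ-1)) * (γ/((d:ℝ)*(1-γ))))
      = r ^ ((d:ℝ)*γ) * (1/((d:ℝ)*(1-γ))) := by
    rw [← hm2]
    field_simp
    try ring
  rw [t2a, t2b]
  rw [← measureReal_def]
  field_simp
  ring
end
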